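/- arXiv:2511.08712 — 5 statements merged into one kernel-verified Lean document; each statement's English description precedes it below -/
import Mathlib

section
/- Let (ℱ_{i,j})_{i,j≥0} be a two-parameter filtration satisfying the (F4) condition. Then for every p ∈ (1, ∞) there is a constant C_p depending only on p such that for all X ∈ L^p, ‖sup_{n,m} 𝔼_{n,m}|X|‖_{L^p} ≤ C_p ‖X‖_{L^p}; that is, an (F4) filtration has the Doob property. -/
open MeasureTheory ENNReal

/-- The σ-algebra `ℱ_{i,∞} = ⋁_j ℱ_{i,j}`. -/
def rowSup {Ω : Type*} (𝓕 : ℕ → ℕ → MeasurableSpace Ω) (i : ℕ) : MeasurableSpace Ω :=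
  ⨆ j, 𝓕 i j

/-- The σ-algebra `ℱ_{∞,j} = ⋁_i ℱ_{i,j}`. -/
def colSup {Ω : Type*} (𝓕 : ℕ → ℕ → MeasurableSpace Ω) (j : ℕ) : MeasurableSpace Ω :=
  ⨆ i, 𝓕 i j

/-- A two-parameter filtration satisfying the (F4) condition:
`𝔼_{i,j} 𝔼_{k,l} = 𝔼_{min(i,k),min(j,l)} = 𝔼_{k,l} 𝔼_{i,j}` as operators on `L¹`. -/
structure IsF4Filtration {Ω : Type*} [m0 : MeasurableSpace Ω] (μ : Measure Ω)
    (𝓕 : ℕ → ℕ → MeasurableSpace Ω) : Prop where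
  le : ∀ i j, 𝓕 i j ≤ m0
  mono_left : ∀ i j, 𝓕 i j ≤ 𝓕 (i + 1) j
  mono_right : ∀ i j, 𝓕 i j ≤ 𝓕 i (j + 1)
  f4 : ∀ i j k l : ℕ, ∀ f : Ω → ℝ, Integrable f μ →
    μ[μ[f|𝓕 k l]|𝓕 i j] =ᵐ[μ] μ[f|𝓕 (min i k) (min j l)]

open Set Filter
open scoped NNReal Topology

section AB

lemma doob_weak_to_Lp {Ω : Type*} [m0 : MeasurableSpace Ω] (μ : Measure Ω)
    {p q : ℝ} (hpq : p.HolderConjugate q)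
    {f g : Ω → ℝ} (hg : Measurable g) (hg0 : 0 ≤ g)
    (hf : AEMeasurable f μ) (hf0 : 0 ≤ᵐ[μ] f)
    (hweak : ∀ t : ℝ, 0 < t →
      ENNReal.ofReal t * μ {ω | t < g ω} ≤ ∫⁻ ω in {ω | t ≤ g ω}, ENNReal.ofReal (f ω) ∂μ)
    (hfin : ∫⁻ ω, ENNReal.ofReal (g ω ^ p) ∂μ ≠ ∞) :
    (∫⁻ ω, ENNReal.ofReal (g ω ^ p) ∂μ) ^ (1/p) ≤
      ENNReal.ofReal q * (∫⁻ ω, ENNReal.ofReal (f ω ^ p) ∂μ) ^ (1/p) := by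
  have hp1 : 1 < p := hpq.lt
  have hp0 : 0 < p := hpq.pos
  have hp10 : 0 < p - 1 := by linarith
  set ν : Measure Ω := μ.withDensity fun ω => ENNReal.ofReal (f ω) with hν
  set I : ℝ≥0∞ := ∫⁻ ω, ENNReal.ofReal (g ω ^ p) ∂μ with hI
  set Fp : ℝ≥0∞ := ∫⁻ ω, ENNReal.ofReal (f ω ^ p) ∂μ with hFp
  -- layercake for I
  have lc1 : I = ENNReal.ofReal p *
      ∫⁻ t in Ioi (0:ℝ), μ {ω | t < g ω} * ENNReal.ofReal (t ^ (p - 1)) :=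
    lintegral_rpow_eq_lintegral_meas_lt_mul μ (ae_of_all _ hg0) hg.aemeasurable hp0
  -- layercake for D := ∫ g^(p-1) dν
  set D : ℝ≥0∞ := ∫⁻ ω, ENNReal.ofReal (g ω ^ (p - 1)) ∂ν with hD
  have lc2 : D = ENNReal.ofReal (p - 1) *
      ∫⁻ t in Ioi (0:ℝ), ν {ω | t ≤ g ω} * ENNReal.ofReal (t ^ (p - 1 - 1)) :=
    lintegral_rpow_eq_lintegral_meas_le_mul ν (ae_of_all _ hg0) hg.aemeasurable hp10
  -- pointwise comparison of layercake integrands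
  have hptwise : ∀ t ∈ Ioi (0:ℝ),
      μ {ω | t < g ω} * ENNReal.ofReal (t ^ (p - 1)) ≤
      ν {ω | t ≤ g ω} * ENNReal.ofReal (t ^ (p - 1 - 1)) := by
    intro t ht
    rw [mem_Ioi] at ht
    have hsplit : ENNReal.ofReal (t ^ (p - 1)) =
        ENNReal.ofReal t * ENNReal.ofReal (t ^ (p - 1 - 1)) := by
      rw [← ENNReal.ofReal_mul ht.le]
      congr 1
      rw [show p - 1 = (p - 1 - 1) + 1 by ring, Real.rpow_add_one ht.ne']
      ring
    have hνset : ν {ω | t ≤ g ω} = ∫⁻ ω in {ω | t ≤ g ω}, ENNReal.ofReal (f ω) ∂μ :=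
      withDensity_apply _ (measurableSet_le measurable_const hg)
    calc μ {ω | t < g ω} * ENNReal.ofReal (t ^ (p - 1))
        = (ENNReal.ofReal t * μ {ω | t < g ω}) * ENNReal.ofReal (t ^ (p - 1 - 1)) := by
          rw [hsplit]; ring
      _ ≤ ν {ω | t ≤ g ω} * ENNReal.ofReal (t ^ (p - 1 - 1)) := by
          rw [hνset]
          exact mul_le_mul_left (hweak t ht) _
  have hIle : I ≤ ENNReal.ofReal p *
      ∫⁻ t in Ioi (0:ℝ), ν {ω | t ≤ g ω} * ENNReal.ofReal (t ^ (p - 1 - 1)) := by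
    rw [lc1]
    refine mul_le_mul_right (lintegral_mono_ae ?_) _
    filter_upwards [self_mem_ae_restrict measurableSet_Ioi] with t ht using hptwise t ht
  -- I ≤ ofReal q * D
  have hqD : I ≤ ENNReal.ofReal q * D := by
    have hc0 : ENNReal.ofReal (p - 1) ≠ 0 := by
      rw [Ne, ENNReal.ofReal_eq_zero, not_le]; linarith
    have hcT : ENNReal.ofReal (p - 1) ≠ ∞ := ENNReal.ofReal_ne_top
    have key : ENNReal.ofReal (p-1) * I ≤ ENNReal.ofReal (p-1) * (ENNReal.ofReal p *
        ∫⁻ t in Ioi (0:ℝ), ν {ω | t ≤ g ω} * ENNReal.ofReal (t ^ (p - 1 - 1))) :=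
      mul_le_mul_right hIle _
    have : ENNReal.ofReal (p-1) * I ≤ ENNReal.ofReal p * D := by
      rw [lc2]; calc ENNReal.ofReal (p-1) * I ≤ _ := key
        _ = ENNReal.ofReal p * (ENNReal.ofReal (p-1) *
            ∫⁻ t in Ioi (0:ℝ), ν {ω | t ≤ g ω} * ENNReal.ofReal (t ^ (p - 1 - 1))) := by ring
    calc I = (ENNReal.ofReal (p-1))⁻¹ * (ENNReal.ofReal (p-1) * I) := by
          rw [← mul_assoc, ENNReal.inv_mul_cancel hc0 hcT, one_mul]
      _ ≤ (ENNReal.ofReal (p-1))⁻¹ * (ENNReal.ofReal p * D) := mul_le_mul_right this _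
      _ = ((ENNReal.ofReal (p-1))⁻¹ * ENNReal.ofReal p) * D := by ring
      _ = ENNReal.ofReal q * D := by
          congr 1
          rw [hpq.conjugate_eq, ENNReal.ofReal_div_of_pos hp10, div_eq_mul_inv, mul_comm]
  -- D ≤ Fp^(1/p) * I^(1/q) by Hölder
  have hDle : D ≤ Fp ^ (1/p) * I ^ (1/q) := by
    have hD' : D = ∫⁻ ω, (fun ω => ENNReal.ofReal (f ω)) ω *
        (fun ω => ENNReal.ofReal (g ω ^ (p-1))) ω ∂μ := by
      rw [hD, lintegral_withDensity_eq_lintegral_mul₀ hf.ennreal_ofReal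
        (by exact ((hg.aemeasurable.pow aemeasurable_const).ennreal_ofReal)), ]
      rfl
    have hHold := ENNReal.lintegral_mul_le_Lp_mul_Lq μ hpq hf.ennreal_ofReal
      ((hg.aemeasurable.pow aemeasurable_const).ennreal_ofReal :
        AEMeasurable (fun ω => ENNReal.ofReal (g ω ^ (p-1))) μ)
    rw [hD']
    refine le_trans hHold ?_
    have e1 : ∫⁻ ω, (ENNReal.ofReal (f ω)) ^ p ∂μ = Fp := by
      rw [hFp]
      refine lintegral_congr_ae ?_
      filter_upwards [hf0] with ω hω
      rw [ENNReal.ofReal_rpow_of_nonneg hω hp0.le]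
    have e2 : ∫⁻ ω, (ENNReal.ofReal (g ω ^ (p-1))) ^ q ∂μ = I := by
      rw [hI]
      refine lintegral_congr fun ω => ?_
      rw [ENNReal.ofReal_rpow_of_nonneg (Real.rpow_nonneg (hg0 ω) _) hpq.symm.pos.le,
        ← Real.rpow_mul (hg0 ω), hpq.sub_one_mul_conj]
    rw [e1, e2]
  -- combine
  rcases eq_or_ne I 0 with hI0 | hI0
  · rw [hI0, ENNReal.zero_rpow_of_pos hpq.one_div_pos]
    exact zero_le
  have hIq0 : I ^ (1/q) ≠ 0 :=
    (ENNReal.rpow_pos (pos_iff_ne_zero.mpr hI0) hfin).ne'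
  have hIqT : I ^ (1/q) ≠ ∞ :=
    ENNReal.rpow_ne_top_of_nonneg hpq.symm.one_div_nonneg hfin
  have hsplitI : I = I ^ (1/p) * I ^ (1/q) := by
    rw [← ENNReal.rpow_add _ _ hI0 hfin]
    rw [show 1/p + 1/q = 1 by rw [one_div, one_div]; exact hpq.inv_add_inv_eq_one]
    exact (ENNReal.rpow_one I).symm
  have final : I ^ (1/p) * I ^ (1/q) ≤ (ENNReal.ofReal q * Fp ^ (1/p)) * I ^ (1/q) := by
    rw [← hsplitI]
    calc I ≤ ENNReal.ofReal q * D := hqD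
      _ ≤ ENNReal.ofReal q * (Fp ^ (1/p) * I ^ (1/q)) := mul_le_mul_right hDle _
      _ = (ENNReal.ofReal q * Fp ^ (1/p)) * I ^ (1/q) := by ring
  exact (ENNReal.mul_le_mul_iff_left hIq0 hIqT).mp final


variable {Ω : Type*} {m0 : MeasurableSpace Ω} {μ : Measure Ω} [IsProbabilityMeasure μ]

/-- Doob's `L^p` maximal inequality for conditional expectations along a filtration. -/
lemma doob_Lp_one_param (𝒢 : Filtration ℕ m0) {p q : ℝ} (hpq : p.HolderConjugate q)
    {f : Ω → ℝ} (hf0 : 0 ≤ᵐ[μ] f) (hf : MemLp f (ENNReal.ofReal p) μ) :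
    (∫⁻ ω, (⨆ n, (‖(μ[f|𝒢 n]) ω‖₊ : ℝ≥0∞)) ^ p ∂μ) ^ (1/p) ≤
      ENNReal.ofReal q * (∫⁻ ω, (‖f ω‖₊ : ℝ≥0∞) ^ p ∂μ) ^ (1/p) := by
  have hp0 : 0 < p := hpq.pos
  have hint : Integrable f μ := hf.integrable (by
    rw [← ENNReal.ofReal_one]; exact ENNReal.ofReal_le_ofReal hpq.lt.le)
  have hmart := (martingale_condExp f 𝒢 μ).submartingale
  set φ : ℕ → Ω → ℝ := fun k ω => max ((μ[f|𝒢 k]) ω) 0 with hφ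
  have hφsub : Submartingale φ 𝒢 μ := hmart.pos
  have hφ0 : 0 ≤ φ := fun k ω => le_max_right _ _
  have hφmeas : ∀ k, Measurable (φ k) :=
    fun k => ((stronglyMeasurable_condExp.mono (𝒢.le k)).measurable).max measurable_const
  set N : Ω → ℝ≥0∞ := fun ω => ⨆ k, ENNReal.ofReal (φ k ω) with hN
  have hNmeas : Measurable N :=
    Measurable.iSup fun k => (hφmeas k).ennreal_ofReal
  -- the weak maximal inequality for N
  have hweakN : ∀ t : ℝ, 0 < t →
      ENNReal.ofReal t * μ {ω | ENNReal.ofReal t < N ω} ≤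
        ∫⁻ ω in {ω | ENNReal.ofReal t ≤ N ω}, ENNReal.ofReal (f ω) ∂μ := by
    intro t ht
    set ε : ℝ≥0 := ⟨t, ht.le⟩ with hε
    set A : ℕ → Set Ω := fun n =>
      {ω | (ε : ℝ) ≤ (Finset.range (n + 1)).sup' Finset.nonempty_range_add_one fun k => φ k ω}
      with hA
    have hAmeas : ∀ n, MeasurableSet[𝒢 n] (A n) := by
      intro n
      letI : MeasurableSpace Ω := 𝒢 n
      exact measurableSet_le measurable_const
        (Finset.measurable_range_sup'' fun k hk =>
          ((stronglyMeasurable_condExp.mono (𝒢.mono hk)).measurable.max measurable_const))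
    have hAmeas0 : ∀ n, MeasurableSet (A n) := fun n => (𝒢.le n) _ (hAmeas n)
    have hAmono : Monotone A := by
      intro a b hab ω hω
      simp only [hA, mem_setOf_eq] at hω ⊢
      refine le_trans hω (Finset.sup'_le _ _ fun k hk => ?_)
      exact Finset.le_sup' (fun j => φ j ω)
        (Finset.mem_range.mpr (by have := Finset.mem_range.mp hk; omega))
    -- Doob's weak inequality on each A n
    have hAn : ∀ n, (ε : ℝ≥0∞) * μ (A n) ≤ ∫⁻ ω in A n, ENNReal.ofReal (f ω) ∂μ := by
      intro n
      have h1 := maximal_ineq hφsub hφ0 (ε := ε) n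
      have h2 : ∫ ω in A n, φ n ω ∂μ ≤ ∫ ω in A n, f ω ∂μ := by
        have hcondeq : φ n =ᵐ[μ] μ[f|𝒢 n] := by
          filter_upwards [condExp_nonneg hf0 (m := 𝒢 n)] with ω hω
          simpa [hφ] using max_eq_left hω
        have h3 : ∫ ω in A n, φ n ω ∂μ = ∫ ω in A n, (μ[f|𝒢 n]) ω ∂μ :=
          setIntegral_congr_ae (hAmeas0 n) (by filter_upwards [hcondeq] with ω h _ using h)
        rw [h3, setIntegral_condExp (𝒢.le n) hint (hAmeas n)]
      have h4 : ENNReal.ofReal (∫ ω in A n, f ω ∂μ) = ∫⁻ ω in A n, ENNReal.ofReal (f ω) ∂μ :=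
        ofReal_integral_eq_lintegral_ofReal hint.integrableOn
          (ae_restrict_of_ae hf0)
      calc (ε : ℝ≥0∞) * μ (A n) = ε • μ (A n) := rfl
        _ ≤ ENNReal.ofReal (∫ ω in A n, φ n ω ∂μ) := h1
        _ ≤ ENNReal.ofReal (∫ ω in A n, f ω ∂μ) := ENNReal.ofReal_le_ofReal h2
        _ = _ := h4
    -- {t < N} ⊆ ⋃ A n  and  A n ⊆ {t ≤ N}
    have hsub1 : {ω | ENNReal.ofReal t < N ω} ⊆ ⋃ n, A n := by
      intro ω hω
      rw [mem_setOf_eq, hN] at hω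
      obtain ⟨k, hk⟩ := lt_iSup_iff.mp hω
      have : t < φ k ω := by
        have := (ENNReal.ofReal_lt_ofReal_iff_of_nonneg ht.le).mp hk
        exact this
      refine mem_iUnion.mpr ⟨k, ?_⟩
      refine le_trans this.le ?_
      exact Finset.le_sup' (f := fun j => φ j ω) (Finset.self_mem_range_succ k)
    have hsub2 : ∀ n, A n ⊆ {ω | ENNReal.ofReal t ≤ N ω} := by
      intro n ω hω
      obtain ⟨k, hk, hks⟩ := Finset.exists_mem_eq_sup' Finset.nonempty_range_add_one
        (fun j => φ j ω)
      rw [mem_setOf_eq]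
      calc ENNReal.ofReal t ≤ ENNReal.ofReal (φ k ω) := by
            refine ENNReal.ofReal_le_ofReal ?_
            have hω' : (ε : ℝ) ≤ φ k ω := by
              rw [← hks]; exact hω
            exact hω'
        _ ≤ N ω := le_iSup (fun j => ENNReal.ofReal (φ j ω)) k
    calc ENNReal.ofReal t * μ {ω | ENNReal.ofReal t < N ω}
        ≤ ENNReal.ofReal t * μ (⋃ n, A n) := mul_le_mul_right (measure_mono hsub1) _
      _ = ENNReal.ofReal t * ⨆ n, μ (A n) := by
          rw [hAmono.directed_le.measure_iUnion]
      _ = ⨆ n, ENNReal.ofReal t * μ (A n) := by rw [ENNReal.mul_iSup]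
      _ ≤ ⨆ n, ∫⁻ ω in A n, ENNReal.ofReal (f ω) ∂μ := by
          refine iSup_mono fun n => ?_
          have : ENNReal.ofReal t = (ε : ℝ≥0∞) := by
            rw [hε]; simp [ENNReal.ofReal, Real.toNNReal_of_nonneg ht.le]; rfl
          rw [this]; exact hAn n
      _ ≤ ∫⁻ ω in {ω | ENNReal.ofReal t ≤ N ω}, ENNReal.ofReal (f ω) ∂μ := by
          refine iSup_le fun n => lintegral_mono_set (hsub2 n)
  -- ### truncation and application of the abstract lemma
  set Fp : ℝ≥0∞ := ∫⁻ ω, ENNReal.ofReal (f ω ^ p) ∂μ with hFp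
  have htrunc : ∀ c : ℕ, ∫⁻ ω, (N ω ⊓ (c:ℝ≥0∞)) ^ p ∂μ ≤ (ENNReal.ofReal q * Fp ^ (1/p)) ^ p := by
    intro c
    set g : Ω → ℝ := fun ω => (N ω ⊓ (c:ℝ≥0∞)).toReal with hg
    have hgtop : ∀ ω, N ω ⊓ (c:ℝ≥0∞) ≠ ∞ :=
      fun ω => ne_top_of_le_ne_top (ENNReal.natCast_ne_top c) inf_le_right
    have hgmeas : Measurable g := (hNmeas.inf measurable_const).ennreal_toReal
    have hg0 : 0 ≤ g := fun ω => ENNReal.toReal_nonneg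
    have hgconv : ∀ ω, ENNReal.ofReal (g ω ^ p) = (N ω ⊓ (c:ℝ≥0∞)) ^ p := fun ω => by
      rw [← ENNReal.ofReal_rpow_of_nonneg (hg0 ω) hp0.le, ENNReal.ofReal_toReal (hgtop ω)]
    have hweakg : ∀ t : ℝ, 0 < t →
        ENNReal.ofReal t * μ {ω | t < g ω} ≤ ∫⁻ ω in {ω | t ≤ g ω}, ENNReal.ofReal (f ω) ∂μ := by
      intro t ht
      by_cases hc : ENNReal.ofReal t < (c:ℝ≥0∞)
      · have hset1 : {ω | t < g ω} ⊆ {ω | ENNReal.ofReal t < N ω} := by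
          intro ω hω
          have h1 : ENNReal.ofReal t < N ω ⊓ (c:ℝ≥0∞) :=
            (ENNReal.ofReal_lt_iff_lt_toReal ht.le (hgtop ω)).mpr hω
          exact lt_of_lt_of_le h1 inf_le_left
        have hset2 : {ω | t ≤ g ω} = {ω | ENNReal.ofReal t ≤ N ω} := by
          ext ω
          simp only [mem_setOf_eq, hg]
          rw [← ENNReal.ofReal_le_iff_le_toReal (hgtop ω)]
          exact ⟨fun h => le_trans h inf_le_left, fun h => le_inf h hc.le⟩
        rw [hset2]
        exact le_trans (mul_le_mul_right (measure_mono hset1) _) (hweakN t ht)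
      · have hempty : {ω | t < g ω} = ∅ := by
          refine eq_empty_iff_forall_notMem.mpr fun ω hω => ?_
          rw [mem_setOf_eq] at hω
          have h1 : g ω ≤ (c : ℝ) := by
            rw [hg]
            calc (N ω ⊓ (c:ℝ≥0∞)).toReal ≤ ((c:ℝ≥0∞)).toReal :=
                  ENNReal.toReal_mono (ENNReal.natCast_ne_top c) inf_le_right
              _ = (c : ℝ) := by simp
          have h2 : (c : ℝ) ≤ t := by
            rw [not_lt] at hc
            have := ENNReal.toReal_mono ENNReal.ofReal_ne_top hc
            simpa [ENNReal.toReal_ofReal ht.le] using this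
          linarith
        simp [hempty]
    have hfing : ∫⁻ ω, ENNReal.ofReal (g ω ^ p) ∂μ ≠ ∞ := by
      have hb : ∀ ω, ENNReal.ofReal (g ω ^ p) ≤ ((c:ℝ≥0∞)) ^ p := fun ω => by
        rw [hgconv ω]; exact ENNReal.rpow_le_rpow inf_le_right hp0.le
      have hle : ∫⁻ ω, ENNReal.ofReal (g ω ^ p) ∂μ ≤ ((c:ℝ≥0∞)) ^ p * μ Set.univ := by
        refine le_trans (lintegral_mono hb) ?_
        rw [lintegral_const]
      refine ne_top_of_le_ne_top ?_ hle
      exact ENNReal.mul_ne_top (ENNReal.rpow_ne_top_of_nonneg hp0.le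
        (ENNReal.natCast_ne_top c)) (measure_ne_top μ _)
    have hres := doob_weak_to_Lp μ hpq hgmeas hg0 hint.aemeasurable hf0 hweakg hfing
    have hres' : (∫⁻ ω, (N ω ⊓ (c:ℝ≥0∞)) ^ p ∂μ) ^ (1/p) ≤ ENNReal.ofReal q * Fp ^ (1/p) := by
      rw [show (∫⁻ ω, (N ω ⊓ (c:ℝ≥0∞)) ^ p ∂μ) = ∫⁻ ω, ENNReal.ofReal (g ω ^ p) ∂μ from
        lintegral_congr fun ω => (hgconv ω).symm]
      exact hres
    have h2 := ENNReal.rpow_le_rpow hres' hp0.le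
    rw [one_div, ENNReal.rpow_inv_rpow hp0.ne'] at h2
    simpa [one_div] using h2
  -- ### pass to the limit in the truncation
  have hptw : ∀ x : ℝ≥0∞, (⨆ c : ℕ, (x ⊓ (c:ℝ≥0∞)) ^ p) = x ^ p := by
    intro x
    rcases eq_or_ne x ∞ with hx | hx
    · subst hx
      simp only [top_inf_eq]
      rw [ENNReal.top_rpow_of_pos hp0, eq_top_iff, ← ENNReal.iSup_natCast]
      refine iSup_le fun n => ?_
      refine le_trans ?_ (le_iSup (fun c : ℕ => ((c:ℝ≥0∞)) ^ p) (n + 1))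
      calc (n : ℝ≥0∞) ≤ ((n + 1 : ℕ) : ℝ≥0∞) := by exact_mod_cast Nat.le_succ n
        _ = ((n + 1 : ℕ) : ℝ≥0∞) ^ (1:ℝ) := (ENNReal.rpow_one _).symm
        _ ≤ ((n + 1 : ℕ) : ℝ≥0∞) ^ p := ENNReal.rpow_le_rpow_of_exponent_le
              (by exact_mod_cast Nat.one_le_iff_ne_zero.mpr (Nat.succ_ne_zero n)) hpq.lt.le
    · obtain ⟨c, hc⟩ := ENNReal.exists_nat_gt hx
      apply le_antisymm (iSup_le fun c => ENNReal.rpow_le_rpow inf_le_left hp0.le)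
      exact le_trans (le_of_eq (congrArg (· ^ p) (inf_eq_left.mpr hc.le).symm))
        (le_iSup (fun c : ℕ => (x ⊓ (c:ℝ≥0∞)) ^ p) c)
  have hmono2 : Monotone fun (c : ℕ) (ω : Ω) => (N ω ⊓ (c:ℝ≥0∞)) ^ p := by
    intro a b hab ω
    exact ENNReal.rpow_le_rpow (inf_le_inf_left _ (by exact_mod_cast Nat.cast_le.mpr hab))
      hp0.le
  have hmc : ∫⁻ ω, N ω ^ p ∂μ ≤ (ENNReal.ofReal q * Fp ^ (1/p)) ^ p := by
    have hsup : ∫⁻ ω, N ω ^ p ∂μ = ⨆ c : ℕ, ∫⁻ ω, (N ω ⊓ (c:ℝ≥0∞)) ^ p ∂μ := by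
      rw [← lintegral_iSup (f := fun (c : ℕ) (ω : Ω) => (N ω ⊓ (c:ℝ≥0∞)) ^ p) (fun c => ((hNmeas.inf measurable_const).pow_const p :
          Measurable fun ω => (N ω ⊓ (c:ℝ≥0∞)) ^ p))
        hmono2]
      exact lintegral_congr fun ω => (hptw (N ω)).symm
    rw [hsup]
    exact iSup_le htrunc
  have hfinal : (∫⁻ ω, N ω ^ p ∂μ) ^ (1/p) ≤ ENNReal.ofReal q * Fp ^ (1/p) := by
    have h2 := ENNReal.rpow_le_rpow hmc (one_div_nonneg.mpr hp0.le)
    rw [one_div, ENNReal.rpow_rpow_inv hp0.ne'] at h2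
    simpa [one_div] using h2
  -- ### translate to the stated form
  have hMN : ∫⁻ ω, (⨆ n, (‖(μ[f|𝒢 n]) ω‖₊ : ℝ≥0∞)) ^ p ∂μ = ∫⁻ ω, N ω ^ p ∂μ := by
    refine lintegral_congr_ae ?_
    filter_upwards [ae_all_iff.mpr fun k => condExp_nonneg (m := 𝒢 k) hf0] with ω hω
    have hk : ∀ k, (‖(μ[f|𝒢 k]) ω‖₊ : ℝ≥0∞) = ENNReal.ofReal (φ k ω) := fun k => by
      rw [← enorm_eq_nnnorm, Real.enorm_eq_ofReal (hω k)]
      congr 1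
      exact (max_eq_left (hω k)).symm
    congr 1
    rw [hN]
    exact iSup_congr hk
  have hRHS : Fp = ∫⁻ ω, (‖f ω‖₊ : ℝ≥0∞) ^ p ∂μ := by
    refine lintegral_congr_ae ?_
    filter_upwards [hf0] with ω hω
    rw [← enorm_eq_nnnorm, Real.enorm_eq_ofReal hω, ENNReal.ofReal_rpow_of_nonneg hω hp0.le]
  rw [hMN, ← hRHS]
  exact hfinal


end AB

section C

variable {Ω : Type*} [m0 : MeasurableSpace Ω] {μ : Measure Ω} [IsProbabilityMeasure μ]
  {𝓕 : ℕ → ℕ → MeasurableSpace Ω}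

/-- Under (F4), `𝔼[𝔼[f|ℱ_{∞,m}] | ℱ_{n,∞}] = 𝔼[f|ℱ_{n,m}]`. -/
lemma condExp_colSup_rowSup (h4 : IsF4Filtration μ 𝓕) {f : Ω → ℝ}
    (hint : Integrable f μ) (n m : ℕ) :
    μ[ μ[f | colSup 𝓕 m] | rowSup 𝓕 n] =ᵐ[μ] μ[f | 𝓕 n m] := by
  set colF : Filtration ℕ m0 :=
    ⟨fun k => 𝓕 k m, monotone_nat_of_le_succ fun k => h4.mono_left k m,
      fun k => h4.le k m⟩ with hcolF
  set rowF : Filtration ℕ m0 :=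
    ⟨fun j => 𝓕 n j, monotone_nat_of_le_succ fun j => h4.mono_right n j,
      fun j => h4.le n j⟩ with hrowF
  have hcolSup : (⨆ k, (colF k : MeasurableSpace Ω)) = colSup 𝓕 m := rfl
  have hrowSup : (⨆ j, (rowF j : MeasurableSpace Ω)) = rowSup 𝓕 n := rfl
  have hrowle : rowSup 𝓕 n ≤ m0 := iSup_le fun j => h4.le n j
  set h : Ω → ℝ := μ[f | colSup 𝓕 m] with hh
  set ψ : ℕ → Ω → ℝ := fun k => μ[f | 𝓕 k m] with hψ
  -- Lévy upward in the column direction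
  have step1 : Tendsto (fun k => eLpNorm (ψ k - h) 1 μ) atTop (𝓝 0) := by
    have := tendsto_eLpNorm_condExp (ℱ := colF) (μ := μ) f
    rw [hcolSup] at this
    exact this
  -- for `k ≥ n`, conditioning `ψ k` on the row σ-algebra gives `𝔼[f|ℱ_{n,m}]`
  have step2 : ∀ k, n ≤ k → μ[ψ k | rowSup 𝓕 n] =ᵐ[μ] μ[f | 𝓕 n m] := by
    intro k hk
    have hlev := tendsto_eLpNorm_condExp (ℱ := rowF) (μ := μ) (ψ k)
    rw [hrowSup] at hlev
    have hev : ∀ᶠ j in atTop,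
        eLpNorm (μ[ψ k|𝓕 n j] - μ[ψ k|rowSup 𝓕 n]) 1 μ =
        eLpNorm (μ[f|𝓕 n m] - μ[ψ k|rowSup 𝓕 n]) 1 μ := by
      filter_upwards [eventually_ge_atTop m] with j hj
      refine eLpNorm_congr_ae ?_
      have hF4 := h4.f4 n j k m f hint
      rw [min_eq_left hk, min_eq_right hj] at hF4
      filter_upwards [hF4] with ω hω
      simp only [Pi.sub_apply, hψ, hω]
    have hlev' : Tendsto (fun j : ℕ =>
        eLpNorm (μ[f|𝓕 n m] - μ[ψ k|rowSup 𝓕 n]) 1 μ) atTop (𝓝 0) :=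
      hlev.congr' hev
    have h0 : eLpNorm (μ[f|𝓕 n m] - μ[ψ k|rowSup 𝓕 n]) 1 μ = 0 :=
      tendsto_nhds_unique tendsto_const_nhds hlev'
    have hae := (eLpNorm_eq_zero_iff
      (((stronglyMeasurable_condExp.mono (h4.le n m)).sub
        (stronglyMeasurable_condExp.mono hrowle)).aestronglyMeasurable) one_ne_zero).mp h0
    filter_upwards [hae] with ω hω
    have : (μ[f|𝓕 n m]) ω - (μ[ψ k|rowSup 𝓕 n]) ω = 0 := hω
    linarith
  -- contraction argument
  have step3 : ∀ k, n ≤ k →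
      eLpNorm (μ[h | rowSup 𝓕 n] - μ[f|𝓕 n m]) 1 μ ≤ eLpNorm (ψ k - h) 1 μ := by
    intro k hk
    calc eLpNorm (μ[h | rowSup 𝓕 n] - μ[f|𝓕 n m]) 1 μ
        = eLpNorm (μ[h | rowSup 𝓕 n] - μ[ψ k | rowSup 𝓕 n]) 1 μ := by
          refine eLpNorm_congr_ae ?_
          filter_upwards [step2 k hk] with ω hω
          simp only [Pi.sub_apply, hω]
      _ = eLpNorm (μ[h - ψ k | rowSup 𝓕 n]) 1 μ :=
          (eLpNorm_congr_ae (condExp_sub integrable_condExp integrable_condExp _)).symm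
      _ ≤ eLpNorm (h - ψ k) 1 μ := eLpNorm_one_condExp_le_eLpNorm _
      _ = eLpNorm (ψ k - h) 1 μ := by rw [eLpNorm_sub_comm]
  have h0 : eLpNorm (μ[h | rowSup 𝓕 n] - μ[f|𝓕 n m]) 1 μ = 0 := by
    refine le_antisymm ?_ zero_le
    refine ge_of_tendsto step1 ?_
    filter_upwards [eventually_ge_atTop n] with k hk
    exact step3 k hk
  have hae := (eLpNorm_eq_zero_iff
    (((stronglyMeasurable_condExp.mono hrowle).sub
      (stronglyMeasurable_condExp.mono (h4.le n m))).aestronglyMeasurable) one_ne_zero).mp h0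
  filter_upwards [hae] with ω hω
  have : (μ[h | rowSup 𝓕 n]) ω - (μ[f|𝓕 n m]) ω = 0 := hω
  linarith

end C


/-- An (F4) two-parameter filtration has the Doob property: for each
`p ∈ (1,∞)` there is a constant `C_p`, depending only on `p`, such that
`‖sup_{n,m} 𝔼_{n,m}|X|‖_{L^p} ≤ C_p ‖X‖_{L^p}` for all `X ∈ L^p`. -/
theorem f4_doob_property :
    ∀ p : ℝ, 1 < p →
      ∃ C : ℝ≥0∞, C ≠ ∞ ∧
        ∀ (Ω : Type*) [MeasurableSpace Ω] (μ : Measure Ω) [IsProbabilityMeasure μ]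
          (𝓕 : ℕ → ℕ → MeasurableSpace Ω), IsF4Filtration μ 𝓕 →
          ∀ X : Ω → ℝ, MemLp X (ENNReal.ofReal p) μ →
            (∫⁻ ω, (⨆ n, ⨆ m, (‖(μ[(fun a => |X a|) | 𝓕 n m]) ω‖₊ : ℝ≥0∞)) ^ p ∂μ) ^ (1/p) ≤
              C * eLpNorm X (ENNReal.ofReal p) μ := by
  intro p hp
  have hpq : p.HolderConjugate (p / (p - 1)) := Real.HolderConjugate.conjExponent hp
  set q : ℝ := p / (p - 1) with hq
  have hp0 : 0 < p := hpq.pos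
  refine ⟨ENNReal.ofReal q * ENNReal.ofReal q,
    ENNReal.mul_ne_top ENNReal.ofReal_ne_top ENNReal.ofReal_ne_top, ?_⟩
  intro Ω mΩ μ hprob 𝓕 h4 X hX
  set f : Ω → ℝ := fun a => |X a| with hf
  have hf0 : 0 ≤ᵐ[μ] f := ae_of_all _ fun a => abs_nonneg _
  have hfmem : MemLp f (ENNReal.ofReal p) μ := by
    have := hX.norm
    simpa [hf, Real.norm_eq_abs] using this
  have hone : (1 : ℝ≥0∞) ≤ ENNReal.ofReal p := by
    rw [← ENNReal.ofReal_one]; exact ENNReal.ofReal_le_ofReal hp.le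
  have hint : Integrable f μ := hfmem.integrable hone
  -- the column and row filtrations
  set colF : Filtration ℕ mΩ :=
    ⟨fun m => colSup 𝓕 m, monotone_nat_of_le_succ fun m =>
        iSup_mono fun i => h4.mono_right i m,
      fun m => iSup_le fun i => h4.le i m⟩ with hcolF
  set rowF : Filtration ℕ mΩ :=
    ⟨fun n => rowSup 𝓕 n, monotone_nat_of_le_succ fun n =>
        iSup_mono fun j => h4.mono_left n j,
      fun n => iSup_le fun j => h4.le n j⟩ with hrowF
  have hcolFc : ∀ m, (colF m : MeasurableSpace Ω) = colSup 𝓕 m := fun m => rfl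
  have hrowFc : ∀ n, (rowF n : MeasurableSpace Ω) = rowSup 𝓕 n := fun n => rfl
  have hcolle : ∀ m, colSup 𝓕 m ≤ mΩ := fun m => iSup_le fun i => h4.le i m
  have hrowle : ∀ n, rowSup 𝓕 n ≤ mΩ := fun n => iSup_le fun j => h4.le n j
  -- first application of Doob's inequality, along columns
  have B1 := doob_Lp_one_param colF hpq hf0 hfmem
  simp only [hcolFc] at B1
  have hFpfin : (∫⁻ ω, (‖f ω‖₊ : ℝ≥0∞) ^ p ∂μ) ≠ ∞ := by
    have h1 := hfmem.eLpNorm_lt_top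
    rw [eLpNorm_eq_lintegral_rpow_enorm_toReal
      (by rw [Ne, ENNReal.ofReal_eq_zero, not_le]; linarith) ENNReal.ofReal_ne_top,
      ENNReal.toReal_ofReal hp0.le] at h1
    intro hc
    simp only [← enorm_eq_nnnorm] at hc
    rw [hc, ENNReal.top_rpow_of_pos (by positivity)] at h1
    exact lt_irrefl _ h1
  have hMmeas : Measurable fun ω => ⨆ m, (‖(μ[f | colSup 𝓕 m]) ω‖₊ : ℝ≥0∞) :=
    Measurable.iSup fun m => (stronglyMeasurable_condExp.mono (hcolle m)).measurable.nnnorm.coe_nnreal_ennreal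
  have hMfin : (∫⁻ ω, (⨆ m, (‖(μ[f | colSup 𝓕 m]) ω‖₊ : ℝ≥0∞)) ^ p ∂μ) ≠ ∞ := by
    intro hc
    have hR : ENNReal.ofReal q * (∫⁻ ω, (‖f ω‖₊ : ℝ≥0∞) ^ p ∂μ) ^ (1/p) ≠ ⊤ :=
      ENNReal.mul_ne_top ENNReal.ofReal_ne_top
        (ENNReal.rpow_ne_top_of_nonneg (by positivity) hFpfin)
    rw [hc, ENNReal.top_rpow_of_pos (by positivity)] at B1
    exact hR (top_le_iff.mp B1)
  -- the column maximal function, as a real-valued `L^p` function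
  have hfinae : ∀ᵐ ω ∂μ, (⨆ m, (‖(μ[f | colSup 𝓕 m]) ω‖₊ : ℝ≥0∞)) < ∞ := by
    have h1 := ae_lt_top (hMmeas.pow_const p) hMfin
    filter_upwards [h1] with ω hω
    by_contra hcon
    rw [not_lt, top_le_iff] at hcon
    rw [hcon, ENNReal.top_rpow_of_pos hp0] at hω
    exact lt_irrefl _ hω
  set S : Ω → ℝ := fun ω => (⨆ m, (‖(μ[f | colSup 𝓕 m]) ω‖₊ : ℝ≥0∞)).toReal with hS
  have hSmeas : Measurable S := hMmeas.ennreal_toReal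
  have hS0 : 0 ≤ᵐ[μ] S := ae_of_all _ fun ω => ENNReal.toReal_nonneg
  have hSnn : ∀ᵐ ω ∂μ,
      (‖S ω‖₊ : ℝ≥0∞) = ⨆ m, (‖(μ[f | colSup 𝓕 m]) ω‖₊ : ℝ≥0∞) := by
    filter_upwards [hfinae] with ω hω
    rw [hS]
    rw [← enorm_eq_nnnorm, Real.enorm_eq_ofReal ENNReal.toReal_nonneg, ENNReal.ofReal_toReal hω.ne]
  have hSlint : ∫⁻ ω, (‖S ω‖₊ : ℝ≥0∞) ^ p ∂μ =
      ∫⁻ ω, (⨆ m, (‖(μ[f | colSup 𝓕 m]) ω‖₊ : ℝ≥0∞)) ^ p ∂μ := by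
    refine lintegral_congr_ae ?_
    filter_upwards [hSnn] with ω hω
    rw [hω]
  have hSmem : MemLp S (ENNReal.ofReal p) μ := by
    refine ⟨hSmeas.aestronglyMeasurable, ?_⟩
    rw [eLpNorm_eq_lintegral_rpow_enorm_toReal
      (by rw [Ne, ENNReal.ofReal_eq_zero, not_le]; linarith) ENNReal.ofReal_ne_top,
      ENNReal.toReal_ofReal hp0.le]
    simp only [enorm_eq_nnnorm]
    rw [hSlint]
    exact ENNReal.rpow_lt_top_of_nonneg (by positivity) hMfin
  have hSint : Integrable S μ := hSmem.integrable hone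
  -- second application of Doob's inequality, along rows
  have B2 := doob_Lp_one_param rowF hpq hS0 hSmem
  simp only [hrowFc] at B2
  -- domination of the two-parameter maximal function
  have hdom : ∀ᵐ ω ∂μ,
      (⨆ n, ⨆ m, (‖(μ[f | 𝓕 n m]) ω‖₊ : ℝ≥0∞)) ≤
        ⨆ n, (‖(μ[S | rowSup 𝓕 n]) ω‖₊ : ℝ≥0∞) := by
    have hrc : ∀ n m : ℕ, μ[f | 𝓕 n m] =ᵐ[μ] μ[ μ[f | colSup 𝓕 m] | rowSup 𝓕 n] :=
      fun n m => (condExp_colSup_rowSup h4 hint n m).symm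
    have hcle : ∀ m : ℕ, μ[f | colSup 𝓕 m] ≤ᵐ[μ] S := by
      intro m
      filter_upwards [hfinae, condExp_nonneg (m := colSup 𝓕 m) hf0] with ω hω hω0
      have h1 : (‖(μ[f | colSup 𝓕 m]) ω‖₊ : ℝ≥0∞) ≤
          ⨆ m, (‖(μ[f | colSup 𝓕 m]) ω‖₊ : ℝ≥0∞) :=
        le_iSup (fun m => (‖(μ[f | colSup 𝓕 m]) ω‖₊ : ℝ≥0∞)) m
      have h2 := ENNReal.toReal_mono hω.ne h1
      rw [← enorm_eq_nnnorm, Real.enorm_eq_ofReal hω0, ENNReal.toReal_ofReal hω0] at h2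
      exact h2
    have hmono : ∀ n m : ℕ,
        μ[ μ[f | colSup 𝓕 m] | rowSup 𝓕 n] ≤ᵐ[μ] μ[S | rowSup 𝓕 n] := fun n m =>
      condExp_mono integrable_condExp hSint (hcle m)
    filter_upwards [ae_all_iff.mpr fun n : ℕ => ae_all_iff.mpr fun m : ℕ => hrc n m,
      ae_all_iff.mpr fun n : ℕ => ae_all_iff.mpr fun m : ℕ => hmono n m,
      ae_all_iff.mpr fun n : ℕ => ae_all_iff.mpr fun m : ℕ =>
        condExp_nonneg (m := 𝓕 n m) hf0] with ω h1 h2 h3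
    refine iSup_le fun n => iSup_le fun m => ?_
    calc (‖(μ[f | 𝓕 n m]) ω‖₊ : ℝ≥0∞) = ENNReal.ofReal ((μ[f | 𝓕 n m]) ω) :=
          Real.enorm_eq_ofReal (h3 n m)
      _ ≤ ENNReal.ofReal ((μ[S | rowSup 𝓕 n]) ω) := by
          refine ENNReal.ofReal_le_ofReal ?_
          rw [h1 n m]
          exact h2 n m
      _ ≤ (‖(μ[S | rowSup 𝓕 n]) ω‖₊ : ℝ≥0∞) := Real.ofReal_le_enorm _
      _ ≤ ⨆ n, (‖(μ[S | rowSup 𝓕 n]) ω‖₊ : ℝ≥0∞) :=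
          le_iSup (fun n => (‖(μ[S | rowSup 𝓕 n]) ω‖₊ : ℝ≥0∞)) n
  -- put everything together
  have hXnorm : eLpNorm X (ENNReal.ofReal p) μ =
      (∫⁻ ω, (‖f ω‖₊ : ℝ≥0∞) ^ p ∂μ) ^ (1/p) := by
    rw [eLpNorm_eq_lintegral_rpow_enorm_toReal
      (by rw [Ne, ENNReal.ofReal_eq_zero, not_le]; linarith) ENNReal.ofReal_ne_top,
      ENNReal.toReal_ofReal hp0.le]
    congr 1
    refine lintegral_congr fun ω => ?_
    rw [hf]
    rw [Real.nnnorm_abs]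
    rfl
  have hstep : (∫⁻ ω, (⨆ n, ⨆ m, (‖(μ[f | 𝓕 n m]) ω‖₊ : ℝ≥0∞)) ^ p ∂μ) ^ (1/p) ≤
      (∫⁻ ω, (⨆ n, (‖(μ[S | rowSup 𝓕 n]) ω‖₊ : ℝ≥0∞)) ^ p ∂μ) ^ (1/p) := by
    refine ENNReal.rpow_le_rpow (lintegral_mono_ae ?_) (by positivity)
    filter_upwards [hdom] with ω hω
    exact ENNReal.rpow_le_rpow hω hp0.le
  calc (∫⁻ ω, (⨆ n, ⨆ m, (‖(μ[f | 𝓕 n m]) ω‖₊ : ℝ≥0∞)) ^ p ∂μ) ^ (1/p)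
      ≤ (∫⁻ ω, (⨆ n, (‖(μ[S | rowSup 𝓕 n]) ω‖₊ : ℝ≥0∞)) ^ p ∂μ) ^ (1/p) := hstep
    _ ≤ ENNReal.ofReal q * (∫⁻ ω, (‖S ω‖₊ : ℝ≥0∞) ^ p ∂μ) ^ (1/p) := B2
    _ = ENNReal.ofReal q *
        (∫⁻ ω, (⨆ m, (‖(μ[f | colSup 𝓕 m]) ω‖₊ : ℝ≥0∞)) ^ p ∂μ) ^ (1/p) := by
          rw [hSlint]
    _ ≤ ENNReal.ofReal q *
        (ENNReal.ofReal q * (∫⁻ ω, (‖f ω‖₊ : ℝ≥0∞) ^ p ∂μ) ^ (1/p)) := by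
          refine mul_le_mul_right ?_ _
          refine le_trans (ENNReal.rpow_le_rpow ?_ (by positivity)) B1
          exact le_refl _
    _ = ENNReal.ofReal q * ENNReal.ofReal q * eLpNorm X (ENNReal.ofReal p) μ := by
          rw [hXnorm]; ring
end

section
/- Let (ℱ_k)_{k≥0} be a (one-parameter) filtration and q ≥ 1. For any sequence (Y_k) of nonnegative random variables with Y_k ∈ L^q and Y_k ℱ_k-measurable for each k, one has, with two-sided constants depending only on q: 𝔼[(Σ_k Y_k)^q] ≃ 𝔼[Σ_k Y_k^q] + 𝔼[(Σ_k 𝔼_{k−1} Y_k)^q]. -/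
open MeasureTheory ENNReal

lemma lintegral_mul_ofReal_condexp {Ω : Type*} {m m0 : MeasurableSpace Ω} (hm : m ≤ m0)
    (μ : Measure Ω) [IsFiniteMeasure μ] {f : Ω → ℝ} (hf : Integrable f μ)
    (hf0 : 0 ≤ᵐ[μ] f) {g : Ω → ℝ≥0∞} (hg : Measurable[m] g) :
    ∫⁻ ω, g ω * ENNReal.ofReal ((μ[f|m]) ω) ∂μ = ∫⁻ ω, g ω * ENNReal.ofReal (f ω) ∂μ := by
  have hce : Integrable (μ[f|m]) μ := integrable_condExp
  have hce0 : 0 ≤ᵐ[μ] (μ[f|m]) := condExp_nonneg hf0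
  have hmeas1 : AEMeasurable (fun ω => ENNReal.ofReal ((μ[f|m]) ω)) μ :=
    (ENNReal.measurable_ofReal.comp ((stronglyMeasurable_condExp.mono hm).measurable)).aemeasurable
  have hmeas2 : AEMeasurable (fun ω => ENNReal.ofReal (f ω)) μ :=
    ENNReal.measurable_ofReal.comp_aemeasurable hf.aemeasurable
  have hgm : Measurable[m0] g := hg.mono hm le_rfl
  have key : (μ.withDensity fun ω => ENNReal.ofReal ((μ[f|m]) ω)).trim hm
      = (μ.withDensity fun ω => ENNReal.ofReal (f ω)).trim hm := by
    refine @Measure.ext Ω m _ _ (fun s hs => ?_)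
    rw [trim_measurableSet_eq hm hs, trim_measurableSet_eq hm hs,
      withDensity_apply' _ s, withDensity_apply' _ s,
      ← ofReal_integral_eq_lintegral_ofReal (hce.restrict) (ae_restrict_of_ae hce0),
      ← ofReal_integral_eq_lintegral_ofReal (hf.restrict) (ae_restrict_of_ae hf0),
      setIntegral_condExp hm hf hs]
  calc ∫⁻ ω, g ω * ENNReal.ofReal ((μ[f|m]) ω) ∂μ
      = ∫⁻ ω, g ω ∂(μ.withDensity fun ω => ENNReal.ofReal ((μ[f|m]) ω)) := by
        rw [lintegral_withDensity_eq_lintegral_mul₀ hmeas1 hgm.aemeasurable]; simp [mul_comm]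
    _ = ∫⁻ ω, g ω ∂((μ.withDensity fun ω => ENNReal.ofReal ((μ[f|m]) ω)).trim hm) :=
        (lintegral_trim hm hg).symm
    _ = ∫⁻ ω, g ω ∂((μ.withDensity fun ω => ENNReal.ofReal (f ω)).trim hm) := by rw [key]
    _ = ∫⁻ ω, g ω ∂(μ.withDensity fun ω => ENNReal.ofReal (f ω)) := lintegral_trim hm hg
    _ = ∫⁻ ω, g ω * ENNReal.ofReal (f ω) ∂μ := by
        rw [lintegral_withDensity_eq_lintegral_mul₀ hmeas2 hgm.aemeasurable]; simp [mul_comm]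

lemma real_bernoulli_aux {q a b : ℝ} (hq : 1 ≤ q) (ha : 0 ≤ a) (hab : a ≤ b) :
    b ^ q ≤ a ^ q + q * b ^ (q - 1) * (b - a) := by
  have hb : 0 ≤ b := ha.trans hab
  rcases eq_or_lt_of_le hb with hb0 | hb0
  · have ha0 : a = 0 := le_antisymm (hab.trans hb0.symm.le) ha
    rw [← hb0, ← ha0]  -- b = 0, a = 0
    simp [Real.zero_rpow (by positivity : q ≠ 0)]
  · obtain ⟨s, hs_def⟩ : ∃ s : ℝ, s = a / b - 1 := ⟨_, rfl⟩
    have hs : -1 ≤ s := by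
      have : 0 ≤ a / b := div_nonneg ha hb
      rw [hs_def]; linarith
    have hbern := one_add_mul_self_le_rpow_one_add hs hq
    have h1s : 1 + s = a / b := by rw [hs_def]; ring
    rw [h1s] at hbern
    have hdiv : (a / b) ^ q = a ^ q / b ^ q := Real.div_rpow ha hb q
    rw [hdiv] at hbern
    have hbq : 0 < b ^ q := Real.rpow_pos_of_pos hb0 q
    have hbq1 : b ^ (q - 1) = b ^ q / b := by
      rw [Real.rpow_sub hb0, Real.rpow_one]
    have h2 : (1 + q * s) * b ^ q ≤ a ^ q := (le_div_iff₀ hbq).1 hbern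
    have hthis : b ^ q + q * (s * (b ^ q)) ≤ a ^ q := by nlinarith [h2]
    rw [hbq1]
    have hkey : q * (s * b ^ q) = -(q * (b ^ q / b) * (b - a)) := by
      field_simp [hs_def]
      rw [hs_def, sub_mul, div_mul_cancel₀ a hb0.ne']; ring
    linarith [hthis, hkey.le, hkey.ge]

lemma ennreal_bernoulli {q : ℝ} (hq : 1 ≤ q) {x y : ℝ≥0∞} (hxy : x ≤ y) (hy : y ≠ ∞) :
    y ^ q ≤ x ^ q + ENNReal.ofReal q * y ^ (q - 1) * (y - x) := by
  have hx : x ≠ ∞ := (hxy.trans_lt (lt_top_iff_ne_top.2 hy)).ne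
  set a := x.toReal with hadef
  set b := y.toReal with hbdef
  have ha : 0 ≤ a := ENNReal.toReal_nonneg
  have hb : 0 ≤ b := ENNReal.toReal_nonneg
  have hab : a ≤ b := ENNReal.toReal_le_toReal hx hy |>.2 hxy
  have hR := real_bernoulli_aux hq ha hab
  have hxe : x = ENNReal.ofReal a := (ENNReal.ofReal_toReal hx).symm
  have hye : y = ENNReal.ofReal b := (ENNReal.ofReal_toReal hy).symm
  have hsub : y - x = ENNReal.ofReal (b - a) := by
    rw [← ENNReal.toReal_sub_of_le hxy hy, ENNReal.ofReal_toReal]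
    exact (lt_of_le_of_lt (tsub_le_self) (lt_top_iff_ne_top.2 hy)).ne
  rw [hsub, hxe, hye,
    ENNReal.ofReal_rpow_of_nonneg hb (by linarith : (0:ℝ) ≤ q),
    ENNReal.ofReal_rpow_of_nonneg ha (by linarith : (0:ℝ) ≤ q)]
  by_cases hq1 : q = 1
  · simp [hq1]
    calc ENNReal.ofReal b ≤ ENNReal.ofReal (a + (b - a)) := by
          rw [add_sub_cancel]
      _ ≤ ENNReal.ofReal a + ENNReal.ofReal (b - a) := ENNReal.ofReal_add_le
    
  · have hq1' : 0 ≤ q - 1 := by linarith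
    rw [ENNReal.ofReal_rpow_of_nonneg hb hq1', ← ENNReal.ofReal_mul (by linarith : (0:ℝ) ≤ q),
      ← ENNReal.ofReal_mul (by positivity)]
    calc ENNReal.ofReal (b ^ q) ≤ ENNReal.ofReal (a ^ q + q * b ^ (q-1) * (b - a)) :=
          ENNReal.ofReal_le_ofReal hR
      _ ≤ _ := ENNReal.ofReal_add_le

lemma rpow_sub_one_mul_self {q : ℝ} (hq : 1 ≤ q) (x : ℝ≥0∞) : x ^ (q - 1) * x = x ^ q := by
  rcases eq_or_ne x 0 with rfl | hx0
  · rcases eq_or_lt_of_le hq with rfl | hq1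
    · simp
    · rw [ENNReal.zero_rpow_of_pos (by linarith), ENNReal.zero_rpow_of_pos (by linarith), mul_zero]
  rcases eq_or_ne x ∞ with rfl | hxt
  · rcases eq_or_lt_of_le hq with rfl | hq1
    · simp
    · rw [ENNReal.top_rpow_of_pos (by linarith), ENNReal.top_rpow_of_pos (by linarith), top_mul_top]
  · nth_rewrite 2 [← ENNReal.rpow_one x]
    rw [← ENNReal.rpow_add _ _ hx0 hxt, sub_add_cancel]

lemma tsum_rpow_le_rpow_tsum {q : ℝ} (hq : 1 ≤ q) (a : ℕ → ℝ≥0∞) :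
    ∑' k, a k ^ q ≤ (∑' k, a k) ^ q := by
  set S := ∑' k, a k with hS
  calc ∑' k, a k ^ q ≤ ∑' k, S ^ (q - 1) * a k := by
        refine ENNReal.tsum_le_tsum fun k => ?_
        rw [← rpow_sub_one_mul_self hq (a k)]
        exact mul_le_mul_left (ENNReal.rpow_le_rpow (ENNReal.le_tsum k) (by linarith)) _
    _ = S ^ (q - 1) * S := by rw [ENNReal.tsum_mul_left]
    _ = S ^ q := rpow_sub_one_mul_self hq S

lemma iSup_rpow_eq {q : ℝ} (hq : 0 < q) (f : ℕ → ℝ≥0∞) :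
    (⨆ n, f n) ^ q = ⨆ n, f n ^ q := by
  refine le_antisymm ?_ (iSup_le fun n => ENNReal.rpow_le_rpow (le_iSup f n) hq.le)
  have h1 : (⨆ n, f n) ≤ (⨆ n, f n ^ q) ^ q⁻¹ :=
    iSup_le fun n => (ENNReal.le_rpow_inv_iff hq).2 (le_iSup (fun n => f n ^ q) n)
  calc (⨆ n, f n) ^ q ≤ ((⨆ n, f n ^ q) ^ q⁻¹) ^ q := ENNReal.rpow_le_rpow h1 hq.le
    _ = ⨆ n, f n ^ q := by rw [← ENNReal.rpow_mul, inv_mul_cancel₀ hq.ne', ENNReal.rpow_one]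

lemma trunc_sub_le {a a' n : ℝ≥0∞} (h : a ≤ a') : min a' n - min a n ≤ a' - a := by
  rcases le_total a' n with h1 | h1
  · rw [min_eq_left h1, min_eq_left (h.trans h1)]
  · rw [min_eq_right h1]
    rcases le_total a n with h2 | h2
    · rw [min_eq_left h2]; exact tsub_le_tsub_right h1 a
    · rw [min_eq_right h2]; simp
lemma iSup_min_natCast {f : ℕ → ℝ≥0∞} (hf : Monotone f) :
    ⨆ n, min (f n) (n : ℝ≥0∞) = ⨆ n, f n := by
  refine le_antisymm (iSup_mono fun n => min_le_left _ _) (iSup_le fun N => ?_)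
  refine le_of_forall_lt fun c hc => ?_
  have hc' : c ≠ ∞ := hc.ne_top
  obtain ⟨n, hn1, hn2⟩ : ∃ n : ℕ, N ≤ n ∧ c < (n : ℝ≥0∞) := by
    refine ⟨max N (Nat.floor c.toReal + 1), le_max_left _ _, ?_⟩
    calc c = ENNReal.ofReal c.toReal := (ENNReal.ofReal_toReal hc').symm
      _ < (Nat.floor c.toReal + 1 : ℕ) := by
          rw [← ENNReal.ofReal_natCast]
          exact ENNReal.ofReal_lt_ofReal_iff_of_nonneg ENNReal.toReal_nonneg |>.2
            (by push_cast; exact Nat.lt_floor_add_one _)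
      _ ≤ _ := by exact_mod_cast Nat.cast_le.2 (le_max_right _ _)
  exact lt_of_lt_of_le (lt_min (hc.trans_le (hf hn1)) hn2) (le_iSup (fun n => min (f n) (n:ℝ≥0∞)) n)

lemma absorb_rpow {p q : ℝ} (hpq : Real.HolderConjugate p q) {u W Q : ℝ≥0∞} (hu : u ≠ ∞)
    (hle : u ≤ Q * (u ^ (1/p) * W ^ (1/q))) : u ≤ Q ^ q * W := by
  rcases eq_or_ne u 0 with rfl | hu0
  · exact zero_le
  have hq0 : 0 < q := hpq.symm.pos
  have key : u ^ (1/q) * u ^ (1/p) ≤ (Q * W ^ (1/q)) * u ^ (1/p) := by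
    calc u ^ (1/q) * u ^ (1/p) = u ^ (1/q + 1/p) := (ENNReal.rpow_add _ _ hu0 hu).symm
      _ = u := by
          rw [one_div, one_div, add_comm, hpq.inv_add_inv_eq_one, ENNReal.rpow_one]
      _ ≤ Q * (u ^ (1/p) * W ^ (1/q)) := hle
      _ = (Q * W ^ (1/q)) * u ^ (1/p) := by ring
  have h1 : u ^ (1/p) ≠ 0 := by
    simp [ENNReal.rpow_eq_zero_iff, hu0, hu]
  have h2 : u ^ (1/p) ≠ ∞ := ENNReal.rpow_ne_top_of_nonneg hpq.one_div_nonneg hu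
  have key2 : u ^ (1/q) ≤ Q * W ^ (1/q) := (ENNReal.mul_le_mul_iff_left h1 h2).1 key
  calc u = (u ^ (1/q)) ^ q := by
        rw [← ENNReal.rpow_mul, one_div, inv_mul_cancel₀ hq0.ne', ENNReal.rpow_one]
    _ ≤ (Q * W ^ (1/q)) ^ q := ENNReal.rpow_le_rpow key2 hq0.le
    _ = Q ^ q * W := by
        rw [ENNReal.mul_rpow_of_nonneg _ _ hq0.le, ← ENNReal.rpow_mul, one_div,
          inv_mul_cancel₀ hq0.ne', ENNReal.rpow_one]

lemma trunc_telescope {q : ℝ} (hq : 1 ≤ q) (a : ℕ → ℝ≥0∞) (ha : ∀ k, a k ≠ ∞)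
    {n : ℝ≥0∞} (hn : n ≠ ∞) (N : ℕ) :
    (min (∑ k ∈ Finset.range N, a k) n) ^ q ≤
      ∑ k ∈ Finset.range N, ENNReal.ofReal q *
        (min (∑ j ∈ Finset.range (k+1), a j) n) ^ (q-1) * a k := by
  have hq0 : 0 < q := lt_of_lt_of_le zero_lt_one hq
  induction N with
  | zero => simp [min_eq_left (zero_le : 0 ≤ n), ENNReal.zero_rpow_of_pos hq0]
  | succ N ih =>
    have hfin : ∑ k ∈ Finset.range N, a k ≠ ∞ :=
      (ENNReal.sum_lt_top.2 fun k _ => (ha k).lt_top).ne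
    have hle : ∑ k ∈ Finset.range N, a k ≤ ∑ k ∈ Finset.range (N+1), a k :=
      Finset.sum_le_sum_of_subset (Finset.range_subset_range.2 (Nat.le_succ N))
    have h1 := ennreal_bernoulli hq (min_le_min_right n hle)
      (ne_top_of_le_ne_top hn (min_le_right _ _))
    have hsub : ∑ k ∈ Finset.range (N+1), a k - ∑ k ∈ Finset.range N, a k = a N := by
      rw [Finset.sum_range_succ]; exact ENNReal.add_sub_cancel_left hfin
    have h2 : min (∑ k ∈ Finset.range (N+1), a k) n - min (∑ k ∈ Finset.range N, a k) n ≤ a N :=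
      (trunc_sub_le hle).trans_eq hsub
    calc (min (∑ k ∈ Finset.range (N+1), a k) n) ^ q
        ≤ (min (∑ k ∈ Finset.range N, a k) n) ^ q +
            ENNReal.ofReal q * (min (∑ k ∈ Finset.range (N+1), a k) n) ^ (q-1) *
              (min (∑ k ∈ Finset.range (N+1), a k) n - min (∑ k ∈ Finset.range N, a k) n) := h1
      _ ≤ (∑ k ∈ Finset.range N, ENNReal.ofReal q *
            (min (∑ j ∈ Finset.range (k+1), a j) n) ^ (q-1) * a k) +
            ENNReal.ofReal q * (min (∑ j ∈ Finset.range (N+1), a j) n) ^ (q-1) * a N :=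
          add_le_add ih (mul_le_mul_right h2 _)
      _ = _ := (Finset.sum_range_succ _ N).symm

section Main
variable {Ω : Type*} [m0 : MeasurableSpace Ω] {μ : Measure Ω} [IsProbabilityMeasure μ]
  {𝓕 : ℕ → MeasurableSpace Ω}

lemma A_bound {q : ℝ} (hq : 1 < q) (h𝓕 : ∀ k, 𝓕 k ≤ m0) (hmono : Monotone 𝓕)
    (Y : ℕ → Ω → ℝ) (hY0 : ∀ k ω, 0 ≤ Y k ω) (hYint : ∀ k, Integrable (Y k) μ)
    (hYm : ∀ k, Measurable[𝓕 k] (Y k)) :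
    ∫⁻ ω, (∑' k : ℕ, ENNReal.ofReal ((μ[Y k|𝓕 (k - 1)]) ω)) ^ q ∂μ ≤
      ENNReal.ofReal q ^ q * ∫⁻ ω, (∑' k : ℕ, ENNReal.ofReal (Y k ω)) ^ q ∂μ := by
  have hq1 : (1:ℝ) ≤ q := hq.le
  have hq0 : (0:ℝ) < q := lt_trans zero_lt_one hq
  set Q : ℝ≥0∞ := ENNReal.ofReal q with hQ
  set g : ℕ → Ω → ℝ := fun k => μ[Y k|𝓕 (k - 1)] with hgdef
  set S : Ω → ℝ≥0∞ := fun ω => ∑' k : ℕ, ENNReal.ofReal (Y k ω) with hSdef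
  set B : ℕ → Ω → ℝ≥0∞ := fun N ω => ∑ k ∈ Finset.range N, ENNReal.ofReal (g k ω) with hBdef
  have mY : ∀ k, Measurable (Y k) := fun k => (hYm k).mono (h𝓕 k) le_rfl
  have mgF : ∀ k, Measurable[𝓕 (k-1)] (g k) := fun k => stronglyMeasurable_condExp.measurable
  have mg : ∀ k, Measurable (g k) := fun k => (mgF k).mono (h𝓕 _) le_rfl
  have mB : ∀ N, Measurable (B N) := fun N =>
    Finset.measurable_sum _ fun k _ => (mg k).ennreal_ofReal
  have mBF : ∀ k, Measurable[𝓕 (k-1)] (B (k+1)) := by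
    intro k
    refine Finset.measurable_sum _ fun j hj => ?_
    have hj' : j ≤ k := Nat.lt_succ_iff.1 (Finset.mem_range.1 hj)
    exact Measurable.ennreal_ofReal
      ((mgF j).mono (hmono (Nat.sub_le_sub_right hj' 1)) le_rfl)
  have mS : Measurable S := Measurable.ennreal_tsum fun k =>
    (mY k).ennreal_ofReal
  have hBfin : ∀ N ω, B N ω ≠ ∞ := fun N ω =>
    (ENNReal.sum_lt_top.2 fun k _ => ENNReal.ofReal_lt_top).ne
  have hBmono : ∀ ω, Monotone fun N => B N ω := fun ω => fun M N h =>
    Finset.sum_le_sum_of_subset (Finset.range_subset_range.2 h)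
  set p : ℝ := q / (q - 1) with hpdef
  have hpq : p.HolderConjugate q := by
    refine Real.holderConjugate_iff.2 ⟨?_, ?_⟩
    · rw [hpdef]; exact (one_lt_div (by linarith)).2 (by linarith)
    · rw [hpdef]; field_simp; ring
  -- the key uniform bound
  have key : ∀ N : ℕ, ∀ n : ℕ,
      ∫⁻ ω, (min (B N ω) (n:ℝ≥0∞)) ^ q ∂μ ≤ Q ^ q * ∫⁻ ω, S ω ^ q ∂μ := by
    intro N n
    set F : Ω → ℝ≥0∞ := fun ω => min (B N ω) (n:ℝ≥0∞) with hFdef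
    have mF : Measurable F := (mB N).min measurable_const
    have hFle : ∀ ω, F ω ≤ (n:ℝ≥0∞) := fun ω => min_le_right _ _
    have hufin : ∫⁻ ω, F ω ^ q ∂μ ≠ ∞ := by
      have hb : ∫⁻ ω, F ω ^ q ∂μ ≤ (n:ℝ≥0∞)^q * μ Set.univ := by
        rw [← lintegral_const]
        exact lintegral_mono fun ω => ENNReal.rpow_le_rpow (hFle ω) hq0.le
      exact ne_top_of_le_ne_top (ENNReal.mul_lt_top (ENNReal.rpow_ne_top_of_nonneg hq0.le
          (natCast_ne_top n)).lt_top (measure_lt_top μ _)).ne hb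
    -- pointwise telescoping
    have tele : ∀ ω, F ω ^ q ≤
        ∑ k ∈ Finset.range N, Q * (min (B (k+1) ω) (n:ℝ≥0∞)) ^ (q-1) * ENNReal.ofReal (g k ω) :=
      fun ω => trunc_telescope hq1 (fun k => ENNReal.ofReal (g k ω))
        (fun k => ENNReal.ofReal_ne_top) (natCast_ne_top n) N
    -- integrate and pull out the conditional expectation
    have step1 : ∫⁻ ω, F ω ^ q ∂μ ≤
        ∑ k ∈ Finset.range N, Q * ∫⁻ ω, (min (B (k+1) ω) (n:ℝ≥0∞)) ^ (q-1) *
          ENNReal.ofReal (Y k ω) ∂μ := by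
      calc ∫⁻ ω, F ω ^ q ∂μ
          ≤ ∫⁻ ω, ∑ k ∈ Finset.range N,
              Q * (min (B (k+1) ω) (n:ℝ≥0∞)) ^ (q-1) * ENNReal.ofReal (g k ω) ∂μ :=
            lintegral_mono tele
        _ = ∑ k ∈ Finset.range N, ∫⁻ ω,
              Q * (min (B (k+1) ω) (n:ℝ≥0∞)) ^ (q-1) * ENNReal.ofReal (g k ω) ∂μ := by
            refine lintegral_finset_sum _ fun k _ => ?_
            exact ((measurable_const.mul (((mB (k+1)).min measurable_const).pow
              measurable_const)).mul ((mg k).ennreal_ofReal))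
        _ = ∑ k ∈ Finset.range N, Q * ∫⁻ ω,
              (min (B (k+1) ω) (n:ℝ≥0∞)) ^ (q-1) * ENNReal.ofReal (g k ω) ∂μ := by
            refine Finset.sum_congr rfl fun k _ => ?_
            rw [← lintegral_const_mul Q (f := fun ω => (min (B (k+1) ω) (n:ℝ≥0∞)) ^ (q-1) * ENNReal.ofReal (g k ω)) ((((mB (k+1)).min measurable_const).pow
              measurable_const).mul ((mg k).ennreal_ofReal))]
            apply lintegral_congr; intro ω; ring
        _ = ∑ k ∈ Finset.range N, Q * ∫⁻ ω,
              (min (B (k+1) ω) (n:ℝ≥0∞)) ^ (q-1) * ENNReal.ofReal (Y k ω) ∂μ := by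
            refine Finset.sum_congr rfl fun k _ => ?_
            congr 1
            exact lintegral_mul_ofReal_condexp (h𝓕 (k-1)) μ (hYint k)
              (ae_of_all μ (hY0 k))
              (((mBF k).min measurable_const).pow measurable_const)
    -- bound by F^{q-1} * S and apply Hölder
    have step2 : ∑ k ∈ Finset.range N, Q * ∫⁻ ω, (min (B (k+1) ω) (n:ℝ≥0∞)) ^ (q-1) *
          ENNReal.ofReal (Y k ω) ∂μ ≤ Q * ∫⁻ ω, F ω ^ (q-1) * S ω ∂μ := by
      calc ∑ k ∈ Finset.range N, Q * ∫⁻ ω, (min (B (k+1) ω) (n:ℝ≥0∞)) ^ (q-1) *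
            ENNReal.ofReal (Y k ω) ∂μ
          ≤ ∑ k ∈ Finset.range N, Q * ∫⁻ ω, F ω ^ (q-1) * ENNReal.ofReal (Y k ω) ∂μ := by
            refine Finset.sum_le_sum fun k hk => ?_
            refine mul_le_mul_right (lintegral_mono fun ω => ?_) _
            refine mul_le_mul_left (ENNReal.rpow_le_rpow (min_le_min_right _ ?_)
              (by linarith)) _
            exact hBmono ω (Finset.mem_range.1 hk)
        _ = Q * ∑ k ∈ Finset.range N, ∫⁻ ω, F ω ^ (q-1) * ENNReal.ofReal (Y k ω) ∂μ := by
            rw [Finset.mul_sum]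
        _ = Q * ∫⁻ ω, ∑ k ∈ Finset.range N, F ω ^ (q-1) * ENNReal.ofReal (Y k ω) ∂μ := by
            rw [lintegral_finset_sum (f := fun k ω => F ω ^ (q-1) * ENNReal.ofReal (Y k ω)) _ fun k _ => (mF.pow measurable_const).mul
              ((mY k).ennreal_ofReal)]
        _ ≤ Q * ∫⁻ ω, F ω ^ (q-1) * S ω ∂μ := by
            refine mul_le_mul_right (lintegral_mono fun ω => ?_) _
            rw [← Finset.mul_sum]
            exact mul_le_mul_right (ENNReal.sum_le_tsum _) _
    have holder : ∫⁻ ω, F ω ^ (q-1) * S ω ∂μ ≤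
        (∫⁻ ω, F ω ^ q ∂μ) ^ (1/p) * (∫⁻ ω, S ω ^ q ∂μ) ^ (1/q) := by
      have mFq1 : Measurable fun ω => F ω ^ (q-1) := mF.pow measurable_const
      have h := ENNReal.lintegral_mul_le_Lp_mul_Lq μ hpq
        mFq1.aemeasurable mS.aemeasurable
      refine le_trans h ?_
      have : ∀ ω, (F ω ^ (q-1)) ^ p = F ω ^ q := by
        intro ω
        rw [← ENNReal.rpow_mul]
        congr 1
        rw [hpdef]
        rw [mul_div_assoc']
        exact mul_div_cancel_left₀ q (show q - 1 ≠ 0 by linarith)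
      simp_rw [this]
      exact le_rfl
    exact absorb_rpow hpq hufin (step1.trans (step2.trans (mul_le_mul_right
      (holder.trans le_rfl) Q)))
  -- monotone convergence
  have hAeq : ∀ ω, (∑' k : ℕ, ENNReal.ofReal (g k ω)) ^ q
      = ⨆ N : ℕ, (min (B N ω) (N:ℝ≥0∞)) ^ q := by
    intro ω
    rw [ENNReal.tsum_eq_iSup_nat, ← iSup_min_natCast (hBmono ω), iSup_rpow_eq hq0]
  calc ∫⁻ ω, (∑' k : ℕ, ENNReal.ofReal (g k ω)) ^ q ∂μ
      = ∫⁻ ω, ⨆ N : ℕ, (min (B N ω) (N:ℝ≥0∞)) ^ q ∂μ := by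
        refine lintegral_congr fun ω => hAeq ω
    _ = ⨆ N : ℕ, ∫⁻ ω, (min (B N ω) (N:ℝ≥0∞)) ^ q ∂μ := by
        refine lintegral_iSup (fun N => ((mB N).min measurable_const).pow measurable_const)
          (fun M N h ω => ENNReal.rpow_le_rpow
            (min_le_min (hBmono ω h) (Nat.cast_le.2 h)) hq0.le)
    _ ≤ Q ^ q * ∫⁻ ω, S ω ^ q ∂μ := iSup_le fun N => key N N

end Main

lemma min_add_le_min_add {a b n : ℝ≥0∞} : min (a + b) n ≤ min a n + b := by
  rcases le_total a n with h | h
  · rw [min_eq_left h]; exact min_le_left _ _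
  · rw [min_eq_right h, min_eq_right (h.trans le_self_add)]
    exact le_self_add

lemma add_rpow_le_two_rpow (x y : ℝ≥0∞) {r : ℝ} (hr : 0 ≤ r) :
    (x + y) ^ r ≤ 2 ^ r * (x ^ r + y ^ r) := by
  calc (x + y) ^ r ≤ (2 * max x y) ^ r := by
        refine ENNReal.rpow_le_rpow ?_ hr
        rw [two_mul]
        exact add_le_add (le_max_left x y) (le_max_right x y)
    _ = 2 ^ r * (max x y) ^ r := ENNReal.mul_rpow_of_nonneg _ _ hr
    _ ≤ 2 ^ r * (x ^ r + y ^ r) := by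
        refine mul_le_mul_right ?_ _
        rcases le_total x y with h | h
        · rw [max_eq_right h]; exact le_add_self
        · rw [max_eq_left h]; exact le_add_right le_rfl

section Main2
variable {Ω : Type*} [m0 : MeasurableSpace Ω] {μ : Measure Ω} [IsProbabilityMeasure μ]
  {𝓕 : ℕ → MeasurableSpace Ω}

lemma S_bound {q : ℝ} (hq : 1 < q) (h𝓕 : ∀ k, 𝓕 k ≤ m0) (hmono : Monotone 𝓕)
    (Y : ℕ → Ω → ℝ) (hY0 : ∀ k ω, 0 ≤ Y k ω) (hYint : ∀ k, Integrable (Y k) μ)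
    (hYm : ∀ k, Measurable[𝓕 k] (Y k)) :
    ∫⁻ ω, (∑' k : ℕ, ENNReal.ofReal (Y k ω)) ^ q ∂μ ≤
      (2 * (ENNReal.ofReal q * 2 ^ (q-1))) * (∫⁻ ω, ∑' k : ℕ, ENNReal.ofReal (Y k ω) ^ q ∂μ)
      + (2 * (ENNReal.ofReal q * 2 ^ (q-1))) ^ q *
          ∫⁻ ω, (∑' k : ℕ, ENNReal.ofReal ((μ[Y k|𝓕 (k - 1)]) ω)) ^ q ∂μ := by
  have hq1 : (1:ℝ) ≤ q := hq.le
  have hq0 : (0:ℝ) < q := lt_trans zero_lt_one hq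
  set Q : ℝ≥0∞ := ENNReal.ofReal q with hQ
  set D : ℝ≥0∞ := Q * 2 ^ (q-1) with hD
  set g : ℕ → Ω → ℝ := fun k => μ[Y k|𝓕 (k - 1)] with hgdef
  set A : Ω → ℝ≥0∞ := fun ω => ∑' k : ℕ, ENNReal.ofReal (g k ω) with hAdef
  set T : ℕ → Ω → ℝ≥0∞ := fun N ω => ∑ k ∈ Finset.range N, ENNReal.ofReal (Y k ω) with hTdef
  have mY : ∀ k, Measurable (Y k) := fun k => (hYm k).mono (h𝓕 k) le_rfl
  have mgF : ∀ k, Measurable[𝓕 (k-1)] (g k) := fun k => stronglyMeasurable_condExp.measurable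
  have mg : ∀ k, Measurable (g k) := fun k => (mgF k).mono (h𝓕 _) le_rfl
  have mT : ∀ N, Measurable (T N) := fun N =>
    Finset.measurable_sum _ fun k _ => (mY k).ennreal_ofReal
  have mTF : ∀ k, Measurable[𝓕 (k-1)] (T k) := by
    intro k
    refine Finset.measurable_sum _ fun j hj => ?_
    have hj' : j ≤ k - 1 := Nat.le_pred_of_lt (Finset.mem_range.1 hj)
    exact Measurable.ennreal_ofReal ((hYm j).mono (hmono hj') le_rfl)
  have mA : Measurable A := Measurable.ennreal_tsum fun k => (mg k).ennreal_ofReal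
  have hTfin : ∀ N ω, T N ω ≠ ∞ := fun N ω =>
    (ENNReal.sum_lt_top.2 fun k _ => ENNReal.ofReal_lt_top).ne
  have hTmono : ∀ ω, Monotone fun N => T N ω := fun ω => fun M N h =>
    Finset.sum_le_sum_of_subset (Finset.range_subset_range.2 h)
  set p : ℝ := q / (q - 1) with hpdef
  have hpq : p.HolderConjugate q := by
    refine Real.holderConjugate_iff.2 ⟨?_, ?_⟩
    · rw [hpdef]; exact (one_lt_div (by linarith)).2 (by linarith)
    · rw [hpdef]; field_simp; ring
  set b : ℝ≥0∞ := ∫⁻ ω, ∑' k : ℕ, ENNReal.ofReal (Y k ω) ^ q ∂μ with hb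
  set W : ℝ≥0∞ := ∫⁻ ω, A ω ^ q ∂μ with hW
  have key : ∀ N : ℕ, ∀ n : ℕ,
      ∫⁻ ω, (min (T N ω) (n:ℝ≥0∞)) ^ q ∂μ ≤ 2 * D * b + (2 * D) ^ q * W := by
    intro N n
    set F : Ω → ℝ≥0∞ := fun ω => min (T N ω) (n:ℝ≥0∞) with hFdef
    have mF : Measurable F := (mT N).min measurable_const
    have hFle : ∀ ω, F ω ≤ (n:ℝ≥0∞) := fun ω => min_le_right _ _
    have hufin : ∫⁻ ω, F ω ^ q ∂μ ≠ ∞ := by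
      have hble : ∫⁻ ω, F ω ^ q ∂μ ≤ (n:ℝ≥0∞)^q * μ Set.univ := by
        rw [← lintegral_const]
        exact lintegral_mono fun ω => ENNReal.rpow_le_rpow (hFle ω) hq0.le
      exact ne_top_of_le_ne_top (ENNReal.mul_lt_top (ENNReal.rpow_ne_top_of_nonneg hq0.le
          (natCast_ne_top n)).lt_top (measure_lt_top μ _)).ne hble
    -- pointwise telescoping with splitting
    have tele : ∀ ω, F ω ^ q ≤ ∑ k ∈ Finset.range N,
        (D * (min (T k ω) (n:ℝ≥0∞) ^ (q-1) * ENNReal.ofReal (Y k ω))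
          + D * ENNReal.ofReal (Y k ω) ^ q) := by
      intro ω
      refine (trunc_telescope hq1 (fun k => ENNReal.ofReal (Y k ω))
        (fun k => ENNReal.ofReal_ne_top) (natCast_ne_top n) N).trans ?_
      refine Finset.sum_le_sum fun k _ => ?_
      have hsplit : min (T (k+1) ω) (n:ℝ≥0∞) ^ (q-1) ≤
          2 ^ (q-1) * (min (T k ω) (n:ℝ≥0∞) ^ (q-1) + ENNReal.ofReal (Y k ω) ^ (q-1)) := by
        refine le_trans (ENNReal.rpow_le_rpow ?_ (by linarith)) (add_rpow_le_two_rpow _ _ (by linarith))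
        have : T (k+1) ω = T k ω + ENNReal.ofReal (Y k ω) := Finset.sum_range_succ _ k
        rw [this]
        exact min_add_le_min_add
      calc Q * min (T (k+1) ω) (n:ℝ≥0∞) ^ (q-1) * ENNReal.ofReal (Y k ω)
          ≤ Q * (2 ^ (q-1) * (min (T k ω) (n:ℝ≥0∞) ^ (q-1) + ENNReal.ofReal (Y k ω) ^ (q-1)))
              * ENNReal.ofReal (Y k ω) := by
            exact mul_le_mul_left (mul_le_mul_right hsplit Q) _
        _ = D * (min (T k ω) (n:ℝ≥0∞) ^ (q-1) * ENNReal.ofReal (Y k ω))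
              + D * (ENNReal.ofReal (Y k ω) ^ (q-1) * ENNReal.ofReal (Y k ω)) := by
            rw [hD]; ring
        _ = D * (min (T k ω) (n:ℝ≥0∞) ^ (q-1) * ENNReal.ofReal (Y k ω))
              + D * ENNReal.ofReal (Y k ω) ^ q := by
            rw [rpow_sub_one_mul_self hq1]
    -- integrate
    have mterm : ∀ k, Measurable fun ω => min (T k ω) (n:ℝ≥0∞) ^ (q-1) *
        ENNReal.ofReal (Y k ω) := fun k =>
      (((mT k).min measurable_const).pow measurable_const).mul (mY k).ennreal_ofReal
    have step1 : ∫⁻ ω, F ω ^ q ∂μ ≤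
        D * (∑ k ∈ Finset.range N, ∫⁻ ω, min (T k ω) (n:ℝ≥0∞) ^ (q-1) *
          ENNReal.ofReal (Y k ω) ∂μ) + D * b := by
      calc ∫⁻ ω, F ω ^ q ∂μ ≤ ∫⁻ ω, ∑ k ∈ Finset.range N,
            (D * (min (T k ω) (n:ℝ≥0∞) ^ (q-1) * ENNReal.ofReal (Y k ω))
              + D * ENNReal.ofReal (Y k ω) ^ q) ∂μ := lintegral_mono tele
        _ = ∑ k ∈ Finset.range N, ((D * ∫⁻ ω, min (T k ω) (n:ℝ≥0∞) ^ (q-1) *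
              ENNReal.ofReal (Y k ω) ∂μ) + D * ∫⁻ ω, ENNReal.ofReal (Y k ω) ^ q ∂μ) := by
            rw [lintegral_finset_sum (f := fun k ω => D * (min (T k ω) (n:ℝ≥0∞) ^ (q-1) * ENNReal.ofReal (Y k ω)) + D * ENNReal.ofReal (Y k ω) ^ q) _ fun k _ => ((measurable_const.mul (mterm k)).add
              (measurable_const.mul ((mY k).ennreal_ofReal.pow measurable_const)))]
            refine Finset.sum_congr rfl fun k _ => ?_
            rw [lintegral_add_left (f := fun ω => D * (min (T k ω) (n:ℝ≥0∞) ^ (q-1) * ENNReal.ofReal (Y k ω))) (measurable_const.mul (mterm k)),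
              lintegral_const_mul D (mterm k),
              lintegral_const_mul D ((mY k).ennreal_ofReal.pow measurable_const)]
        _ = (D * ∑ k ∈ Finset.range N, ∫⁻ ω, min (T k ω) (n:ℝ≥0∞) ^ (q-1) *
              ENNReal.ofReal (Y k ω) ∂μ)
            + D * ∑ k ∈ Finset.range N, ∫⁻ ω, ENNReal.ofReal (Y k ω) ^ q ∂μ := by
            rw [Finset.sum_add_distrib, ← Finset.mul_sum, ← Finset.mul_sum]
        _ ≤ _ := by
            refine add_le_add le_rfl (mul_le_mul_right ?_ D)
            rw [hb, lintegral_tsum fun k => ((mY k).ennreal_ofReal.pow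
              measurable_const).aemeasurable]
            exact ENNReal.sum_le_tsum _
    -- pull out conditional expectations and apply Hölder
    have step2 : ∑ k ∈ Finset.range N, ∫⁻ ω, min (T k ω) (n:ℝ≥0∞) ^ (q-1) *
          ENNReal.ofReal (Y k ω) ∂μ ≤
        (∫⁻ ω, F ω ^ q ∂μ) ^ (1/p) * W ^ (1/q) := by
      have hpull : ∀ k, ∫⁻ ω, min (T k ω) (n:ℝ≥0∞) ^ (q-1) * ENNReal.ofReal (Y k ω) ∂μ
          = ∫⁻ ω, min (T k ω) (n:ℝ≥0∞) ^ (q-1) * ENNReal.ofReal (g k ω) ∂μ := fun k =>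
        (lintegral_mul_ofReal_condexp (h𝓕 (k-1)) μ (hYint k) (ae_of_all μ (hY0 k))
          (((mTF k).min measurable_const).pow measurable_const)).symm
      calc ∑ k ∈ Finset.range N, ∫⁻ ω, min (T k ω) (n:ℝ≥0∞) ^ (q-1) *
            ENNReal.ofReal (Y k ω) ∂μ
          = ∑ k ∈ Finset.range N, ∫⁻ ω, min (T k ω) (n:ℝ≥0∞) ^ (q-1) *
            ENNReal.ofReal (g k ω) ∂μ := Finset.sum_congr rfl fun k _ => hpull k
        _ ≤ ∑ k ∈ Finset.range N, ∫⁻ ω, F ω ^ (q-1) * ENNReal.ofReal (g k ω) ∂μ := by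
            refine Finset.sum_le_sum fun k hk => lintegral_mono fun ω => ?_
            refine mul_le_mul_left (ENNReal.rpow_le_rpow (min_le_min_right _ ?_)
              (by linarith)) _
            exact hTmono ω (Finset.mem_range.1 hk).le
        _ = ∫⁻ ω, ∑ k ∈ Finset.range N, F ω ^ (q-1) * ENNReal.ofReal (g k ω) ∂μ := by
            rw [lintegral_finset_sum (f := fun k ω => F ω ^ (q-1) * ENNReal.ofReal (g k ω)) _ fun k _ => (mF.pow measurable_const).mul
              (mg k).ennreal_ofReal]
        _ ≤ ∫⁻ ω, F ω ^ (q-1) * A ω ∂μ := by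
            refine lintegral_mono fun ω => ?_
            rw [← Finset.mul_sum]
            exact mul_le_mul_right (ENNReal.sum_le_tsum _) _
        _ ≤ (∫⁻ ω, F ω ^ q ∂μ) ^ (1/p) * W ^ (1/q) := by
            have mFq1 : Measurable fun ω => F ω ^ (q-1) := mF.pow measurable_const
            have h := ENNReal.lintegral_mul_le_Lp_mul_Lq μ hpq
              mFq1.aemeasurable mA.aemeasurable
            refine le_trans (le_of_eq ?_) (h.trans (le_of_eq ?_))
            · rfl
            · congr 1
              congr 1
              refine lintegral_congr fun ω => ?_
              rw [← ENNReal.rpow_mul]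
              congr 1
              rw [hpdef]
              rw [mul_div_assoc']
              exact mul_div_cancel_left₀ q (show q - 1 ≠ 0 by linarith)
    -- combine and absorb
    set u : ℝ≥0∞ := ∫⁻ ω, F ω ^ q ∂μ with hu
    have total : u ≤ D * (u ^ (1/p) * W ^ (1/q)) + D * b := by
      refine step1.trans (add_le_add ?_ le_rfl)
      exact mul_le_mul_right step2 D
    have hcases : u ≤ 2 * (D * b) ∨ u ≤ 2 * (D * (u ^ (1/p) * W ^ (1/q))) := by
      rcases le_total (D * b) (D * (u ^ (1/p) * W ^ (1/q))) with h | h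
      · right
        refine total.trans ?_
        rw [two_mul]
        exact add_le_add le_rfl h
      · left
        refine total.trans ?_
        rw [two_mul]
        exact add_le_add h le_rfl
    rcases hcases with h | h
    · calc u ≤ 2 * (D * b) := h
        _ = 2 * D * b := by ring
        _ ≤ 2 * D * b + (2*D)^q * W := le_add_right le_rfl
    · have habs : u ≤ (2*D) ^ q * W := by
        refine absorb_rpow hpq hufin ?_
        calc u ≤ 2 * (D * (u ^ (1/p) * W ^ (1/q))) := h
          _ = (2*D) * (u ^ (1/p) * W ^ (1/q)) := by ring
      exact habs.trans (le_add_left le_rfl)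
  -- monotone convergence
  have hSeq : ∀ ω, (∑' k : ℕ, ENNReal.ofReal (Y k ω)) ^ q
      = ⨆ N : ℕ, (min (T N ω) (N:ℝ≥0∞)) ^ q := by
    intro ω
    rw [ENNReal.tsum_eq_iSup_nat, ← iSup_min_natCast (hTmono ω), iSup_rpow_eq hq0]
  calc ∫⁻ ω, (∑' k : ℕ, ENNReal.ofReal (Y k ω)) ^ q ∂μ
      = ∫⁻ ω, ⨆ N : ℕ, (min (T N ω) (N:ℝ≥0∞)) ^ q ∂μ := lintegral_congr fun ω => hSeq ω
    _ = ⨆ N : ℕ, ∫⁻ ω, (min (T N ω) (N:ℝ≥0∞)) ^ q ∂μ :=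
        lintegral_iSup (fun N => ((mT N).min measurable_const).pow measurable_const)
          (fun M N h ω => ENNReal.rpow_le_rpow
            (min_le_min (hTmono ω h) (Nat.cast_le.2 h)) hq0.le)
    _ ≤ _ := iSup_le fun N => key N N

end Main2


/-- For a one-parameter filtration `(ℱ_k)` and `q ≥ 1`, for any adapted
sequence `(Y_k)` of nonnegative random variables in `L^q`, one has, with two-sided
constants depending only on `q`:
`𝔼[(Σ_k Y_k)^q] ≃ 𝔼[Σ_k Y_k^q] + 𝔼[(Σ_k 𝔼_{k−1} Y_k)^q]` (with `𝔼_{−1} := 𝔼_0`). -/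
theorem sum_nonneg_adapted_moment_equiv :
    ∀ q : ℝ, 1 ≤ q →
      ∃ c C : ℝ≥0∞, 0 < c ∧ C ≠ ∞ ∧
        ∀ (Ω : Type*) [m0 : MeasurableSpace Ω] (μ : Measure Ω) [IsProbabilityMeasure μ]
          (𝓕 : ℕ → MeasurableSpace Ω), (∀ k, 𝓕 k ≤ m0) → Monotone 𝓕 →
          ∀ Y : ℕ → Ω → ℝ, (∀ k ω, 0 ≤ Y k ω) →
            (∀ k, MemLp (Y k) (ENNReal.ofReal q) μ) →
            (∀ k, Measurable[𝓕 k] (Y k)) →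
            c * ((∫⁻ ω, ∑' k : ℕ, ENNReal.ofReal (Y k ω) ^ q ∂μ)
                  + ∫⁻ ω, (∑' k : ℕ, ENNReal.ofReal ((μ[Y k|𝓕 (k - 1)]) ω)) ^ q ∂μ) ≤
                ∫⁻ ω, (∑' k : ℕ, ENNReal.ofReal (Y k ω)) ^ q ∂μ ∧
            ∫⁻ ω, (∑' k : ℕ, ENNReal.ofReal (Y k ω)) ^ q ∂μ ≤
              C * ((∫⁻ ω, ∑' k : ℕ, ENNReal.ofReal (Y k ω) ^ q ∂μ)
                  + ∫⁻ ω, (∑' k : ℕ, ENNReal.ofReal ((μ[Y k|𝓕 (k - 1)]) ω)) ^ q ∂μ) := by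
  intro q hq1
  rcases eq_or_lt_of_le hq1 with hq | hq
  · -- q = 1
    subst hq
    refine ⟨(2:ℝ≥0∞)⁻¹, 1, by simp, by simp, ?_⟩
    intro Ω m0 μ _ 𝓕 h𝓕 hmono Y hY0 hYq hYm
    have hYint : ∀ k, Integrable (Y k) μ := fun k =>
      (hYq k).integrable (ENNReal.one_le_ofReal.2 le_rfl)
    have mY : ∀ k, Measurable (Y k) := fun k => (hYm k).mono (h𝓕 k) le_rfl
    have mg : ∀ k, Measurable (μ[Y k|𝓕 (k-1)]) := fun k =>
      (stronglyMeasurable_condExp.mono (h𝓕 _)).measurable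
    simp only [ENNReal.rpow_one]
    set T : ℝ≥0∞ := ∫⁻ ω, ∑' k : ℕ, ENNReal.ofReal (Y k ω) ∂μ with hT
    have h1 : ∫⁻ ω, ∑' k : ℕ, ENNReal.ofReal ((μ[Y k|𝓕 (k - 1)]) ω) ∂μ = T := by
      rw [hT, lintegral_tsum fun k => ((mg k).ennreal_ofReal).aemeasurable,
        lintegral_tsum fun k => ((mY k).ennreal_ofReal).aemeasurable]
      refine tsum_congr fun k => ?_
      rw [← ofReal_integral_eq_lintegral_ofReal integrable_condExp
          (condExp_nonneg (ae_of_all μ (hY0 k))),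
        ← ofReal_integral_eq_lintegral_ofReal (hYint k) (ae_of_all μ (hY0 k)),
        integral_condExp (h𝓕 (k-1))]
    rw [h1]
    constructor
    · rw [← two_mul, ← mul_assoc, ENNReal.inv_mul_cancel two_ne_zero ENNReal.ofNat_ne_top,
        one_mul]
    · rw [one_mul]; exact le_add_self
  · -- q > 1
    set Q : ℝ≥0∞ := ENNReal.ofReal q with hQ
    have hQfin : Q ≠ ∞ := ENNReal.ofReal_ne_top
    set D : ℝ≥0∞ := Q * 2 ^ (q-1) with hD
    have hDfin : D ≠ ∞ := ENNReal.mul_ne_top hQfin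
      (ENNReal.rpow_ne_top_of_nonneg (by linarith) ENNReal.ofNat_ne_top)
    refine ⟨(1 + Q ^ q)⁻¹, 2 * D + (2 * D) ^ q, ?_, ?_, ?_⟩
    · rw [ENNReal.inv_pos]
      exact ENNReal.add_ne_top.2 ⟨ENNReal.one_ne_top,
        ENNReal.rpow_ne_top_of_nonneg (by linarith) hQfin⟩
    · exact ENNReal.add_ne_top.2 ⟨ENNReal.mul_ne_top ENNReal.ofNat_ne_top hDfin,
        ENNReal.rpow_ne_top_of_nonneg (by linarith)
          (ENNReal.mul_ne_top ENNReal.ofNat_ne_top hDfin)⟩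
    intro Ω m0 μ _ 𝓕 h𝓕 hmono Y hY0 hYq hYm
    have hYint : ∀ k, Integrable (Y k) μ := fun k =>
      (hYq k).integrable (ENNReal.one_le_ofReal.2 hq1)
    set T : ℝ≥0∞ := ∫⁻ ω, (∑' k : ℕ, ENNReal.ofReal (Y k ω)) ^ q ∂μ with hT
    set b : ℝ≥0∞ := ∫⁻ ω, ∑' k : ℕ, ENNReal.ofReal (Y k ω) ^ q ∂μ with hb
    set W : ℝ≥0∞ := ∫⁻ ω, (∑' k : ℕ, ENNReal.ofReal ((μ[Y k|𝓕 (k - 1)]) ω)) ^ q ∂μ with hW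
    have hbT : b ≤ T :=
      lintegral_mono fun ω => tsum_rpow_le_rpow_tsum hq1 fun k => ENNReal.ofReal (Y k ω)
    have hWT : W ≤ Q ^ q * T := A_bound hq h𝓕 hmono Y hY0 hYint hYm
    constructor
    · calc (1 + Q ^ q)⁻¹ * (b + W) ≤ (1 + Q ^ q)⁻¹ * (T + Q ^ q * T) :=
            mul_le_mul_right (add_le_add hbT hWT) _
        _ = (1 + Q ^ q)⁻¹ * ((1 + Q ^ q) * T) := by ring_nf
        _ = T := by
            rw [← mul_assoc, ENNReal.inv_mul_cancel (lt_of_lt_of_le zero_lt_one le_self_add).ne' (ENNReal.add_ne_top.2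
              ⟨ENNReal.one_ne_top, ENNReal.rpow_ne_top_of_nonneg (by linarith) hQfin⟩),
              one_mul]
    · calc T ≤ 2 * D * b + (2 * D) ^ q * W := S_bound hq h𝓕 hmono Y hY0 hYint hYm
        _ ≤ (2 * D + (2 * D) ^ q) * b + (2 * D + (2 * D) ^ q) * W :=
            add_le_add (mul_le_mul_left le_self_add b)
              (mul_le_mul_left le_add_self W)
        _ = (2 * D + (2 * D) ^ q) * (b + W) := by ring
end

section
/- Let p, q ∈ (1, ∞) with Hölder conjugates p', q', let (𝒰_k)_{k∈J}, (𝒱_k)_{k∈J} be families of sub-σ-algebras with 𝒰_k ⊆ 𝒱_k for each k, and let (X_k), (Y_k) be sequences of random variables. Then Σ_k 𝔼[X_k Y_k] ≤ ( 𝔼[ (Σ_k 𝔼_{𝒰_k}|X_k|^p)^{q/p} ] )^{1/q} · ( 𝔼[ (Σ_k 𝔼_{𝒰_k}|Y_k|^{p'})^{q'/p'} ] )^{1/q'}, whenever the right-hand side is finite and each X_k Y_k is integrable. -/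
open MeasureTheory ENNReal


/-- The conditional expectation of a nonnegative `ℝ≥0∞`-valued function `g` given `m`,
defined as the monotone limit of the conditional expectations of the truncations
`min g k`; this extends the usual conditional expectation to possibly non-integrable
nonnegative functions. -/
noncomputable def econdExp {Ω : Type*} [MeasurableSpace Ω] (μ : Measure Ω)
    (m : MeasurableSpace Ω) (g : Ω → ℝ≥0∞) : Ω → ℝ≥0∞ :=
  fun ω => ⨆ k : ℕ, ENNReal.ofReal ((μ[fun a => (min (g a) (k : ℝ≥0∞)).toReal|m]) ω)

/-- The norm `‖X‖_{L^q(𝒱, ℓ^p | 𝒰)} = (𝔼[(Σ_k 𝔼_{𝒰_k}|X_k|^p)^{q/p}])^{1/q}`, with the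
conditional expectations of the nonnegative functions `|X_k|^p` taken in the extended
(monotone-limit) sense. -/
noncomputable def condLqLpNorm {Ω J : Type*} [MeasurableSpace Ω] (μ : Measure Ω)
    (𝒰 : J → MeasurableSpace Ω) (p q : ℝ) (X : J → Ω → ℝ) : ℝ≥0∞ :=
  (∫⁻ ω, (∑' k : J, econdExp μ (𝒰 k) (fun a => (‖X k a‖₊ : ℝ≥0∞) ^ p) ω) ^ (q/p) ∂μ) ^ (1/q)

section aux

variable {Ω : Type*} {m : MeasurableSpace Ω} [m0 : MeasurableSpace Ω] {μ : Measure Ω}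
  [IsProbabilityMeasure μ]

lemma integrable_trunc {g : Ω → ℝ≥0∞} (hg : Measurable g) (k : ℕ) :
    Integrable (fun a => (min (g a) (k : ℝ≥0∞)).toReal) μ := by
  refine (integrable_const ((k : ℝ≥0∞)).toReal).mono' ?_ ?_
  · exact ((hg.min measurable_const).ennreal_toReal).aestronglyMeasurable
  · refine Filter.Eventually.of_forall fun a => ?_
    rw [Real.norm_eq_abs, abs_of_nonneg ENNReal.toReal_nonneg]
    exact ENNReal.toReal_mono (by simp) (min_le_right _ _)

lemma econdExp_measurable (hm : m ≤ m0) (g : Ω → ℝ≥0∞) :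
    Measurable (econdExp μ m g) := by
  refine Measurable.iSup fun k => Measurable.ennreal_ofReal ?_
  exact (stronglyMeasurable_condExp.mono hm).measurable

lemma econdExp_mono {f g : Ω → ℝ≥0∞} (hf : Measurable f) (hg : Measurable g)
    (hfg : f ≤ᵐ[μ] g) : econdExp μ m f ≤ᵐ[μ] econdExp μ m g := by
  have h : ∀ k : ℕ, (μ[fun a => (min (f a) (k : ℝ≥0∞)).toReal|m]) ≤ᵐ[μ]
      (μ[fun a => (min (g a) (k : ℝ≥0∞)).toReal|m]) := by
    intro k
    refine condExp_mono (integrable_trunc hf k) (integrable_trunc hg k) ?_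
    filter_upwards [hfg] with a ha
    exact ENNReal.toReal_mono (by simp) (min_le_min ha le_rfl)
  filter_upwards [ae_all_iff.mpr h] with ω hω
  exact iSup_mono fun k => ENNReal.ofReal_le_ofReal (hω k)

lemma econdExp_add_le {f g : Ω → ℝ≥0∞} (hf : Measurable f) (hg : Measurable g) :
    econdExp μ m (fun a => f a + g a) ≤ᵐ[μ]
      fun ω => econdExp μ m f ω + econdExp μ m g ω := by
  have h : ∀ k : ℕ, (μ[fun a => (min (f a + g a) (k : ℝ≥0∞)).toReal|m]) ≤ᵐ[μ]
      (μ[fun a => (min (f a) (k : ℝ≥0∞)).toReal|m]) +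
      (μ[fun a => (min (g a) (k : ℝ≥0∞)).toReal|m]) := by
    intro k
    have hint : Integrable (fun a => (min (f a) (k : ℝ≥0∞)).toReal +
        (min (g a) (k : ℝ≥0∞)).toReal) μ := (integrable_trunc hf k).add (integrable_trunc hg k)
    refine (condExp_mono (integrable_trunc (hf.add hg) k) hint ?_).trans
      (condExp_add (integrable_trunc hf k) (integrable_trunc hg k) m).le
    refine Filter.Eventually.of_forall fun a => ?_
    have hmin : min (f a + g a) (k : ℝ≥0∞) ≤ min (f a) k + min (g a) k := by
      rcases le_total (f a) (k : ℝ≥0∞) with h1 | h1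
      · rcases le_total (g a) (k : ℝ≥0∞) with h2 | h2
        · rw [min_eq_left h1, min_eq_left h2]; exact min_le_left _ _
        · rw [min_eq_right h2]
          exact le_add_left (min_le_right _ _)
      · rw [min_eq_right h1]
        exact le_add_right (min_le_right _ _)
    calc (min (f a + g a) (k : ℝ≥0∞)).toReal
        ≤ (min (f a) (k : ℝ≥0∞) + min (g a) (k : ℝ≥0∞)).toReal :=
          ENNReal.toReal_mono (by simp [ENNReal.add_ne_top]) hmin
      _ = _ := ENNReal.toReal_add (by simp) (by simp)
  filter_upwards [ae_all_iff.mpr h] with ω hω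
  simp only [econdExp]
  refine iSup_le fun k => ?_
  calc ENNReal.ofReal ((μ[fun a => (min (f a + g a) (k : ℝ≥0∞)).toReal|m]) ω)
      ≤ ENNReal.ofReal ((μ[fun a => (min (f a) (k : ℝ≥0∞)).toReal|m]) ω +
        (μ[fun a => (min (g a) (k : ℝ≥0∞)).toReal|m]) ω) := ENNReal.ofReal_le_ofReal (hω k)
    _ ≤ _ := by
          refine (ENNReal.ofReal_add_le).trans (add_le_add ?_ ?_)
          · exact le_iSup (fun j : ℕ => ENNReal.ofReal
              ((μ[fun a => (min (f a) (j : ℝ≥0∞)).toReal|m]) ω)) k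
          · exact le_iSup (fun j : ℕ => ENNReal.ofReal
              ((μ[fun a => (min (g a) (j : ℝ≥0∞)).toReal|m]) ω)) k

end aux

section aux2

variable {Ω : Type*} {m : MeasurableSpace Ω} [m0 : MeasurableSpace Ω] {μ : Measure Ω}
  [IsProbabilityMeasure μ]

lemma iSup_min_coe_nat (a : ℝ≥0∞) : ⨆ k : ℕ, min a (k : ℝ≥0∞) = a := by
  refine le_antisymm (iSup_le fun k => min_le_left _ _) ?_
  rcases eq_or_ne a ∞ with rfl | ha
  · calc (∞ : ℝ≥0∞) = ⨆ k : ℕ, (k : ℝ≥0∞) := (ENNReal.iSup_natCast).symm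
      _ ≤ _ := iSup_mono fun k => (min_eq_right le_top).symm.le
  · obtain ⟨k, hk⟩ := ENNReal.exists_nat_gt ha
    exact le_iSup_of_le k (min_eq_left hk.le).symm.le

lemma econdExp_const_mul_le {f : Ω → ℝ≥0∞} (hf : Measurable f) {r : ℝ} (hr : 0 ≤ r) :
    econdExp μ m (fun a => ENNReal.ofReal r * f a) ≤ᵐ[μ]
      fun ω => ENNReal.ofReal r * econdExp μ m f ω := by
  rcases eq_or_lt_of_le hr with hr0 | hr0
  · refine Filter.Eventually.of_forall fun ω => ?_
    simp only [econdExp, ← hr0, ENNReal.ofReal_zero, zero_mul]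
    refine iSup_le fun k => ?_
    have : (fun a : Ω => (min ((0:ℝ≥0∞)) ((k : ℕ) : ℝ≥0∞)).toReal) = (0 : Ω → ℝ) := by
      funext a; simp
    rw [this, condExp_zero]
    simp
  · have key : ∀ k : ℕ, ∀ᵐ ω ∂μ,
        ENNReal.ofReal ((μ[fun a => (min (ENNReal.ofReal r * f a) (k : ℝ≥0∞)).toReal|m]) ω) ≤
          ENNReal.ofReal r * econdExp μ m f ω := by
      intro k
      obtain ⟨n, hn⟩ := exists_nat_ge ((k : ℝ) / r)
      have hpt : ∀ a, (min (ENNReal.ofReal r * f a) (k : ℝ≥0∞)).toReal ≤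
          r * (min (f a) (n : ℝ≥0∞)).toReal := by
        intro a
        rcases le_total (f a) ((n : ℕ) : ℝ≥0∞) with h1 | h1
        · rw [min_eq_left h1]
          have hfin : ENNReal.ofReal r * f a ≠ ∞ :=
            ENNReal.mul_ne_top ENNReal.ofReal_ne_top (h1.trans_lt (by simp)).ne
          calc (min (ENNReal.ofReal r * f a) (k : ℝ≥0∞)).toReal
              ≤ (ENNReal.ofReal r * f a).toReal := ENNReal.toReal_mono hfin (min_le_left _ _)
            _ = r * (f a).toReal := by rw [ENNReal.toReal_mul, ENNReal.toReal_ofReal hr]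
        · rw [min_eq_right h1]
          calc (min (ENNReal.ofReal r * f a) (k : ℝ≥0∞)).toReal
              ≤ ((k : ℝ≥0∞)).toReal := ENNReal.toReal_mono (by simp) (min_le_right _ _)
            _ = (k : ℝ) := by simp
            _ ≤ r * n := by
                rw [div_le_iff₀ hr0] at hn; linarith [hn]
            _ = r * ((n : ℝ≥0∞)).toReal := by simp
      have hsm : μ[fun a => (min (ENNReal.ofReal r * f a) (k : ℝ≥0∞)).toReal|m] ≤ᵐ[μ]
          μ[fun a => r * (min (f a) (n : ℝ≥0∞)).toReal|m] := by
        refine condExp_mono (integrable_trunc (measurable_const.mul hf) k) ?_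
          (Filter.Eventually.of_forall hpt)
        exact (integrable_trunc hf n).const_mul r
      have hsmul : μ[fun a => r * (min (f a) (n : ℝ≥0∞)).toReal|m] =ᵐ[μ]
          fun ω => r * (μ[fun a => (min (f a) (n : ℝ≥0∞)).toReal|m]) ω := by
        simpa [smul_eq_mul, Pi.smul_def] using
          condExp_smul (μ := μ) (m := m) r (fun a => (min (f a) (n : ℝ≥0∞)).toReal)
      filter_upwards [hsm, hsmul] with ω h1 h2
      calc ENNReal.ofReal ((μ[fun a => (min (ENNReal.ofReal r * f a) (k : ℝ≥0∞)).toReal|m]) ω)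
          ≤ ENNReal.ofReal (r * (μ[fun a => (min (f a) (n : ℝ≥0∞)).toReal|m]) ω) :=
            ENNReal.ofReal_le_ofReal (h1.trans h2.le)
        _ = ENNReal.ofReal r *
            ENNReal.ofReal ((μ[fun a => (min (f a) (n : ℝ≥0∞)).toReal|m]) ω) :=
            ENNReal.ofReal_mul hr
        _ ≤ _ := by
            refine mul_le_mul_right ?_ _
            exact le_iSup (fun j : ℕ => ENNReal.ofReal
              ((μ[fun a => (min (f a) (j : ℝ≥0∞)).toReal|m]) ω)) n
    filter_upwards [ae_all_iff.mpr key] with ω hω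
    exact iSup_le fun k => hω k

lemma lintegral_le_lintegral_econdExp (hm : m ≤ m0) {g : Ω → ℝ≥0∞} (hg : Measurable g) :
    ∫⁻ a, g a ∂μ ≤ ∫⁻ ω, econdExp μ m g ω ∂μ := by
  haveI : SigmaFinite (μ.trim hm) := inferInstance
  have h1 : ∫⁻ a, g a ∂μ = ⨆ k : ℕ, ∫⁻ a, min (g a) (k : ℝ≥0∞) ∂μ := by
    rw [← lintegral_iSup (fun k => hg.min measurable_const)
      (fun i j hij a => min_le_min le_rfl (by exact_mod_cast Nat.cast_le.mpr hij))]
    congr 1; funext a; exact (iSup_min_coe_nat (g a)).symm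
  rw [h1]
  refine iSup_le fun k => ?_
  have h2 : ∫⁻ a, min (g a) (k : ℝ≥0∞) ∂μ =
      ∫⁻ a, ENNReal.ofReal ((min (g a) (k : ℝ≥0∞)).toReal) ∂μ := by
    refine lintegral_congr fun a => ?_
    rw [ENNReal.ofReal_toReal (by simp : min (g a) (k : ℝ≥0∞) ≠ ∞)]
  have h3 : ENNReal.ofReal (∫ a, (min (g a) (k : ℝ≥0∞)).toReal ∂μ) =
      ∫⁻ a, ENNReal.ofReal ((min (g a) (k : ℝ≥0∞)).toReal) ∂μ :=
    ofReal_integral_eq_lintegral_ofReal (integrable_trunc hg k)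
      (Filter.Eventually.of_forall fun a => ENNReal.toReal_nonneg)
  have h4 : ∫ ω, (μ[fun a => (min (g a) (k : ℝ≥0∞)).toReal|m]) ω ∂μ =
      ∫ a, (min (g a) (k : ℝ≥0∞)).toReal ∂μ := integral_condExp hm
  have h5 : ENNReal.ofReal (∫ ω, (μ[fun a => (min (g a) (k : ℝ≥0∞)).toReal|m]) ω ∂μ) =
      ∫⁻ ω, ENNReal.ofReal ((μ[fun a => (min (g a) (k : ℝ≥0∞)).toReal|m]) ω) ∂μ :=
    ofReal_integral_eq_lintegral_ofReal integrable_condExp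
      (condExp_nonneg (Filter.Eventually.of_forall fun a => ENNReal.toReal_nonneg))
  calc ∫⁻ a, min (g a) (k : ℝ≥0∞) ∂μ
      = ∫⁻ ω, ENNReal.ofReal ((μ[fun a => (min (g a) (k : ℝ≥0∞)).toReal|m]) ω) ∂μ := by
        rw [h2, ← h3, ← h4, h5]
    _ ≤ _ := by
        refine lintegral_mono fun ω => ?_
        exact le_iSup (fun j : ℕ => ENNReal.ofReal
          ((μ[fun a => (min (g a) (j : ℝ≥0∞)).toReal|m]) ω)) k

end aux2

section aux3

lemma young_pointwise {p p' : ℝ} (hp : p.HolderConjugate p') {r : ℝ} (hr : 0 < r)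
    (a b : ℝ≥0∞) :
    a * b ≤ ENNReal.ofReal (r ^ p / p) * a ^ p + ENNReal.ofReal (r ^ (-p') / p') * b ^ p' := by
  have h1 : a * b = (ENNReal.ofReal r * a) * ((ENNReal.ofReal r)⁻¹ * b) := by
    rw [mul_mul_mul_comm, ENNReal.mul_inv_cancel (ENNReal.ofReal_pos.mpr hr).ne'
      ENNReal.ofReal_ne_top, one_mul]
  rw [h1]
  refine (ENNReal.young_inequality _ _ hp).trans (le_of_eq ?_)
  congr 1
  · rw [ENNReal.mul_rpow_of_nonneg _ _ hp.nonneg, ENNReal.ofReal_rpow_of_pos hr,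
      div_eq_mul_inv, div_eq_mul_inv, ENNReal.ofReal_mul (by positivity),
      ENNReal.ofReal_inv_of_pos hp.pos]
    ring
  · rw [ENNReal.mul_rpow_of_nonneg _ _ hp.symm.nonneg, ← ENNReal.ofReal_inv_of_pos hr,
      ENNReal.ofReal_rpow_of_pos (by positivity), Real.inv_rpow hr.le,
      ← Real.rpow_neg hr.le, div_eq_mul_inv, div_eq_mul_inv,
      ENNReal.ofReal_mul (by positivity), ENNReal.ofReal_inv_of_pos hp.symm.pos]
    ring

lemma real_opt {p p' α β : ℝ} (hp : p.HolderConjugate p') (hα : 0 < α) (hβ : 0 < β) :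
    ((β / α) ^ (1 / (p * p'))) ^ p / p * α + ((β / α) ^ (1 / (p * p'))) ^ (-p') / p' * β =
      α ^ (1 / p) * β ^ (1 / p') := by
  have hd : 0 < β / α := div_pos hβ hα
  have hp0 := hp.pos
  have hp'0 := hp.symm.pos
  have h1 : ((β / α) ^ (1 / (p * p'))) ^ p = (β / α) ^ (1 / p') := by
    rw [← Real.rpow_mul hd.le]
    congr 1
    field_simp
  have h2 : ((β / α) ^ (1 / (p * p'))) ^ (-p') = (α / β) ^ (1 / p) := by
    rw [← Real.rpow_mul hd.le]
    have he : 1 / (p * p') * (-p') = -(1 / p) := by field_simp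
    rw [he, Real.rpow_neg hd.le, ← Real.inv_rpow hd.le, inv_div]
  rw [h1, h2, Real.div_rpow hβ.le hα.le, Real.div_rpow hα.le hβ.le]
  set A := α ^ (1 / p) with hA
  set A' := α ^ (1 / p') with hA'
  set B := β ^ (1 / p) with hB
  set B' := β ^ (1 / p') with hB'
  have hApos : 0 < A := Real.rpow_pos_of_pos hα _
  have hA'pos : 0 < A' := Real.rpow_pos_of_pos hα _
  have hBpos : 0 < B := Real.rpow_pos_of_pos hβ _
  have hB'pos : 0 < B' := Real.rpow_pos_of_pos hβ _
  have hαe : α = A * A' := by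
    rw [hA, hA', ← Real.rpow_add hα, one_div, one_div, hp.inv_add_inv_eq_one, Real.rpow_one]
  have hβe : β = B * B' := by
    rw [hB, hB', ← Real.rpow_add hβ, one_div, one_div, hp.inv_add_inv_eq_one, Real.rpow_one]
  have t1 : B' / A' / p * α = A * B' / p := by
    rw [hαe]; field_simp
  have t2 : A / B / p' * β = A * B' / p' := by
    rw [hβe]; field_simp
  rw [t1, t2]
  have : A * B' / p + A * B' / p' = A * B' * (1 / p + 1 / p') := by ring
  rw [this, one_div, one_div, hp.inv_add_inv_eq_one, mul_one]

end aux3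

section aux4

open Filter Topology

lemma opt_rpow {p p' : ℝ} (hp : p.HolderConjugate p') {a b e : ℝ≥0∞} (ha : a ≠ ∞) (hb : b ≠ ∞)
    (h : ∀ r : ℚ, 0 < r →
      e ≤ ENNReal.ofReal ((r : ℝ) ^ p / p) * a + ENNReal.ofReal ((r : ℝ) ^ (-p') / p') * b) :
    e ≤ a ^ (1 / p) * b ^ (1 / p') := by
  have hp0 := hp.pos
  have hp'0 := hp.symm.pos
  rcases eq_or_ne a 0 with rfl | ha0
  · -- a = 0 : show e = 0 via r → ∞
    have he0 : e ≤ 0 := by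
      have hnat : Tendsto (fun n : ℕ => ((n : ℝ) + 1)) atTop atTop :=
        tendsto_atTop_add_const_right atTop 1 tendsto_natCast_atTop_atTop
      have h2 : Tendsto (fun n : ℕ => ENNReal.ofReal (((n : ℝ) + 1) ^ (-p') / p') * b)
          atTop (𝓝 0) := by
        have h3 : Tendsto (fun n : ℕ => ((n : ℝ) + 1) ^ (-p') / p') atTop (𝓝 0) := by
          simpa using (((tendsto_rpow_neg_atTop hp'0).comp hnat).div_const p')
        have h4 := (ENNReal.continuous_ofReal.tendsto 0).comp h3
        simpa using ENNReal.Tendsto.mul_const h4 (Or.inr hb)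
      refine ge_of_tendsto' h2 fun n => ?_
      have := h ((n : ℚ) + 1) (by positivity)
      simpa using this
    simp only [le_zero_iff] at he0
    simp [he0]
  rcases eq_or_ne b 0 with rfl | hb0
  · have he0 : e ≤ 0 := by
      have hnat : Tendsto (fun n : ℕ => ((n : ℝ) + 1)) atTop atTop :=
        tendsto_atTop_add_const_right atTop 1 tendsto_natCast_atTop_atTop
      have h2 : Tendsto (fun n : ℕ => ENNReal.ofReal ((((n : ℝ) + 1)⁻¹) ^ p / p) * a)
          atTop (𝓝 0) := by
        have h3 : Tendsto (fun n : ℕ => (((n : ℝ) + 1)⁻¹) ^ p / p) atTop (𝓝 0) := by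
          have : ∀ n : ℕ, (((n : ℝ) + 1)⁻¹) ^ p = ((n : ℝ) + 1) ^ (-p) := by
            intro n
            rw [Real.inv_rpow (by positivity), ← Real.rpow_neg (by positivity)]
          simp only [this]
          simpa using (((tendsto_rpow_neg_atTop hp0).comp hnat).div_const p)
        have h4 := (ENNReal.continuous_ofReal.tendsto 0).comp h3
        simpa using ENNReal.Tendsto.mul_const h4 (Or.inr ha)
      refine ge_of_tendsto' h2 fun n => ?_
      have hq : (0 : ℚ) < ((n : ℚ) + 1)⁻¹ := by positivity
      have := h ((n : ℚ) + 1)⁻¹ hq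
      simpa using this
    simp only [le_zero_iff] at he0
    simp [he0]
  -- main case
  have hα : 0 < a.toReal := ENNReal.toReal_pos ha0 ha
  have hβ : 0 < b.toReal := ENNReal.toReal_pos hb0 hb
  set α := a.toReal
  set β := b.toReal
  set lam : ℝ := (β / α) ^ (1 / (p * p')) with hlam
  have hlam0 : 0 < lam := Real.rpow_pos_of_pos (div_pos hβ hα) _
  have hseq : ∀ n : ℕ, ∃ r : ℚ, lam < (r : ℝ) ∧ (r : ℝ) < lam + 1 / ((n : ℝ) + 1) := by
    intro n
    have : (0 : ℝ) < 1 / ((n : ℝ) + 1) := by positivity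
    exact exists_rat_btwn (by linarith)
  choose rs h1 h2 using hseq
  have hrs_pos : ∀ n, 0 < rs n := by
    intro n
    have : (0 : ℝ) < (rs n : ℝ) := hlam0.trans (h1 n)
    exact_mod_cast this
  have hlim : Tendsto (fun n : ℕ => (rs n : ℝ)) atTop (𝓝 lam) := by
    refine tendsto_of_tendsto_of_tendsto_of_le_of_le (g := fun _ : ℕ => lam)
      (h := fun n : ℕ => lam + 1 / ((n : ℝ) + 1)) tendsto_const_nhds ?_
      (fun n => (h1 n).le) (fun n => (h2 n).le)
    simpa using tendsto_const_nhds.add (tendsto_one_div_add_atTop_nhds_zero_nat (𝕜 := ℝ))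
  have hφ : Tendsto (fun n : ℕ =>
      ENNReal.ofReal ((rs n : ℝ) ^ p / p) * a + ENNReal.ofReal ((rs n : ℝ) ^ (-p') / p') * b)
      atTop (𝓝 (ENNReal.ofReal (lam ^ p / p) * a + ENNReal.ofReal (lam ^ (-p') / p') * b)) := by
    have c1 : Tendsto (fun n : ℕ => (rs n : ℝ) ^ p / p) atTop (𝓝 (lam ^ p / p)) :=
      (((Real.continuousAt_rpow_const lam p (Or.inl hlam0.ne')).tendsto).comp hlim).div_const p
    have c2 : Tendsto (fun n : ℕ => (rs n : ℝ) ^ (-p') / p') atTop (𝓝 (lam ^ (-p') / p')) :=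
      (((Real.continuousAt_rpow_const lam (-p') (Or.inl hlam0.ne')).tendsto).comp hlim).div_const p'
    exact (ENNReal.Tendsto.mul_const ((ENNReal.continuous_ofReal.tendsto _).comp c1)
        (Or.inr ha)).add
      (ENNReal.Tendsto.mul_const ((ENNReal.continuous_ofReal.tendsto _).comp c2) (Or.inr hb))
  have key : e ≤ ENNReal.ofReal (lam ^ p / p) * a + ENNReal.ofReal (lam ^ (-p') / p') * b :=
    ge_of_tendsto' hφ fun n => h (rs n) (hrs_pos n)
  have ea : a = ENNReal.ofReal α := (ENNReal.ofReal_toReal ha).symm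
  have eb : b = ENNReal.ofReal β := (ENNReal.ofReal_toReal hb).symm
  calc e ≤ ENNReal.ofReal (lam ^ p / p) * a + ENNReal.ofReal (lam ^ (-p') / p') * b := key
    _ = ENNReal.ofReal (lam ^ p / p * α + lam ^ (-p') / p' * β) := by
        rw [ea, eb, ← ENNReal.ofReal_mul (by positivity), ← ENNReal.ofReal_mul (by positivity),
          ← ENNReal.ofReal_add (by positivity) (by positivity)]
    _ = ENNReal.ofReal (α ^ (1 / p) * β ^ (1 / p')) := by rw [real_opt hp hα hβ]
    _ = a ^ (1 / p) * b ^ (1 / p') := by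
        rw [ENNReal.ofReal_mul (by positivity), ea, eb,
          ENNReal.ofReal_rpow_of_pos hα, ENNReal.ofReal_rpow_of_pos hβ]

end aux4

section aux5

variable {Ω : Type*} {m : MeasurableSpace Ω} [m0 : MeasurableSpace Ω] {μ : Measure Ω}
  [IsProbabilityMeasure μ]

lemma econdExp_mul_le {p p' : ℝ} (hp : p.HolderConjugate p')
    {F G : Ω → ℝ≥0∞} (hF : Measurable F) (hG : Measurable G)
    (hA : ∀ᵐ ω ∂μ, econdExp μ m (fun a => F a ^ p) ω ≠ ∞)
    (hB : ∀ᵐ ω ∂μ, econdExp μ m (fun a => G a ^ p') ω ≠ ∞) :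
    econdExp μ m (fun a => F a * G a) ≤ᵐ[μ]
      fun ω => (econdExp μ m (fun a => F a ^ p) ω) ^ (1 / p) *
        (econdExp μ m (fun a => G a ^ p') ω) ^ (1 / p') := by
  have hFp : Measurable fun a => F a ^ p := hF.pow_const p
  have hGp : Measurable fun a => G a ^ p' := hG.pow_const p'
  have key : ∀ r : ℚ, 0 < r → econdExp μ m (fun a => F a * G a) ≤ᵐ[μ]
      fun ω => ENNReal.ofReal ((r : ℝ) ^ p / p) * econdExp μ m (fun a => F a ^ p) ω +
        ENNReal.ofReal ((r : ℝ) ^ (-p') / p') * econdExp μ m (fun a => G a ^ p') ω := by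
    intro r hr
    have hrR : (0 : ℝ) < (r : ℝ) := by exact_mod_cast hr
    have step1 : econdExp μ m (fun a => F a * G a) ≤ᵐ[μ]
        econdExp μ m (fun a => ENNReal.ofReal ((r : ℝ) ^ p / p) * F a ^ p +
          ENNReal.ofReal ((r : ℝ) ^ (-p') / p') * G a ^ p') :=
      econdExp_mono (hF.mul hG)
        ((measurable_const.mul hFp).add (measurable_const.mul hGp))
        (Filter.Eventually.of_forall fun a => young_pointwise hp hrR (F a) (G a))
    have step2 := econdExp_add_le (μ := μ) (m := m)
      (f := fun a => ENNReal.ofReal ((r : ℝ) ^ p / p) * F a ^ p)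
      (g := fun a => ENNReal.ofReal ((r : ℝ) ^ (-p') / p') * G a ^ p')
      (measurable_const.mul hFp) (measurable_const.mul hGp)
    have step3 := econdExp_const_mul_le (μ := μ) (m := m) hFp
      (r := (r : ℝ) ^ p / p) (div_nonneg (Real.rpow_nonneg hrR.le _) hp.nonneg)
    have step4 := econdExp_const_mul_le (μ := μ) (m := m) hGp
      (r := (r : ℝ) ^ (-p') / p') (div_nonneg (Real.rpow_nonneg hrR.le _) hp.symm.nonneg)
    filter_upwards [step1, step2, step3, step4] with ω h1 h2 h3 h4
    exact h1.trans (h2.trans (add_le_add h3 h4))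
  have hall : ∀ᵐ ω ∂μ, ∀ r : ℚ, 0 < r → econdExp μ m (fun a => F a * G a) ω ≤
      ENNReal.ofReal ((r : ℝ) ^ p / p) * econdExp μ m (fun a => F a ^ p) ω +
        ENNReal.ofReal ((r : ℝ) ^ (-p') / p') * econdExp μ m (fun a => G a ^ p') ω := by
    rw [ae_all_iff]
    intro r
    by_cases hr : 0 < r
    · filter_upwards [key r hr] with ω hω _
      exact hω
    · exact Filter.Eventually.of_forall fun ω hr' => absurd hr' hr
  filter_upwards [hall, hA, hB] with ω hω hAω hBω
  exact opt_rpow hp hAω hBω fun r hr => hω r hr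

end aux5


/-- Hölder inequality for the norms `L^q(𝒱, ℓ^p | 𝒰)`: if `𝒰_k ⊆ 𝒱_k`
and `p, q ∈ (1,∞)` with conjugates `p', q'`, then
`Σ_k 𝔼[X_k Y_k] ≤ ‖X‖_{L^q(𝒱,ℓ^p|𝒰)} · ‖Y‖_{L^{q'}(𝒱,ℓ^{p'}|𝒰)}`
whenever the right-hand side is finite and each `X_k Y_k` is integrable. -/
theorem pairing_le_condLqLp_mul_dual {Ω J : Type*} [m0 : MeasurableSpace Ω]
    (μ : Measure Ω) [IsProbabilityMeasure μ]
    (𝒰 𝒱 : J → MeasurableSpace Ω) (h𝒰𝒱 : ∀ k, 𝒰 k ≤ 𝒱 k) (h𝒱 : ∀ k, 𝒱 k ≤ m0)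
    (p q p' q' : ℝ) (hp : p.HolderConjugate p') (hq : q.HolderConjugate q')
    (X Y : J → Ω → ℝ) (hXm : ∀ k, Measurable (X k)) (hYm : ∀ k, Measurable (Y k))
    (hint : ∀ k, Integrable (fun ω => X k ω * Y k ω) μ)
    (hXfin : condLqLpNorm μ 𝒰 p q X ≠ ∞) (hYfin : condLqLpNorm μ 𝒰 p' q' Y ≠ ∞) :
    ∑' k : J, ∫ ω, X k ω * Y k ω ∂μ ≤
      (condLqLpNorm μ 𝒰 p q X * condLqLpNorm μ 𝒰 p' q' Y).toReal := by
  classical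
  have hm : ∀ k, 𝒰 k ≤ m0 := fun k => (h𝒰𝒱 k).trans (h𝒱 k)
  set f : J → Ω → ℝ≥0∞ :=
    fun k => econdExp μ (𝒰 k) (fun a => (‖X k a‖₊ : ℝ≥0∞) ^ p) with hfdef
  set g : J → Ω → ℝ≥0∞ :=
    fun k => econdExp μ (𝒰 k) (fun a => (‖Y k a‖₊ : ℝ≥0∞) ^ p') with hgdef
  have hNx : condLqLpNorm μ 𝒰 p q X =
      (∫⁻ ω, (∑' k : J, f k ω) ^ (q/p) ∂μ) ^ (1/q) := rfl
  have hNy : condLqLpNorm μ 𝒰 p' q' Y =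
      (∫⁻ ω, (∑' k : J, g k ω) ^ (q'/p') ∂μ) ^ (1/q') := rfl
  have hfm : ∀ k, Measurable (f k) := fun k => econdExp_measurable (hm k) _
  have hgm : ∀ k, Measurable (g k) := fun k => econdExp_measurable (hm k) _
  have hqp_pos : 0 < q / p := div_pos hq.pos hp.pos
  have hqp'_pos : 0 < q' / p' := div_pos hq.symm.pos hp.symm.pos
  -- the inner lintegrals are finite
  have hIx : ∫⁻ ω, (∑' k : J, f k ω) ^ (q/p) ∂μ ≠ ∞ := by
    intro h
    rw [hNx, h, ENNReal.top_rpow_of_pos hq.one_div_pos] at hXfin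
    exact hXfin rfl
  have hIy : ∫⁻ ω, (∑' k : J, g k ω) ^ (q'/p') ∂μ ≠ ∞ := by
    intro h
    rw [hNy, h, ENNReal.top_rpow_of_pos hq.symm.one_div_pos] at hYfin
    exact hYfin rfl
  -- each f k, g k is a.e. finite
  have hffin : ∀ k, ∀ᵐ ω ∂μ, f k ω ≠ ∞ := by
    intro k
    have h1 : ∫⁻ ω, (f k ω) ^ (q/p) ∂μ ≠ ∞ :=
      ne_top_of_le_ne_top hIx (lintegral_mono fun ω =>
        ENNReal.rpow_le_rpow (ENNReal.le_tsum k) hqp_pos.le)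
    filter_upwards [ae_lt_top ((hfm k).pow_const (q/p)) h1] with ω hω hcon
    rw [hcon, ENNReal.top_rpow_of_pos hqp_pos] at hω
    exact absurd hω (lt_irrefl _)
  have hgfin : ∀ k, ∀ᵐ ω ∂μ, g k ω ≠ ∞ := by
    intro k
    have h1 : ∫⁻ ω, (g k ω) ^ (q'/p') ∂μ ≠ ∞ :=
      ne_top_of_le_ne_top hIy (lintegral_mono fun ω =>
        ENNReal.rpow_le_rpow (ENNReal.le_tsum k) hqp'_pos.le)
    filter_upwards [ae_lt_top ((hgm k).pow_const (q'/p')) h1] with ω hω hcon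
    rw [hcon, ENNReal.top_rpow_of_pos hqp'_pos] at hω
    exact absurd hω (lt_irrefl _)
  -- the core inequality
  have key : ∑' k : J, ∫⁻ a, (‖X k a‖₊ : ℝ≥0∞) * (‖Y k a‖₊ : ℝ≥0∞) ∂μ ≤
      condLqLpNorm μ 𝒰 p q X * condLqLpNorm μ 𝒰 p' q' Y := by
    rw [ENNReal.tsum_eq_iSup_sum]
    refine iSup_le fun s => ?_
    have hae : ∀ k, econdExp μ (𝒰 k)
        (fun a => (‖X k a‖₊ : ℝ≥0∞) * (‖Y k a‖₊ : ℝ≥0∞)) ≤ᵐ[μ]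
        fun ω => (f k ω) ^ (1/p) * (g k ω) ^ (1/p') := fun k =>
      econdExp_mul_le hp ((hXm k).nnnorm.coe_nnreal_ennreal)
        ((hYm k).nnnorm.coe_nnreal_ennreal) (hffin k) (hgfin k)
    have hsum_meas_f : Measurable fun ω => ∑ k ∈ s, f k ω :=
      Finset.measurable_sum s fun k _ => hfm k
    have hsum_meas_g : Measurable fun ω => ∑ k ∈ s, g k ω :=
      Finset.measurable_sum s fun k _ => hgm k
    calc ∑ k ∈ s, ∫⁻ a, (‖X k a‖₊ : ℝ≥0∞) * (‖Y k a‖₊ : ℝ≥0∞) ∂μ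
        ≤ ∑ k ∈ s, ∫⁻ ω, (f k ω) ^ (1/p) * (g k ω) ^ (1/p') ∂μ := by
          refine Finset.sum_le_sum fun k _ => ?_
          refine (lintegral_le_lintegral_econdExp (hm k)
            (((hXm k).nnnorm.coe_nnreal_ennreal).mul
              ((hYm k).nnnorm.coe_nnreal_ennreal))).trans ?_
          exact lintegral_mono_ae (hae k)
      _ = ∫⁻ ω, ∑ k ∈ s, (f k ω) ^ (1/p) * (g k ω) ^ (1/p') ∂μ :=
          (lintegral_finset_sum s fun k _ =>
            ((hfm k).pow_const (1/p)).mul ((hgm k).pow_const (1/p'))).symm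
      _ ≤ ∫⁻ ω, (∑ k ∈ s, f k ω) ^ (1/p) * (∑ k ∈ s, g k ω) ^ (1/p') ∂μ := by
          refine lintegral_mono fun ω => ?_
          have h := ENNReal.inner_le_Lp_mul_Lq s (fun k => (f k ω) ^ (1/p))
            (fun k => (g k ω) ^ (1/p')) hp
          have e1 : ∀ k, ((f k ω) ^ (1/p)) ^ p = f k ω := fun k => by
            rw [← ENNReal.rpow_mul, one_div, inv_mul_cancel₀ hp.ne_zero, ENNReal.rpow_one]
          have e2 : ∀ k, ((g k ω) ^ (1/p')) ^ p' = g k ω := fun k => by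
            rw [← ENNReal.rpow_mul, one_div, inv_mul_cancel₀ hp.symm.ne_zero,
              ENNReal.rpow_one]
          simpa only [e1, e2] using h
      _ ≤ (∫⁻ ω, ((∑ k ∈ s, f k ω) ^ (1/p)) ^ q ∂μ) ^ (1/q) *
          (∫⁻ ω, ((∑ k ∈ s, g k ω) ^ (1/p')) ^ q' ∂μ) ^ (1/q') := by
          have h := ENNReal.lintegral_mul_le_Lp_mul_Lq μ hq
            (f := fun ω => (∑ k ∈ s, f k ω) ^ (1/p))
            (g := fun ω => (∑ k ∈ s, g k ω) ^ (1/p'))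
            (hsum_meas_f.pow_const (1/p)).aemeasurable
            (hsum_meas_g.pow_const (1/p')).aemeasurable
          simpa only [Pi.mul_apply] using h
      _ ≤ condLqLpNorm μ 𝒰 p q X * condLqLpNorm μ 𝒰 p' q' Y := by
          refine mul_le_mul' ?_ ?_
          · rw [hNx]
            refine ENNReal.rpow_le_rpow (lintegral_mono fun ω => ?_) hq.one_div_nonneg
            rw [← ENNReal.rpow_mul]
            have he : 1/p * q = q/p := by ring
            rw [he]
            exact ENNReal.rpow_le_rpow (ENNReal.sum_le_tsum s) hqp_pos.le
          · rw [hNy]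
            refine ENNReal.rpow_le_rpow (lintegral_mono fun ω => ?_) hq.symm.one_div_nonneg
            rw [← ENNReal.rpow_mul]
            have he : 1/p' * q' = q'/p' := by ring
            rw [he]
            exact ENNReal.rpow_le_rpow (ENNReal.sum_le_tsum s) hqp'_pos.le
  -- pass to real numbers
  have hNxNy : condLqLpNorm μ 𝒰 p q X * condLqLpNorm μ 𝒰 p' q' Y ≠ ∞ :=
    ENNReal.mul_ne_top hXfin hYfin
  have htsum_fin : ∑' k : J, ∫⁻ a, (‖X k a‖₊ : ℝ≥0∞) * (‖Y k a‖₊ : ℝ≥0∞) ∂μ ≠ ∞ :=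
    ne_top_of_le_ne_top hNxNy key
  have hik : ∀ k, ∫⁻ a, (‖X k a‖₊ : ℝ≥0∞) * (‖Y k a‖₊ : ℝ≥0∞) ∂μ ≠ ∞ := fun k =>
    ne_top_of_le_ne_top htsum_fin (ENNReal.le_tsum k)
  have hb : ∀ k, ‖∫ a, X k a * Y k a ∂μ‖ ≤
      (∫⁻ a, (‖X k a‖₊ : ℝ≥0∞) * (‖Y k a‖₊ : ℝ≥0∞) ∂μ).toReal := by
    intro k
    have h := norm_integral_le_lintegral_norm (μ := μ) (fun a => X k a * Y k a)
    have he : ∫⁻ a, ENNReal.ofReal ‖X k a * Y k a‖ ∂μ =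
        ∫⁻ a, (‖X k a‖₊ : ℝ≥0∞) * (‖Y k a‖₊ : ℝ≥0∞) ∂μ := by
      refine lintegral_congr fun a => ?_
      rw [ofReal_norm, enorm_mul]; rfl
    rwa [he] at h
  have hsb : Summable (fun k : J =>
      (∫⁻ a, (‖X k a‖₊ : ℝ≥0∞) * (‖Y k a‖₊ : ℝ≥0∞) ∂μ).toReal) :=
    ENNReal.summable_toReal htsum_fin
  have hsa : Summable fun k : J => ∫ a, X k a * Y k a ∂μ := by
    refine Summable.of_norm ?_
    exact Summable.of_nonneg_of_le (fun k => norm_nonneg _) hb hsb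
  calc ∑' k : J, ∫ a, X k a * Y k a ∂μ
      ≤ ∑' k : J, (∫⁻ a, (‖X k a‖₊ : ℝ≥0∞) * (‖Y k a‖₊ : ℝ≥0∞) ∂μ).toReal :=
        Summable.tsum_le_tsum (fun k => (le_abs_self _).trans
          ((Real.norm_eq_abs _ ▸ hb k))) hsa hsb
    _ = (∑' k : J, ∫⁻ a, (‖X k a‖₊ : ℝ≥0∞) * (‖Y k a‖₊ : ℝ≥0∞) ∂μ).toReal :=
        (ENNReal.tsum_toReal_eq hik).symm
    _ ≤ (condLqLpNorm μ 𝒰 p q X * condLqLpNorm μ 𝒰 p' q' Y).toReal :=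
        ENNReal.toReal_mono hNxNy key
end

section
/- Let (ℱ_{i,j})_{i,j≥0} be a two-parameter filtration satisfying the (F4) condition, fix i ≥ 1, and let (C_j)_{j≥0} be a sequence of random variables in L². Then 𝔼[(Σ_j 𝔼_{∞,j−1} C_j²)^{1/2}] ≥ 𝔼[(Σ_j 𝔼_{∞,j−1} (𝔼_{i−1,∞} C_j)²)^{1/2}], where 𝔼_{∞,−1} := 𝔼_{∞,0}. -/
open MeasureTheory ENNReal

section Helpers

open Filter

variable {Ω : Type*} {m0 : MeasurableSpace Ω} {μ : Measure Ω}

/-- If `u n → v` in `L¹` and `u n =ᵐ w` eventually, then `v =ᵐ w`. -/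
lemma helper_ae_eq_of_tendsto {u : ℕ → Ω → ℝ} {v w : Ω → ℝ}
    (hv : AEStronglyMeasurable v μ) (hw : AEStronglyMeasurable w μ)
    (h : Tendsto (fun n => eLpNorm (u n - v) 1 μ) atTop (nhds 0))
    (hc : ∀ᶠ n in atTop, u n =ᵐ[μ] w) : v =ᵐ[μ] w := by
  obtain ⟨N, hN⟩ := eventually_atTop.1 hc
  have h2 : Tendsto (fun n => eLpNorm (u n - v) 1 μ) atTop (nhds (eLpNorm (w - v) 1 μ)) := by
    refine tendsto_atTop_of_eventually_const (i₀ := N) fun n hn => ?_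
    exact eLpNorm_congr_ae ((hN n hn).sub EventuallyEq.rfl)
  have h3 : eLpNorm (w - v) 1 μ = 0 := tendsto_nhds_unique h2 h
  have h4 := (eLpNorm_eq_zero_iff (hw.sub hv) one_ne_zero).1 h3
  filter_upwards [h4] with ω hω
  have : w ω - v ω = 0 := hω
  linarith

variable {𝓕 : ℕ → ℕ → MeasurableSpace Ω}

/-- The row filtration `m ↦ 𝓕 I m`. -/
def IsF4Filtration.rowFiltration (hF4 : IsF4Filtration μ 𝓕) (I : ℕ) :
    Filtration ℕ m0 where
  seq := fun m => 𝓕 I m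
  mono' := monotone_nat_of_le_succ fun m => hF4.mono_right I m
  le' := fun m => hF4.le I m

/-- The column filtration `k ↦ 𝓕 k J`. -/
def IsF4Filtration.colFiltration (hF4 : IsF4Filtration μ 𝓕) (J : ℕ) :
    Filtration ℕ m0 where
  seq := fun k => 𝓕 k J
  mono' := monotone_nat_of_le_succ fun k => hF4.mono_left k J
  le' := fun k => hF4.le k J

lemma comm_row_col [IsProbabilityMeasure μ] (hF4 : IsF4Filtration μ 𝓕) (I J : ℕ)
    {f : Ω → ℝ} (hf : Integrable f μ) :
    μ[μ[f|rowSup 𝓕 I]|colSup 𝓕 J] =ᵐ[μ] μ[f|𝓕 I J] := by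
  have hG : rowSup 𝓕 I ≤ m0 := iSup_le fun m => hF4.le I m
  have hH : colSup 𝓕 J ≤ m0 := iSup_le fun k => hF4.le k J
  set g := μ[f|rowSup 𝓕 I] with hg
  have hrow : (⨆ n, hF4.rowFiltration I n) = rowSup 𝓕 I := rfl
  have hcol : (⨆ n, hF4.colFiltration J n) = colSup 𝓕 J := rfl
  have step1 : ∀ k, μ[g|𝓕 k J] =ᵐ[μ] μ[f|𝓕 (min k I) J] := by
    intro k
    refine helper_ae_eq_of_tendsto (u := fun m => μ[μ[f|𝓕 I m]|𝓕 k J])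
      (stronglyMeasurable_condExp.mono (hF4.le k J)).aestronglyMeasurable
      (stronglyMeasurable_condExp.mono (hF4.le _ J)).aestronglyMeasurable ?_ ?_
    · have hLevy : Tendsto (fun m => eLpNorm (μ[f|hF4.rowFiltration I m] - g) 1 μ)
          atTop (nhds 0) := by
        have := tendsto_eLpNorm_condExp (μ := μ) (ℱ := hF4.rowFiltration I) f
        rwa [hrow, ← hg] at this
      refine tendsto_of_tendsto_of_tendsto_of_le_of_le tendsto_const_nhds hLevy
        (fun m => zero_le) fun m => ?_
      calc eLpNorm (μ[μ[f|𝓕 I m]|𝓕 k J] - μ[g|𝓕 k J]) 1 μ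
          = eLpNorm (μ[μ[f|𝓕 I m] - g|𝓕 k J]) 1 μ :=
            (eLpNorm_congr_ae (condExp_sub integrable_condExp integrable_condExp _)).symm
        _ ≤ eLpNorm (μ[f|𝓕 I m] - g) 1 μ := eLpNorm_one_condExp_le_eLpNorm _
    · refine eventually_atTop.2 ⟨J, fun m hm => ?_⟩
      have h5 := hF4.f4 k J I m f hf
      rwa [min_eq_left hm] at h5
  refine helper_ae_eq_of_tendsto (u := fun k => μ[g|𝓕 k J])
    (stronglyMeasurable_condExp.mono hH).aestronglyMeasurable
    (stronglyMeasurable_condExp.mono (hF4.le I J)).aestronglyMeasurable ?_ ?_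
  · have := tendsto_eLpNorm_condExp (μ := μ) (ℱ := hF4.colFiltration J) g
    rwa [hcol] at this
  · refine eventually_atTop.2 ⟨I, fun k hk => ?_⟩
    have h5 := step1 k
    rwa [min_eq_right hk] at h5

lemma comm_col_row [IsProbabilityMeasure μ] (hF4 : IsF4Filtration μ 𝓕) (I J : ℕ)
    {f : Ω → ℝ} (hf : Integrable f μ) :
    μ[μ[f|colSup 𝓕 J]|rowSup 𝓕 I] =ᵐ[μ] μ[f|𝓕 I J] := by
  have hG : rowSup 𝓕 I ≤ m0 := iSup_le fun m => hF4.le I m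
  have hH : colSup 𝓕 J ≤ m0 := iSup_le fun k => hF4.le k J
  set g := μ[f|colSup 𝓕 J] with hg
  have hrow : (⨆ n, hF4.rowFiltration I n) = rowSup 𝓕 I := rfl
  have hcol : (⨆ n, hF4.colFiltration J n) = colSup 𝓕 J := rfl
  have step1 : ∀ m, μ[g|𝓕 I m] =ᵐ[μ] μ[f|𝓕 I (min m J)] := by
    intro m
    refine helper_ae_eq_of_tendsto (u := fun k => μ[μ[f|𝓕 k J]|𝓕 I m])
      (stronglyMeasurable_condExp.mono (hF4.le I m)).aestronglyMeasurable
      (stronglyMeasurable_condExp.mono (hF4.le I _)).aestronglyMeasurable ?_ ?_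
    · have hLevy : Tendsto (fun k => eLpNorm (μ[f|hF4.colFiltration J k] - g) 1 μ)
          atTop (nhds 0) := by
        have := tendsto_eLpNorm_condExp (μ := μ) (ℱ := hF4.colFiltration J) f
        rwa [hcol, ← hg] at this
      refine tendsto_of_tendsto_of_tendsto_of_le_of_le tendsto_const_nhds hLevy
        (fun k => zero_le) fun k => ?_
      calc eLpNorm (μ[μ[f|𝓕 k J]|𝓕 I m] - μ[g|𝓕 I m]) 1 μ
          = eLpNorm (μ[μ[f|𝓕 k J] - g|𝓕 I m]) 1 μ :=
            (eLpNorm_congr_ae (condExp_sub integrable_condExp integrable_condExp _)).symm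
        _ ≤ eLpNorm (μ[f|𝓕 k J] - g) 1 μ := eLpNorm_one_condExp_le_eLpNorm _
    · refine eventually_atTop.2 ⟨I, fun k hk => ?_⟩
      have h5 := hF4.f4 I m k J f hf
      rwa [min_eq_left hk] at h5
  refine helper_ae_eq_of_tendsto (u := fun m => μ[g|𝓕 I m])
    (stronglyMeasurable_condExp.mono hG).aestronglyMeasurable
    (stronglyMeasurable_condExp.mono (hF4.le I J)).aestronglyMeasurable ?_ ?_
  · have := tendsto_eLpNorm_condExp (μ := μ) (ℱ := hF4.rowFiltration I) g
    rwa [hrow] at this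
  · refine eventually_atTop.2 ⟨J, fun m hm => ?_⟩
    have h5 := step1 m
    rwa [min_eq_right hm] at h5

end Helpers

section Helpers2

variable {Ω : Type*} {m0 : MeasurableSpace Ω} {μ : MeasureTheory.Measure Ω}

open MeasureTheory Filter

/-- The conditional expectation of an `L²` function is in `L²`. -/
lemma memℒp_condexp_two [IsFiniteMeasure μ] {m : MeasurableSpace Ω} (hm : m ≤ m0)
    {f : Ω → ℝ} (hf : MemLp f 2 μ) : MemLp (μ[f|m]) 2 μ := by
  have h1 : Integrable (ε := ℝ) (condExpL2 ℝ ℝ hm (hf.toLp f)) μ :=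
    integrable_condExpL2_of_isFiniteMeasure hm
  have h2 := aestronglyMeasurable_condExpL2 (𝕜 := ℝ) (E := ℝ) hm (hf.toLp f)
  haveI : SigmaFinite (μ.trim hm) := by infer_instance
  have h3 := ae_eq_condExp_of_forall_setIntegral_eq hm
    (hf.integrable one_le_two) (fun s _ _ => h1.restrict)
    (fun s hs hμs => (integral_condExpL2_eq hm (hf.toLp f) hs hμs.ne).trans
      (integral_congr_ae (ae_restrict_of_ae hf.coeFn_toLp))) h2
  exact (Lp.memLp _).ae_eq h3

lemma integrable_mul_of_memℒp_two {f g : Ω → ℝ} (hf : MemLp f 2 μ) (hg : MemLp g 2 μ) :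
    Integrable (fun ω => f ω * g ω) μ := by
  have hint : Integrable (fun ω => (1/2 : ℝ) * (f ω ^ 2 + g ω ^ 2)) μ :=
    (hf.integrable_sq.add hg.integrable_sq).const_mul _
  refine hint.mono' (hf.aestronglyMeasurable.mul hg.aestronglyMeasurable) ?_
  filter_upwards with ω
  rw [Real.norm_eq_abs, abs_mul]
  nlinarith [sq_nonneg (|f ω| - |g ω|), sq_abs (f ω), sq_abs (g ω), abs_nonneg (f ω),
    abs_nonneg (g ω)]

lemma memℒp_sqrt_two {X : Ω → ℝ} (hXint : Integrable X μ) :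
    MemLp (fun ω => Real.sqrt (X ω)) 2 μ := by
  have hXm : AEStronglyMeasurable X μ := hXint.aestronglyMeasurable
  have hm : AEStronglyMeasurable (fun ω => Real.sqrt (X ω)) μ :=
    Real.continuous_sqrt.comp_aestronglyMeasurable hXm
  rw [memLp_two_iff_integrable_sq hm]
  have hmeas : AEStronglyMeasurable (fun ω => Real.sqrt (X ω) ^ 2) μ := by
    simpa [pow_two, Pi.mul_def] using hm.mul hm
  refine hXint.abs.mono' hmeas ?_
  filter_upwards with ω
  rcases le_or_gt 0 (X ω) with h | h
  · rw [Real.sq_sqrt h, Real.norm_eq_abs]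
  · rw [Real.sqrt_eq_zero_of_nonpos h.le]
    simpa using abs_nonneg (X ω)

lemma real_CS_aux {a b x : ℝ} (ha : 0 ≤ a) (hb : 0 ≤ b)
    (h : ∀ q : ℚ, 0 < q → 2 * x ≤ (q : ℝ) ^ 2 * a + ((q : ℝ)⁻¹) ^ 2 * b) :
    x ≤ Real.sqrt a * Real.sqrt b := by
  obtain ⟨sa, hsa0, hsaa, hsadef⟩ : ∃ sa, 0 ≤ sa ∧ sa ^ 2 = a ∧ Real.sqrt a = sa :=
    ⟨Real.sqrt a, Real.sqrt_nonneg a, Real.sq_sqrt ha, rfl⟩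
  obtain ⟨sb, hsb0, hsbb, hsbdef⟩ : ∃ sb, 0 ≤ sb ∧ sb ^ 2 = b ∧ Real.sqrt b = sb :=
    ⟨Real.sqrt b, Real.sqrt_nonneg b, Real.sq_sqrt hb, rfl⟩
  rw [hsadef, hsbdef]
  have main : ∀ ε : ℝ, 0 < ε → x ≤ (sa + ε) * (sb + ε) := by
    intro ε hε
    obtain ⟨u, hu⟩ : ∃ u, u = sa + ε := ⟨_, rfl⟩
    obtain ⟨v, hv⟩ : ∃ v, v = sb + ε := ⟨_, rfl⟩
    rw [← hu, ← hv]
    have hu0 : 0 < u := by rw [hu]; linarith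
    have hv0 : 0 < v := by rw [hv]; linarith
    have hau : a ≤ u ^ 2 := by rw [hu]; nlinarith
    have hbv : b ≤ v ^ 2 := by rw [hv]; nlinarith
    obtain ⟨t, ht0, ht2⟩ : ∃ t, 0 < t ∧ t ^ 2 = v / u :=
      ⟨Real.sqrt (v / u), Real.sqrt_pos.2 (by positivity), Real.sq_sqrt (by positivity)⟩
    by_contra hcon
    push_neg at hcon
    obtain ⟨g, hgdef⟩ : ∃ g, g = 2 * x - 2 * (u * v) := ⟨_, rfl⟩
    have hg : 0 < g := by rw [hgdef]; nlinarith
    obtain ⟨δ, hδdef⟩ : ∃ δ, δ = min 1 (g / ((2 * t + 1) * u ^ 2 + 1)) := ⟨_, rfl⟩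
    have hδ0 : 0 < δ := by rw [hδdef]; exact lt_min one_pos (by positivity)
    have hδ1 : δ ≤ 1 := by rw [hδdef]; exact min_le_left _ _
    have hδg : δ * ((2 * t + 1) * u ^ 2 + 1) ≤ g := by
      have h1 : δ ≤ g / ((2 * t + 1) * u ^ 2 + 1) := by rw [hδdef]; exact min_le_right _ _
      calc δ * ((2 * t + 1) * u ^ 2 + 1)
          ≤ (g / ((2 * t + 1) * u ^ 2 + 1)) * ((2 * t + 1) * u ^ 2 + 1) :=
            mul_le_mul_of_nonneg_right h1 (by positivity)
        _ = g := div_mul_cancel₀ _ (by positivity)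
    obtain ⟨q, hq1, hq2⟩ := exists_rat_btwn (lt_add_of_pos_right t hδ0)
    have hq0R : (0 : ℝ) < q := lt_trans ht0 hq1
    have hq0 : (0 : ℚ) < q := by exact_mod_cast hq0R
    have hkey := h q hq0
    have hqa : (q : ℝ) ^ 2 ≤ (t + δ) ^ 2 := by nlinarith [hq1.le, hq2.le, ht0.le, hδ0.le]
    have h1 : (q : ℝ) ^ 2 * a ≤ (t + δ) ^ 2 * u ^ 2 :=
      calc (q : ℝ) ^ 2 * a ≤ (t + δ) ^ 2 * a := mul_le_mul_of_nonneg_right hqa ha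
        _ ≤ (t + δ) ^ 2 * u ^ 2 := mul_le_mul_of_nonneg_left hau (by positivity)
    have h2 : ((q : ℝ)⁻¹) ^ 2 * b ≤ (t ^ 2)⁻¹ * v ^ 2 := by
      have hinvle : (q : ℝ)⁻¹ ≤ t⁻¹ := inv_anti₀ ht0 hq1.le
      have h3 : ((q : ℝ)⁻¹) ^ 2 ≤ (t⁻¹) ^ 2 := pow_le_pow_left₀ (by positivity) hinvle 2
      calc ((q : ℝ)⁻¹) ^ 2 * b ≤ (t⁻¹) ^ 2 * b := mul_le_mul_of_nonneg_right h3 hb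
        _ = (t ^ 2)⁻¹ * b := by rw [← inv_pow]
        _ ≤ (t ^ 2)⁻¹ * v ^ 2 := mul_le_mul_of_nonneg_left hbv (by positivity)
    have ht2u : t ^ 2 * u = v := by
      rw [ht2]; field_simp
    have ht2v : (t ^ 2)⁻¹ * v ^ 2 = u * v := by
      rw [ht2]; field_simp
    have hfin : (t + δ) ^ 2 * u ^ 2 ≤ u * v + δ * (2 * t + 1) * u ^ 2 := by
      have e1 : (t + δ) ^ 2 * u ^ 2 = t ^ 2 * u * u + δ * (2 * t + δ) * u ^ 2 := by ring
      rw [e1, ht2u]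
      have h5 : 2 * t + δ ≤ 2 * t + 1 := by linarith
      have h6 : δ * (2 * t + δ) ≤ δ * (2 * t + 1) := mul_le_mul_of_nonneg_left h5 hδ0.le
      have h7 : δ * (2 * t + δ) * u ^ 2 ≤ δ * (2 * t + 1) * u ^ 2 :=
        mul_le_mul_of_nonneg_right h6 (sq_nonneg u)
      linarith
    have hexpand : δ * ((2 * t + 1) * u ^ 2 + 1) = δ * (2 * t + 1) * u ^ 2 + δ := by ring
    rw [hexpand, hgdef] at hδg
    linarith [hkey, h1, h2, hfin, ht2v, hδ0]
  by_contra hcon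
  push_neg at hcon
  obtain ⟨d, hd⟩ : ∃ d, d = x - sa * sb := ⟨_, rfl⟩
  have hd0 : 0 < d := by rw [hd]; linarith
  obtain ⟨ε, hεdef⟩ : ∃ ε, ε = min 1 (d / (sa + sb + 2)) := ⟨_, rfl⟩
  have hε0 : 0 < ε := by rw [hεdef]; exact lt_min one_pos (by positivity)
  have hε1 : ε ≤ 1 := by rw [hεdef]; exact min_le_left _ _
  have hεd : ε * (sa + sb + 2) ≤ d := by
    have h1 : ε ≤ d / (sa + sb + 2) := by rw [hεdef]; exact min_le_right _ _
    calc ε * (sa + sb + 2) ≤ (d / (sa + sb + 2)) * (sa + sb + 2) :=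
          mul_le_mul_of_nonneg_right h1 (by positivity)
      _ = d := div_mul_cancel₀ _ (by positivity)
  have h2 := main ε hε0
  rw [hd] at hεd
  have hε2 : ε * ε ≤ ε := by nlinarith
  nlinarith [h2, hεd, hε2, hε0, hsa0, hsb0]

/-- Conditional Cauchy–Schwarz inequality. -/
lemma condexp_mul_le_sqrt_mul_sqrt [IsProbabilityMeasure μ] {m : MeasurableSpace Ω}
    {f g : Ω → ℝ} (hf : MemLp f 2 μ) (hg : MemLp g 2 μ) :
    μ[fun ω => f ω * g ω|m] ≤ᵐ[μ]
      fun ω => Real.sqrt ((μ[fun ω' => f ω' ^ 2|m]) ω) *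
        Real.sqrt ((μ[fun ω' => g ω' ^ 2|m]) ω) := by
  have hff : Integrable (fun ω => f ω ^ 2) μ := hf.integrable_sq
  have hgg : Integrable (fun ω => g ω ^ 2) μ := hg.integrable_sq
  have hfg : Integrable (fun ω => f ω * g ω) μ := integrable_mul_of_memℒp_two hf hg
  have key : ∀ q : ℚ, 0 < q → ∀ᵐ ω ∂μ,
      2 * (μ[fun ω' => f ω' * g ω'|m]) ω ≤
        (q : ℝ) ^ 2 * (μ[fun ω' => f ω' ^ 2|m]) ω +
          ((q : ℝ)⁻¹) ^ 2 * (μ[fun ω' => g ω' ^ 2|m]) ω := by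
    intro q hq
    have hq0 : ((q : ℝ)) ≠ 0 := by
      have h0 : (0 : ℝ) < q := by exact_mod_cast hq
      exact ne_of_gt h0
    have mono1 : μ[(2 : ℝ) • fun ω' => f ω' * g ω'|m] ≤ᵐ[μ]
        μ[((q : ℝ) ^ 2 • fun ω' => f ω' ^ 2) + ((q : ℝ)⁻¹) ^ 2 • fun ω' => g ω' ^ 2|m] := by
      refine condExp_mono (hfg.smul _) ((hff.smul _).add (hgg.smul _))
        (Eventually.of_forall fun ω => ?_)
      simp only [Pi.add_apply, Pi.smul_apply, smul_eq_mul]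
      have e : ((q : ℝ) * f ω - (q : ℝ)⁻¹ * g ω) ^ 2
          = (q : ℝ) ^ 2 * f ω ^ 2 - 2 * ((q : ℝ) * (q : ℝ)⁻¹) * (f ω * g ω)
            + ((q : ℝ)⁻¹) ^ 2 * g ω ^ 2 := by ring
      rw [mul_inv_cancel₀ hq0] at e
      have hsq := sq_nonneg ((q : ℝ) * f ω - (q : ℝ)⁻¹ * g ω)
      rw [e] at hsq
      linarith
    have e1 := condExp_smul (μ := μ) (m := m) (2 : ℝ) (fun ω' => f ω' * g ω')
    have e2 := condExp_add (μ := μ) (m := m) (hff.smul ((q : ℝ) ^ 2)) (hgg.smul (((q : ℝ)⁻¹) ^ 2))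
    have e3 := condExp_smul (μ := μ) (m := m) ((q : ℝ) ^ 2) (fun ω' => f ω' ^ 2)
    have e4 := condExp_smul (μ := μ) (m := m) (((q : ℝ)⁻¹) ^ 2) (fun ω' => g ω' ^ 2)
    filter_upwards [mono1, e1, e2, e3, e4] with ω h1 h2 h3 h4 h5
    rw [h2] at h1
    rw [h3] at h1
    simp only [Pi.add_apply, Pi.smul_apply, smul_eq_mul] at h1 h4 h5
    rw [h4, h5] at h1
    simpa using h1
  have hA : 0 ≤ᵐ[μ] μ[fun ω' => f ω' ^ 2|m] :=
    condExp_nonneg (Eventually.of_forall fun ω => sq_nonneg _)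
  have hB : 0 ≤ᵐ[μ] μ[fun ω' => g ω' ^ 2|m] :=
    condExp_nonneg (Eventually.of_forall fun ω => sq_nonneg _)
  have hall : ∀ᵐ ω ∂μ, ∀ q : ℚ, 0 < q →
      2 * (μ[fun ω' => f ω' * g ω'|m]) ω ≤
        (q : ℝ) ^ 2 * (μ[fun ω' => f ω' ^ 2|m]) ω +
          ((q : ℝ)⁻¹) ^ 2 * (μ[fun ω' => g ω' ^ 2|m]) ω := by
    rw [ae_all_iff]
    intro q
    by_cases hq : 0 < q
    · filter_upwards [key q hq] with ω h1 _
      exact h1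
    · filter_upwards with ω hq'
      exact absurd hq' hq
  filter_upwards [hall, hA, hB] with ω h1 h2 h3
  exact real_CS_aux h2 h3 fun q hq => h1 q hq

end Helpers2

section Helpers3

variable {Ω : Type*} {m0 : MeasurableSpace Ω} {μ : MeasureTheory.Measure Ω}

open MeasureTheory Filter

/-- Integrability of the `ℓ²` norm of finitely many integrable functions. -/
lemma integrable_sqrt_sum_sq [IsFiniteMeasure μ] (N : ℕ) (a : ℕ → Ω → ℝ) (ha : ∀ j, MemLp (a j) 2 μ) :
    Integrable (fun ω' => Real.sqrt (∑ j ∈ Finset.range N, a j ω' ^ 2)) μ := by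
  have haint : ∀ j, Integrable (a j) μ := fun j => (ha j).integrable one_le_two
  have hsqm : ∀ j, AEStronglyMeasurable (fun ω' => a j ω' ^ 2) μ := fun j => by
    simpa [pow_two, Pi.mul_def] using (ha j).aestronglyMeasurable.mul (ha j).aestronglyMeasurable
  have hRm : AEStronglyMeasurable (fun ω' => Real.sqrt (∑ j ∈ Finset.range N, a j ω' ^ 2)) μ :=
    Real.continuous_sqrt.comp_aestronglyMeasurable
      (Finset.aestronglyMeasurable_fun_sum _ fun j _ => hsqm j)
  refine (integrable_finset_sum (Finset.range N) fun j _ => (haint j).abs).mono' hRm ?_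
  filter_upwards with ω
  rw [Real.norm_eq_abs, abs_of_nonneg (Real.sqrt_nonneg _)]
  have h1 : (∑ j ∈ Finset.range N, a j ω ^ 2) ≤ (∑ j ∈ Finset.range N, |a j ω|) ^ 2 := by
    have h2 := Finset.sum_sq_le_sq_sum_of_nonneg
      (s := Finset.range N) (f := fun j => |a j ω|) fun j _ => abs_nonneg _
    simpa [sq_abs] using h2
  calc Real.sqrt (∑ j ∈ Finset.range N, a j ω ^ 2)
      ≤ Real.sqrt ((∑ j ∈ Finset.range N, |a j ω|) ^ 2) := Real.sqrt_le_sqrt h1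
    _ = ∑ j ∈ Finset.range N, |a j ω| :=
        Real.sqrt_sq (Finset.sum_nonneg fun j _ => abs_nonneg _)

/-- Vector-valued conditional Jensen: the `ℓ²` norm of conditional expectations is
a.e. bounded by the conditional expectation of the `ℓ²` norm. -/
lemma sqrt_sum_sq_condexp_le [IsProbabilityMeasure μ] {m : MeasurableSpace Ω} (hm : m ≤ m0)
    (N : ℕ) (a : ℕ → Ω → ℝ) (ha : ∀ j, MemLp (a j) 2 μ) :
    ∀ᵐ ω ∂μ, Real.sqrt (∑ j ∈ Finset.range N, ((μ[a j|m]) ω) ^ 2) ≤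
      (μ[fun ω' => Real.sqrt (∑ j ∈ Finset.range N, a j ω' ^ 2)|m]) ω := by
  have haint : ∀ j, Integrable (a j) μ := fun j => (ha j).integrable one_le_two
  have hsqm : ∀ j, AEStronglyMeasurable[m0] (fun ω' => a j ω' ^ 2) μ := fun j => by
    simpa [pow_two, Pi.mul_def] using (ha j).aestronglyMeasurable.mul (ha j).aestronglyMeasurable
  have hRm : AEStronglyMeasurable[m0] (fun ω' => Real.sqrt (∑ j ∈ Finset.range N, a j ω' ^ 2)) μ :=
    Real.continuous_sqrt.comp_aestronglyMeasurable
      (Finset.aestronglyMeasurable_fun_sum _ fun j _ => hsqm j)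
  have hRint : Integrable (fun ω' => Real.sqrt (∑ j ∈ Finset.range N, a j ω' ^ 2)) μ :=
    integrable_sqrt_sum_sq N a ha
  have main : ∀ n : ℕ, ∀ᵐ ω ∂μ, Real.sqrt (∑ j ∈ Finset.range N, ((μ[a j|m]) ω) ^ 2) ≤
      1 / (n + 1 : ℝ) +
        (μ[fun ω' => Real.sqrt (∑ j ∈ Finset.range N, a j ω' ^ 2)|m]) ω := by
    intro n
    have hε0 : (0 : ℝ) < 1 / (n + 1 : ℝ) := by positivity
    have hzsum_sm : StronglyMeasurable[m]
        (fun ω => ∑ j ∈ Finset.range N, ((μ[a j|m]) ω) ^ 2) :=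
      Finset.stronglyMeasurable_fun_sum _ fun j _ => by
        simpa [pow_two, Pi.mul_def] using
          (stronglyMeasurable_condExp (m := m) (μ := μ) (f := a j)).mul stronglyMeasurable_condExp
    have hsSM : StronglyMeasurable[m] (fun ω =>
        Real.sqrt ((1 / (n + 1 : ℝ)) ^ 2 + ∑ j ∈ Finset.range N, ((μ[a j|m]) ω) ^ 2)) :=
      Real.continuous_sqrt.comp_stronglyMeasurable (stronglyMeasurable_const.add hzsum_sm)
    set s : Ω → ℝ := fun ω =>
      Real.sqrt ((1 / (n + 1 : ℝ)) ^ 2 + ∑ j ∈ Finset.range N, ((μ[a j|m]) ω) ^ 2) with hs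
    have hzsum0 : ∀ ω, 0 ≤ ∑ j ∈ Finset.range N, ((μ[a j|m]) ω) ^ 2 :=
      fun ω => Finset.sum_nonneg fun j _ => sq_nonneg _
    have hs_lb : ∀ ω, 1 / (n + 1 : ℝ) ≤ s ω := by
      intro ω
      have h1 : (1 / (n + 1 : ℝ)) ^ 2 ≤ (1 / (n + 1 : ℝ)) ^ 2 +
          ∑ j ∈ Finset.range N, ((μ[a j|m]) ω) ^ 2 := le_add_of_nonneg_right (hzsum0 ω)
      calc 1 / (n + 1 : ℝ) = Real.sqrt ((1 / (n + 1 : ℝ)) ^ 2) := (Real.sqrt_sq hε0.le).symm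
        _ ≤ s ω := Real.sqrt_le_sqrt h1
    have hs_pos : ∀ ω, 0 < s ω := fun ω => lt_of_lt_of_le hε0 (hs_lb ω)
    have hs_sq : ∀ ω, s ω ^ 2 = (1 / (n + 1 : ℝ)) ^ 2 +
        ∑ j ∈ Finset.range N, ((μ[a j|m]) ω) ^ 2 := fun ω =>
      Real.sq_sqrt (le_trans (sq_nonneg _) (le_add_of_nonneg_right (hzsum0 ω)))
    set θ : ℕ → Ω → ℝ := fun j ω => (μ[a j|m]) ω / s ω with hθ
    have hθSM : ∀ j, StronglyMeasurable[m] (θ j) := fun j =>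
      (stronglyMeasurable_condExp.measurable.div hsSM.measurable).stronglyMeasurable
    have hθ_bound : ∀ j, j ∈ Finset.range N → ∀ ω, |θ j ω| ≤ 1 := by
      intro j hj ω
      have h1 : ((μ[a j|m]) ω) ^ 2 ≤ ∑ k ∈ Finset.range N, ((μ[a k|m]) ω) ^ 2 :=
        Finset.single_le_sum (f := fun k => ((μ[a k|m]) ω) ^ 2)
          (fun k _ => sq_nonneg _) hj
      have h2 : |(μ[a j|m]) ω| ≤ s ω := by
        rw [← Real.sqrt_sq_eq_abs]
        refine Real.sqrt_le_sqrt ?_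
        calc ((μ[a j|m]) ω) ^ 2 ≤ ∑ k ∈ Finset.range N, ((μ[a k|m]) ω) ^ 2 := h1
          _ ≤ (1 / (n + 1 : ℝ)) ^ 2 + ∑ k ∈ Finset.range N, ((μ[a k|m]) ω) ^ 2 :=
            le_add_of_nonneg_left (sq_nonneg _)
      simp only [hθ, abs_div]
      rw [div_le_one (lt_of_lt_of_le (hs_pos ω) (le_abs_self _))]
      exact h2.trans (le_abs_self _)
    have hθa_int : ∀ j ∈ Finset.range N, Integrable (θ j * a j) μ := by
      intro j hj
      refine (haint j).abs.mono'
        ((((hθSM j).mono hm).aestronglyMeasurable).mul (ha j).aestronglyMeasurable) ?_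
      filter_upwards with ω
      simp only [Pi.mul_apply, Real.norm_eq_abs, abs_mul]
      calc |θ j ω| * |a j ω| ≤ 1 * |a j ω| :=
            mul_le_mul_of_nonneg_right (hθ_bound j hj ω) (abs_nonneg _)
        _ = |a j ω| := one_mul _
    have hpull : ∀ j ∈ Finset.range N, μ[θ j * a j|m] =ᵐ[μ] θ j * μ[a j|m] :=
      fun j hj => condExp_mul_of_stronglyMeasurable_left (hθSM j) (hθa_int j hj) (haint j)
    have hTint : Integrable (∑ j ∈ Finset.range N, θ j * a j) μ :=
      integrable_finset_sum' _ hθa_int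
    have hsum_condexp := condExp_finsetSum (μ := μ) (m := m) hθa_int
    have hmono : μ[∑ j ∈ Finset.range N, θ j * a j|m] ≤ᵐ[μ]
        μ[fun ω' => Real.sqrt (∑ j ∈ Finset.range N, a j ω' ^ 2)|m] := by
      refine condExp_mono hTint hRint (Eventually.of_forall fun ω => ?_)
      rw [Finset.sum_apply]
      simp only [Pi.mul_apply]
      have hθsq : ∑ j ∈ Finset.range N, θ j ω ^ 2 ≤ 1 := by
        have e1 : ∑ j ∈ Finset.range N, θ j ω ^ 2
            = (∑ j ∈ Finset.range N, ((μ[a j|m]) ω) ^ 2) / s ω ^ 2 := by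
          rw [Finset.sum_div]
          exact Finset.sum_congr rfl fun j _ => by rw [hθ, div_pow]
        rw [e1, div_le_one (pow_pos (hs_pos ω) 2), hs_sq ω]
        exact le_add_of_nonneg_left (sq_nonneg _)
      have hcs := Finset.sum_mul_sq_le_sq_mul_sq (Finset.range N)
        (fun j => θ j ω) (fun j => a j ω)
      have h3 : (∑ j ∈ Finset.range N, θ j ω * a j ω) ^ 2
          ≤ ∑ j ∈ Finset.range N, a j ω ^ 2 := by
        refine hcs.trans ?_
        calc (∑ j ∈ Finset.range N, θ j ω ^ 2) * ∑ j ∈ Finset.range N, a j ω ^ 2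
            ≤ 1 * ∑ j ∈ Finset.range N, a j ω ^ 2 :=
              mul_le_mul_of_nonneg_right hθsq (Finset.sum_nonneg fun j _ => sq_nonneg _)
          _ = ∑ j ∈ Finset.range N, a j ω ^ 2 := one_mul _
      calc ∑ j ∈ Finset.range N, θ j ω * a j ω
          ≤ |∑ j ∈ Finset.range N, θ j ω * a j ω| := le_abs_self _
        _ = Real.sqrt ((∑ j ∈ Finset.range N, θ j ω * a j ω) ^ 2) :=
            (Real.sqrt_sq_eq_abs _).symm
        _ ≤ Real.sqrt (∑ j ∈ Finset.range N, a j ω ^ 2) := Real.sqrt_le_sqrt h3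
    have hpull_ae : ∀ᵐ ω ∂μ, ∀ j ∈ Finset.range N,
        (μ[θ j * a j|m]) ω = θ j ω * (μ[a j|m]) ω := by
      rw [Filter.eventually_all_finset]
      intro j hj
      filter_upwards [hpull j hj] with ω hω
      simpa using hω
    filter_upwards [hmono, hsum_condexp, hpull_ae] with ω h1 h2 h3
    have hzs : Real.sqrt (∑ j ∈ Finset.range N, ((μ[a j|m]) ω) ^ 2) ≤ s ω :=
      Real.sqrt_le_sqrt (le_add_of_nonneg_left (sq_nonneg _))
    have key : s ω ≤ 1 / (n + 1 : ℝ) + ∑ j ∈ Finset.range N, θ j ω * (μ[a j|m]) ω := by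
      have e1 : ∑ j ∈ Finset.range N, θ j ω * (μ[a j|m]) ω
          = (∑ j ∈ Finset.range N, ((μ[a j|m]) ω) ^ 2) / s ω := by
        rw [Finset.sum_div]
        refine Finset.sum_congr rfl fun j _ => ?_
        rw [hθ, pow_two]
        ring
      rw [e1]
      have h4 := hs_lb ω
      have h5 := hs_pos ω
      have h6 := hs_sq ω
      have e2 : s ω = (1 / (n + 1 : ℝ)) ^ 2 / s ω
          + (∑ j ∈ Finset.range N, ((μ[a j|m]) ω) ^ 2) / s ω := by
        rw [← add_div, ← h6, pow_two, mul_div_assoc, div_self h5.ne', mul_one]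
      have e3 : (1 / (n + 1 : ℝ)) ^ 2 / s ω ≤ 1 / (n + 1 : ℝ) := by
        rw [div_le_iff₀ h5, pow_two]
        exact mul_le_mul_of_nonneg_left h4 hε0.le
      linarith
    have e4 : ∑ j ∈ Finset.range N, θ j ω * (μ[a j|m]) ω
        = (μ[∑ j ∈ Finset.range N, θ j * a j|m]) ω := by
      rw [h2, Finset.sum_apply]
      exact Finset.sum_congr rfl fun j hj => (h3 j hj).symm
    rw [e4] at key
    linarith
  have hall := ae_all_iff.2 main
  filter_upwards [hall] with ω hω
  by_contra hcon
  push_neg at hcon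
  obtain ⟨n, hn⟩ := exists_nat_one_div_lt (sub_pos.2 hcon)
  have h1 := hω n
  linarith

end Helpers3

section Helpers4

variable {Ω : Type*} {m0 : MeasurableSpace Ω} {μ : MeasureTheory.Measure Ω}
  {𝓕 : ℕ → ℕ → MeasurableSpace Ω}

open MeasureTheory Filter

/-- The key pointwise estimate:
`𝔼[ (𝔼[C|G])² | H ] ≤ (𝔼[ √(𝔼[C²|H]) | G ])²` a.e. -/
lemma key_step1 [IsProbabilityMeasure μ] (hF4 : IsF4Filtration μ 𝓕) (I J : ℕ)
    {C : Ω → ℝ} (hC : MemLp C 2 μ) :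
    μ[fun ω => ((μ[C|rowSup 𝓕 I]) ω) ^ 2|colSup 𝓕 J] ≤ᵐ[μ]
      fun ω => ((μ[fun ω' =>
        Real.sqrt ((μ[fun x => C x ^ 2|colSup 𝓕 J]) ω')|rowSup 𝓕 I]) ω) ^ 2 := by
  have hG : rowSup 𝓕 I ≤ m0 := iSup_le fun m => hF4.le I m
  have hH : colSup 𝓕 J ≤ m0 := iSup_le fun k => hF4.le k J
  have h𝒢G : 𝓕 I J ≤ rowSup 𝓕 I := le_iSup (fun j => 𝓕 I j) J
  have h𝒢H : 𝓕 I J ≤ colSup 𝓕 J := le_iSup (fun i => 𝓕 i J) I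
  have hCint : Integrable C μ := hC.integrable one_le_two
  -- V and its properties
  have hV2 : MemLp (μ[C|rowSup 𝓕 I]) 2 μ := memℒp_condexp_two hG hC
  have hVsq_int : Integrable (fun ω => ((μ[C|rowSup 𝓕 I]) ω) ^ 2) μ := hV2.integrable_sq
  have hVSM : StronglyMeasurable[rowSup 𝓕 I] (μ[C|rowSup 𝓕 I]) := stronglyMeasurable_condExp
  have hVsqSM : StronglyMeasurable[rowSup 𝓕 I] (fun ω => ((μ[C|rowSup 𝓕 I]) ω) ^ 2) := by
    simpa [pow_two, Pi.mul_def] using hVSM.mul hVSM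
  have e0 : μ[fun ω => ((μ[C|rowSup 𝓕 I]) ω) ^ 2|rowSup 𝓕 I]
      = fun ω => ((μ[C|rowSup 𝓕 I]) ω) ^ 2 :=
    condExp_of_stronglyMeasurable hG hVsqSM hVsq_int
  -- W = u a.e. where u is the conditional expectation with respect to 𝓕 I J
  have hW_eq : μ[fun ω => ((μ[C|rowSup 𝓕 I]) ω) ^ 2|colSup 𝓕 J] =ᵐ[μ]
      μ[fun ω => ((μ[C|rowSup 𝓕 I]) ω) ^ 2|𝓕 I J] := by
    have h1 := comm_row_col hF4 I J hVsq_int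
    rwa [e0] at h1
  have hu0 : 0 ≤ᵐ[μ] μ[fun ω => ((μ[C|rowSup 𝓕 I]) ω) ^ 2|𝓕 I J] :=
    condExp_nonneg (Eventually.of_forall fun ω => sq_nonneg _)
  -- a = sqrt X
  have hXint : Integrable (μ[fun x => C x ^ 2|colSup 𝓕 J]) μ := integrable_condExp
  have haSM_H : StronglyMeasurable[colSup 𝓕 J]
      (fun ω => Real.sqrt ((μ[fun x => C x ^ 2|colSup 𝓕 J]) ω)) :=
    Real.continuous_sqrt.comp_stronglyMeasurable stronglyMeasurable_condExp
  have haMem : MemLp (fun ω => Real.sqrt ((μ[fun x => C x ^ 2|colSup 𝓕 J]) ω)) 2 μ :=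
    memℒp_sqrt_two hXint
  have haint : Integrable (fun ω => Real.sqrt ((μ[fun x => C x ^ 2|colSup 𝓕 J]) ω)) μ :=
    haMem.integrable one_le_two
  -- z = μ[a|G] equals μ[a|𝓕 I J] a.e.
  have hz_eq : μ[fun ω => Real.sqrt ((μ[fun x => C x ^ 2|colSup 𝓕 J]) ω)|rowSup 𝓕 I] =ᵐ[μ]
      μ[fun ω => Real.sqrt ((μ[fun x => C x ^ 2|colSup 𝓕 J]) ω)|𝓕 I J] := by
    have h1 : μ[fun ω => Real.sqrt ((μ[fun x => C x ^ 2|colSup 𝓕 J]) ω)|colSup 𝓕 J]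
        = fun ω => Real.sqrt ((μ[fun x => C x ^ 2|colSup 𝓕 J]) ω) :=
      condExp_of_stronglyMeasurable hH haSM_H haint
    have h2 := comm_col_row hF4 I J haint
    rwa [h1] at h2
  have hm0 : 0 ≤ᵐ[μ] μ[fun ω => Real.sqrt ((μ[fun x => C x ^ 2|colSup 𝓕 J]) ω)|𝓕 I J] :=
    condExp_nonneg (Eventually.of_forall fun ω => Real.sqrt_nonneg _)
  -- e_mul : μ[C·V|G] = V² a.e.
  have hCV_int : Integrable (fun ω => C ω * (μ[C|rowSup 𝓕 I]) ω) μ :=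
    integrable_mul_of_memℒp_two hC hV2
  have e_mul : μ[fun ω => C ω * (μ[C|rowSup 𝓕 I]) ω|rowSup 𝓕 I] =ᵐ[μ]
      fun ω => ((μ[C|rowSup 𝓕 I]) ω) ^ 2 := by
    have hVC_int : Integrable ((μ[C|rowSup 𝓕 I]) * C) μ := by
      have := integrable_mul_of_memℒp_two hV2 hC
      exact this
    have h1 : μ[(μ[C|rowSup 𝓕 I]) * C|rowSup 𝓕 I] =ᵐ[μ]
        (μ[C|rowSup 𝓕 I]) * μ[C|rowSup 𝓕 I] :=
      condExp_mul_of_stronglyMeasurable_left hVSM hVC_int hCint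
    have h2 : (fun ω => C ω * (μ[C|rowSup 𝓕 I]) ω) = (μ[C|rowSup 𝓕 I]) * C := by
      funext ω; simp [Pi.mul_apply, mul_comm]
    rw [h2]
    refine h1.trans ?_
    filter_upwards with ω
    simp [Pi.mul_apply, pow_two]
  -- u = μ[C·V|𝓕 I J] a.e.
  have t1 : μ[fun ω => ((μ[C|rowSup 𝓕 I]) ω) ^ 2|𝓕 I J] =ᵐ[μ]
      μ[fun ω => C ω * (μ[C|rowSup 𝓕 I]) ω|𝓕 I J] := by
    have h1 := condExp_condExp_of_le h𝒢G hG
      (f := fun ω => C ω * (μ[C|rowSup 𝓕 I]) ω) (μ := μ)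
    have h2 := condExp_congr_ae (m := 𝓕 I J) (μ := μ) e_mul
    exact h2.symm.trans h1
  -- tower via H
  have t2 : μ[fun ω => C ω * (μ[C|rowSup 𝓕 I]) ω|𝓕 I J] =ᵐ[μ]
      μ[μ[fun ω => C ω * (μ[C|rowSup 𝓕 I]) ω|colSup 𝓕 J]|𝓕 I J] :=
    (condExp_condExp_of_le h𝒢H hH).symm
  -- conditional Cauchy-Schwarz
  have hCS := condexp_mul_le_sqrt_mul_sqrt (m := colSup 𝓕 J) hC hV2
  -- bound inside: μ[C·V|H] ≤ a·√W = a·√u a.e.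
  have hbound : μ[fun ω => C ω * (μ[C|rowSup 𝓕 I]) ω|colSup 𝓕 J] ≤ᵐ[μ]
      fun ω => Real.sqrt ((μ[fun ω' => ((μ[C|rowSup 𝓕 I]) ω') ^ 2|𝓕 I J]) ω) *
        Real.sqrt ((μ[fun x => C x ^ 2|colSup 𝓕 J]) ω) := by
    filter_upwards [hCS, hW_eq] with ω h1 h2
    calc (μ[fun ω' => C ω' * (μ[C|rowSup 𝓕 I]) ω'|colSup 𝓕 J]) ω
        ≤ Real.sqrt ((μ[fun ω' => C ω' ^ 2|colSup 𝓕 J]) ω) *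
          Real.sqrt ((μ[fun ω' => ((μ[C|rowSup 𝓕 I]) ω') ^ 2|colSup 𝓕 J]) ω) := h1
      _ = Real.sqrt ((μ[fun ω' => ((μ[C|rowSup 𝓕 I]) ω') ^ 2|𝓕 I J]) ω) *
          Real.sqrt ((μ[fun x => C x ^ 2|colSup 𝓕 J]) ω) := by rw [h2, mul_comm]
  -- monotonicity
  have hsqu_int : Integrable (fun ω =>
      Real.sqrt ((μ[fun ω' => ((μ[C|rowSup 𝓕 I]) ω') ^ 2|𝓕 I J]) ω) *
        Real.sqrt ((μ[fun x => C x ^ 2|colSup 𝓕 J]) ω)) μ :=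
    integrable_mul_of_memℒp_two (memℒp_sqrt_two integrable_condExp) haMem
  have hmono : μ[μ[fun ω => C ω * (μ[C|rowSup 𝓕 I]) ω|colSup 𝓕 J]|𝓕 I J] ≤ᵐ[μ]
      μ[fun ω => Real.sqrt ((μ[fun ω' => ((μ[C|rowSup 𝓕 I]) ω') ^ 2|𝓕 I J]) ω) *
        Real.sqrt ((μ[fun x => C x ^ 2|colSup 𝓕 J]) ω)|𝓕 I J] :=
    condExp_mono integrable_condExp hsqu_int hbound
  -- pull-out
  have hsqrtuSM : StronglyMeasurable[𝓕 I J] (fun ω =>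
      Real.sqrt ((μ[fun ω' => ((μ[C|rowSup 𝓕 I]) ω') ^ 2|𝓕 I J]) ω)) :=
    Real.continuous_sqrt.comp_stronglyMeasurable stronglyMeasurable_condExp
  have hpull : μ[(fun ω => Real.sqrt ((μ[fun ω' => ((μ[C|rowSup 𝓕 I]) ω') ^ 2|𝓕 I J]) ω)) *
      (fun ω => Real.sqrt ((μ[fun x => C x ^ 2|colSup 𝓕 J]) ω))|𝓕 I J] =ᵐ[μ]
      (fun ω => Real.sqrt ((μ[fun ω' => ((μ[C|rowSup 𝓕 I]) ω') ^ 2|𝓕 I J]) ω)) *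
        μ[fun ω => Real.sqrt ((μ[fun x => C x ^ 2|colSup 𝓕 J]) ω)|𝓕 I J] :=
    condExp_mul_of_stronglyMeasurable_left hsqrtuSM hsqu_int haint
  -- combine
  filter_upwards [hW_eq, t1, t2, hmono, hpull, hu0, hm0, hz_eq] with ω h1 h2 h3 h4 h5 h6 h7 h8
  rw [h1, h8]
  have h9 : (μ[fun ω' => ((μ[C|rowSup 𝓕 I]) ω') ^ 2|𝓕 I J]) ω ≤
      Real.sqrt ((μ[fun ω' => ((μ[C|rowSup 𝓕 I]) ω') ^ 2|𝓕 I J]) ω) *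
        (μ[fun ω' => Real.sqrt ((μ[fun x => C x ^ 2|colSup 𝓕 J]) ω')|𝓕 I J]) ω := by
    have h10 : (μ[fun ω' => ((μ[C|rowSup 𝓕 I]) ω') ^ 2|𝓕 I J]) ω ≤
        (μ[(fun ω' => Real.sqrt ((μ[fun ω'' => ((μ[C|rowSup 𝓕 I]) ω'') ^ 2|𝓕 I J]) ω')) *
          (fun ω' => Real.sqrt ((μ[fun x => C x ^ 2|colSup 𝓕 J]) ω'))|𝓕 I J]) ω := by
      rw [h2, h3]
      exact le_trans h4 (le_of_eq rfl)
    calc (μ[fun ω' => ((μ[C|rowSup 𝓕 I]) ω') ^ 2|𝓕 I J]) ω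
        ≤ (μ[(fun ω' => Real.sqrt ((μ[fun ω'' => ((μ[C|rowSup 𝓕 I]) ω'') ^ 2|𝓕 I J]) ω')) *
            (fun ω' => Real.sqrt ((μ[fun x => C x ^ 2|colSup 𝓕 J]) ω'))|𝓕 I J]) ω := h10
      _ = Real.sqrt ((μ[fun ω' => ((μ[C|rowSup 𝓕 I]) ω') ^ 2|𝓕 I J]) ω) *
          (μ[fun ω' => Real.sqrt ((μ[fun x => C x ^ 2|colSup 𝓕 J]) ω')|𝓕 I J]) ω := by
        have := h5
        simp only [Pi.mul_apply] at this
        exact this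
  -- from u ≤ √u * m with u ≥ 0, m ≥ 0 conclude u ≤ m²
  have hsq : Real.sqrt ((μ[fun ω' => ((μ[C|rowSup 𝓕 I]) ω') ^ 2|𝓕 I J]) ω) ^ 2
      = (μ[fun ω' => ((μ[C|rowSup 𝓕 I]) ω') ^ 2|𝓕 I J]) ω := Real.sq_sqrt h6
  nlinarith [h9, hsq, h7, Real.sqrt_nonneg ((μ[fun ω' => ((μ[C|rowSup 𝓕 I]) ω') ^ 2|𝓕 I J]) ω),
    sq_nonneg (Real.sqrt ((μ[fun ω' => ((μ[C|rowSup 𝓕 I]) ω') ^ 2|𝓕 I J]) ω) -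
      (μ[fun ω' => Real.sqrt ((μ[fun x => C x ^ 2|colSup 𝓕 J]) ω')|𝓕 I J]) ω)]

end Helpers4


/-- For an (F4) two-parameter filtration, `i ≥ 1` and a sequence
`(C_j) ⊆ L²`, one has
`𝔼[(Σ_j 𝔼_{∞,j−1} C_j²)^{1/2}] ≥ 𝔼[(Σ_j 𝔼_{∞,j−1} (𝔼_{i−1,∞} C_j)²)^{1/2}]`. -/
theorem conditional_square_function_contraction {Ω : Type*} [m0 : MeasurableSpace Ω]
    (μ : Measure Ω) [IsProbabilityMeasure μ] (𝓕 : ℕ → ℕ → MeasurableSpace Ω)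
    (hF4 : IsF4Filtration μ 𝓕) (i : ℕ) (hi : 1 ≤ i)
    (C : ℕ → Ω → ℝ) (hC : ∀ j, MemLp (C j) 2 μ) :
    ∫⁻ ω, (∑' j : ℕ, ENNReal.ofReal
        ((μ[fun a => ((μ[C j|rowSup 𝓕 (i - 1)]) a) ^ 2|colSup 𝓕 (j - 1)]) ω))
          ^ (1/2 : ℝ) ∂μ ≤
      ∫⁻ ω, (∑' j : ℕ, ENNReal.ofReal
        ((μ[fun a => C j a ^ 2|colSup 𝓕 (j - 1)]) ω)) ^ (1/2 : ℝ) ∂μ := by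

  have hG : rowSup 𝓕 (i - 1) ≤ m0 := iSup_le fun m => hF4.le _ m
  have hH : ∀ j : ℕ, colSup 𝓕 (j - 1) ≤ m0 := fun j => iSup_le fun k => hF4.le k _
  -- abbreviations
  set W : ℕ → Ω → ℝ :=
    fun j => μ[fun a => ((μ[C j|rowSup 𝓕 (i - 1)]) a) ^ 2|colSup 𝓕 (j - 1)] with hW
  set X : ℕ → Ω → ℝ := fun j => μ[fun a => C j a ^ 2|colSup 𝓕 (j - 1)] with hX
  set A : ℕ → Ω → ℝ := fun j ω => Real.sqrt (X j ω) with hA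
  set Z : ℕ → Ω → ℝ := fun j => μ[A j|rowSup 𝓕 (i - 1)] with hZ
  -- key pointwise estimate per j
  have key1 : ∀ j : ℕ, W j ≤ᵐ[μ] fun ω => (Z j ω) ^ 2 := fun j =>
    key_step1 hF4 (i - 1) (j - 1) (hC j)
  have hz_nonneg : ∀ j : ℕ, 0 ≤ᵐ[μ] Z j := fun j =>
    condExp_nonneg (Filter.Eventually.of_forall fun _ => Real.sqrt_nonneg _)
  have hX_nonneg : ∀ j : ℕ, 0 ≤ᵐ[μ] X j := fun j =>
    condExp_nonneg (Filter.Eventually.of_forall fun _ => sq_nonneg _)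
  have hA_mem : ∀ j : ℕ, MemLp (A j) 2 μ := fun j => memℒp_sqrt_two integrable_condExp
  have key2 : ∀ N : ℕ, ∀ᵐ ω ∂μ,
      Real.sqrt (∑ j ∈ Finset.range N, (Z j ω) ^ 2) ≤
        (μ[fun ω' => Real.sqrt (∑ j ∈ Finset.range N, A j ω' ^ 2)|rowSup 𝓕 (i - 1)]) ω :=
    fun N => sqrt_sum_sq_condexp_le hG N A hA_mem
  -- measurability
  have hWmeas : ∀ j : ℕ, Measurable fun ω => ENNReal.ofReal (W j ω) := fun j =>
    (stronglyMeasurable_condExp.mono (hH j)).measurable.ennreal_ofReal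
  -- pointwise: tsum as sup of partial sums, commuted with rpow
  have hpt : ∀ ω, (∑' j : ℕ, ENNReal.ofReal (W j ω)) ^ (1/2 : ℝ)
      = ⨆ N : ℕ, (∑ j ∈ Finset.range N, ENNReal.ofReal (W j ω)) ^ (1/2 : ℝ) := by
    intro ω
    rw [ENNReal.tsum_eq_iSup_nat]
    exact OrderIso.map_iSup (ENNReal.orderIsoRpow (1/2 : ℝ) (by norm_num))
      fun N : ℕ => ∑ j ∈ Finset.range N, ENNReal.ofReal (W j ω)
  calc ∫⁻ ω, (∑' j : ℕ, ENNReal.ofReal (W j ω)) ^ (1/2 : ℝ) ∂μ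
      = ∫⁻ ω, ⨆ N : ℕ, (∑ j ∈ Finset.range N, ENNReal.ofReal (W j ω)) ^ (1/2 : ℝ) ∂μ :=
        lintegral_congr hpt
    _ = ⨆ N : ℕ, ∫⁻ ω, (∑ j ∈ Finset.range N, ENNReal.ofReal (W j ω)) ^ (1/2 : ℝ) ∂μ := by
        refine lintegral_iSup (fun N => ?_) (fun N M h ω => ?_)
        · exact ENNReal.continuous_rpow_const.measurable.comp
            (Finset.measurable_sum _ fun j _ => hWmeas j)
        · exact ENNReal.rpow_le_rpow
            (Finset.sum_le_sum_of_subset (Finset.range_subset_range.2 h)) (by norm_num)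
    _ ≤ ∫⁻ ω, (∑' j : ℕ, ENNReal.ofReal (X j ω)) ^ (1/2 : ℝ) ∂μ := by
        refine iSup_le fun N => ?_
        have hRN_int : Integrable (fun ω' =>
            Real.sqrt (∑ j ∈ Finset.range N, A j ω' ^ 2)) μ :=
          integrable_sqrt_sum_sq N A hA_mem
        have hRN_nonneg : 0 ≤ᵐ[μ] fun ω' => Real.sqrt (∑ j ∈ Finset.range N, A j ω' ^ 2) :=
          Filter.Eventually.of_forall fun _ => Real.sqrt_nonneg _
        calc ∫⁻ ω, (∑ j ∈ Finset.range N, ENNReal.ofReal (W j ω)) ^ (1/2 : ℝ) ∂μ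
            ≤ ∫⁻ ω, ENNReal.ofReal ((μ[fun ω' =>
                Real.sqrt (∑ j ∈ Finset.range N, A j ω' ^ 2)|rowSup 𝓕 (i - 1)]) ω) ∂μ := by
              refine lintegral_mono_ae ?_
              have hWz : ∀ᵐ ω ∂μ, ∀ j, W j ω ≤ (Z j ω) ^ 2 := ae_all_iff.2 key1
              have hz0 : ∀ᵐ ω ∂μ, ∀ j, 0 ≤ Z j ω := ae_all_iff.2 hz_nonneg
              filter_upwards [hWz, hz0, key2 N] with ω h1 h2 h3
              have hsum0 : (0:ℝ) ≤ ∑ j ∈ Finset.range N, (Z j ω) ^ 2 :=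
                Finset.sum_nonneg fun j _ => sq_nonneg _
              calc (∑ j ∈ Finset.range N, ENNReal.ofReal (W j ω)) ^ (1/2 : ℝ)
                  ≤ (∑ j ∈ Finset.range N, ENNReal.ofReal ((Z j ω) ^ 2)) ^ (1/2 : ℝ) :=
                    ENNReal.rpow_le_rpow (Finset.sum_le_sum fun j _ =>
                      ENNReal.ofReal_le_ofReal (h1 j)) (by norm_num)
                _ = (ENNReal.ofReal (∑ j ∈ Finset.range N, (Z j ω) ^ 2)) ^ (1/2 : ℝ) := by
                    rw [ENNReal.ofReal_sum_of_nonneg fun j _ => sq_nonneg _]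
                _ = ENNReal.ofReal ((∑ j ∈ Finset.range N, (Z j ω) ^ 2) ^ (1/2 : ℝ)) :=
                    ENNReal.ofReal_rpow_of_nonneg (p := (1/2 : ℝ)) hsum0 (by norm_num)
                _ = ENNReal.ofReal (Real.sqrt (∑ j ∈ Finset.range N, (Z j ω) ^ 2)) := by
                    rw [Real.sqrt_eq_rpow]
                _ ≤ ENNReal.ofReal ((μ[fun ω' =>
                    Real.sqrt (∑ j ∈ Finset.range N, A j ω' ^ 2)|rowSup 𝓕 (i - 1)]) ω) :=
                    ENNReal.ofReal_le_ofReal h3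
          _ = ∫⁻ ω, ENNReal.ofReal
              (Real.sqrt (∑ j ∈ Finset.range N, A j ω ^ 2)) ∂μ := by
              rw [← ofReal_integral_eq_lintegral_ofReal integrable_condExp
                  (condExp_nonneg hRN_nonneg),
                ← ofReal_integral_eq_lintegral_ofReal hRN_int hRN_nonneg,
                integral_condExp hG]
          _ ≤ ∫⁻ ω, (∑' j : ℕ, ENNReal.ofReal (X j ω)) ^ (1/2 : ℝ) ∂μ := by
              refine lintegral_mono_ae ?_
              have hX0 : ∀ᵐ ω ∂μ, ∀ j, 0 ≤ X j ω := ae_all_iff.2 hX_nonneg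
              filter_upwards [hX0] with ω h1
              have e1 : ∀ j ∈ Finset.range N, A j ω ^ 2 = X j ω := fun j _ =>
                Real.sq_sqrt (h1 j)
              have hsum0 : (0:ℝ) ≤ ∑ j ∈ Finset.range N, X j ω :=
                Finset.sum_nonneg fun j _ => h1 j
              calc ENNReal.ofReal (Real.sqrt (∑ j ∈ Finset.range N, A j ω ^ 2))
                  = ENNReal.ofReal (Real.sqrt (∑ j ∈ Finset.range N, X j ω)) := by
                    rw [Finset.sum_congr rfl e1]
                _ = ENNReal.ofReal ((∑ j ∈ Finset.range N, X j ω) ^ (1/2 : ℝ)) := by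
                    rw [Real.sqrt_eq_rpow]
                _ = (ENNReal.ofReal (∑ j ∈ Finset.range N, X j ω)) ^ (1/2 : ℝ) :=
                    (ENNReal.ofReal_rpow_of_nonneg (p := (1/2 : ℝ)) hsum0 (by norm_num)).symm
                _ = (∑ j ∈ Finset.range N, ENNReal.ofReal (X j ω)) ^ (1/2 : ℝ) := by
                    rw [ENNReal.ofReal_sum_of_nonneg fun j _ => h1 j]
                _ ≤ (∑' j : ℕ, ENNReal.ofReal (X j ω)) ^ (1/2 : ℝ) :=
                    ENNReal.rpow_le_rpow (ENNReal.sum_le_tsum _) (by norm_num)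
end

section
/- Let (ℱ_{i,j})_{i,j≥0} be a two-parameter filtration (ℱ_{i,j} ⊆ ℱ_{i+1,j} ∩ ℱ_{i,j+1}). Then the (F4) condition, namely 𝔼_{i,j}𝔼_{k,l} = 𝔼_{min(i,k),min(j,l)} = 𝔼_{k,l}𝔼_{i,j} for all i,j,k,l, holds if and only if for all i, j the σ-algebras ℱ_{i,∞} and ℱ_{∞,j} are conditionally independent given ℱ_{i,j}, i.e. 𝔼_{i,∞}𝔼_{∞,j} = 𝔼_{i,j} = 𝔼_{∞,j}𝔼_{i,∞}. -/
open MeasureTheory ENNReal Filter Topology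

section Aux

variable {Ω : Type*} [m0 : MeasurableSpace Ω] {μ : Measure Ω} [IsProbabilityMeasure μ]

/-- If `m₁ ≤ m₂`, conditioning on the coarser then the finer σ-algebra gives the coarser one. -/
lemma aux_condexp_condexp_rev {m₁ m₂ : MeasurableSpace Ω} (h12 : m₁ ≤ m₂) (h2 : m₂ ≤ m0)
    (f : Ω → ℝ) : μ[μ[f|m₁]|m₂] = μ[f|m₁] :=
  condExp_of_stronglyMeasurable h2 (stronglyMeasurable_condExp.mono h12) integrable_condExp

/-- For a monotone family of σ-algebras, composing two conditional expectations gives the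
conditional expectation at the minimum index. -/
lemma aux_condexp_min {m : ℕ → MeasurableSpace Ω} (hm : Monotone m) (hle : ∀ n, m n ≤ m0)
    (a b : ℕ) (f : Ω → ℝ) : μ[μ[f|m b]|m a] =ᵐ[μ] μ[f|m (min a b)] := by
  rcases le_total a b with h | h
  · rw [min_eq_left h]
    exact condExp_condExp_of_le (hm h) (hle b)
  · rw [min_eq_right h, aux_condexp_condexp_rev (hm h) (hle a)]

/-- Conditional independence implies (F4), one composition order. -/
lemma aux_f4_of_ci (𝓕 : ℕ → ℕ → MeasurableSpace Ω) (hle : ∀ i j, 𝓕 i j ≤ m0)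
    (hmono₁ : ∀ i j, 𝓕 i j ≤ 𝓕 (i + 1) j) (hmono₂ : ∀ i j, 𝓕 i j ≤ 𝓕 i (j + 1))
    (hCI : ∀ i j : ℕ, ∀ f : Ω → ℝ, Integrable f μ →
        μ[μ[f|colSup 𝓕 j]|rowSup 𝓕 i] =ᵐ[μ] μ[f|𝓕 i j] ∧
        μ[μ[f|rowSup 𝓕 i]|colSup 𝓕 j] =ᵐ[μ] μ[f|𝓕 i j])
    (i j k l : ℕ) (f : Ω → ℝ) (hf : Integrable f μ) :
    μ[μ[f|𝓕 k l]|𝓕 i j] =ᵐ[μ] μ[f|𝓕 (min i k) (min j l)] := by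
  have hR : ∀ a, rowSup 𝓕 a ≤ m0 := fun a => iSup_le (hle a)
  have hC : ∀ b, colSup 𝓕 b ≤ m0 := fun b => iSup_le fun a => hle a b
  have hRmono : Monotone (rowSup 𝓕) :=
    monotone_nat_of_le_succ fun a => iSup_mono fun b => hmono₁ a b
  have hCmono : Monotone (colSup 𝓕) :=
    monotone_nat_of_le_succ fun b => iSup_mono fun a => hmono₂ a b
  set h : Ω → ℝ := μ[f|colSup 𝓕 l] with hh
  -- E_{ij} E_{kl} f = E_{ij} E_{k∞} E_{∞l} f
  have s1 : μ[μ[f|𝓕 k l]|𝓕 i j] =ᵐ[μ] μ[μ[h|rowSup 𝓕 k]|𝓕 i j] :=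
    condExp_congr_ae (hCI k l f hf).1.symm
  -- = E_{i∞} E_{∞j} (E_{k∞} E_{∞l} f)
  have s2 : μ[μ[h|rowSup 𝓕 k]|𝓕 i j] =ᵐ[μ]
      μ[μ[μ[h|rowSup 𝓕 k]|colSup 𝓕 j]|rowSup 𝓕 i] :=
    (hCI i j (μ[h|rowSup 𝓕 k]) integrable_condExp).1.symm
  -- E_{∞j} E_{k∞} h = E_{kj} h = E_{k∞} E_{∞j} h, and E_{∞j} E_{∞l} f = E_{∞,min j l} f
  have s3 : μ[μ[h|rowSup 𝓕 k]|colSup 𝓕 j] =ᵐ[μ] μ[μ[f|colSup 𝓕 (min j l)]|rowSup 𝓕 k] :=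
    ((hCI k j h integrable_condExp).2.trans (hCI k j h integrable_condExp).1.symm).trans
      (condExp_congr_ae (aux_condexp_min hCmono hC j l f))
  have s4 : μ[μ[μ[h|rowSup 𝓕 k]|colSup 𝓕 j]|rowSup 𝓕 i] =ᵐ[μ]
      μ[μ[μ[f|colSup 𝓕 (min j l)]|rowSup 𝓕 k]|rowSup 𝓕 i] := condExp_congr_ae s3
  -- E_{i∞} E_{k∞} = E_{min i k, ∞}
  have s5 : μ[μ[μ[f|colSup 𝓕 (min j l)]|rowSup 𝓕 k]|rowSup 𝓕 i] =ᵐ[μ]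
      μ[μ[f|colSup 𝓕 (min j l)]|rowSup 𝓕 (min i k)] :=
    aux_condexp_min hRmono hR i k _
  have s6 : μ[μ[f|colSup 𝓕 (min j l)]|rowSup 𝓕 (min i k)] =ᵐ[μ]
      μ[f|𝓕 (min i k) (min j l)] := (hCI (min i k) (min j l) f hf).1
  exact s1.trans (s2.trans (s4.trans (s5.trans s6)))

/-- (F4) implies conditional independence, one composition order. -/
lemma aux_ci_of_f4 (𝓕 : ℕ → ℕ → MeasurableSpace Ω) (hle : ∀ i j, 𝓕 i j ≤ m0)
    (hmono₁ : ∀ i j, 𝓕 i j ≤ 𝓕 (i + 1) j) (hmono₂ : ∀ i j, 𝓕 i j ≤ 𝓕 i (j + 1))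
    (hF4 : ∀ i j k l : ℕ, ∀ f : Ω → ℝ, Integrable f μ →
        μ[μ[f|𝓕 k l]|𝓕 i j] =ᵐ[μ] μ[f|𝓕 (min i k) (min j l)])
    (i j : ℕ) (f : Ω → ℝ) (hf : Integrable f μ) :
    μ[μ[f|colSup 𝓕 j]|rowSup 𝓕 i] =ᵐ[μ] μ[f|𝓕 i j] := by
  set 𝒢 : Filtration ℕ m0 :=
    ⟨fun l => 𝓕 i l, monotone_nat_of_le_succ fun l => hmono₂ i l, fun l => hle i l⟩ with h𝒢
  set ℋ : Filtration ℕ m0 :=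
    ⟨fun k => 𝓕 k j, monotone_nat_of_le_succ fun k => hmono₁ k j, fun k => hle k j⟩ with hℋ
  have hsupG : (⨆ l, (𝒢 : ℕ → MeasurableSpace Ω) l) = rowSup 𝓕 i := rfl
  have hsupH : (⨆ k, (ℋ : ℕ → MeasurableSpace Ω) k) = colSup 𝓕 j := rfl
  set h : Ω → ℝ := μ[f|colSup 𝓕 j] with hh
  -- Claim 1: for every l, `E_{il} h = E_{i, min l j} f`.
  have claim1 : ∀ l : ℕ, μ[h|𝓕 i l] =ᵐ[μ] μ[f|𝓕 i (min l j)] := by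
    intro l
    have hmeas : AEStronglyMeasurable (μ[h|𝓕 i l] - μ[f|𝓕 i (min l j)]) μ :=
      ((stronglyMeasurable_condExp.mono (hle i l)).sub
        (stronglyMeasurable_condExp.mono (hle i (min l j)))).aestronglyMeasurable
    have key : eLpNorm (μ[h|𝓕 i l] - μ[f|𝓕 i (min l j)]) 1 μ = 0 := by
      have htd : Tendsto (fun k => eLpNorm (μ[f|𝓕 k j] - h) 1 μ) atTop (𝓝 0) :=
        tendsto_eLpNorm_condExp (μ := μ) (ℱ := ℋ) f
      refine le_antisymm (ge_of_tendsto htd ?_) zero_le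
      filter_upwards [eventually_ge_atTop i] with k hk
      have e1 : μ[f|𝓕 i (min l j)] =ᵐ[μ] μ[μ[f|𝓕 k j]|𝓕 i l] := by
        have := hF4 i l k j f hf
        rw [min_eq_left hk] at this
        exact this.symm
      have e2 : μ[h|𝓕 i l] - μ[f|𝓕 i (min l j)] =ᵐ[μ] μ[h - μ[f|𝓕 k j]|𝓕 i l] := by
        refine (EventuallyEq.sub (EventuallyEq.rfl) e1).trans ?_
        exact (condExp_sub integrable_condExp integrable_condExp _).symm
      calc eLpNorm (μ[h|𝓕 i l] - μ[f|𝓕 i (min l j)]) 1 μ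
          = eLpNorm (μ[h - μ[f|𝓕 k j]|𝓕 i l]) 1 μ := eLpNorm_congr_ae e2
        _ ≤ eLpNorm (h - μ[f|𝓕 k j]) 1 μ := eLpNorm_one_condExp_le_eLpNorm _
        _ = eLpNorm (μ[f|𝓕 k j] - h) 1 μ := eLpNorm_sub_comm _ _ _ _
    have hz := (eLpNorm_eq_zero_iff hmeas one_ne_zero).mp key
    filter_upwards [hz] with x hx
    exact sub_eq_zero.mp hx
  -- Claim 2: Lévy's upward theorem along `l ↦ 𝓕 i l`.
  have hlevy : ∀ᵐ x ∂μ, Tendsto (fun l => (μ[h|𝓕 i l]) x) atTop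
      (𝓝 ((μ[h|rowSup 𝓕 i]) x)) := by
    have := tendsto_ae_condExp (μ := μ) (ℱ := 𝒢) h
    rw [hsupG] at this
    exact this
  have hcl : ∀ᵐ x ∂μ, ∀ l : ℕ, (μ[h|𝓕 i l]) x = (μ[f|𝓕 i (min l j)]) x :=
    (ae_all_iff).mpr claim1
  filter_upwards [hlevy, hcl] with x hx hx2
  have hconst : Tendsto (fun _ : ℕ => (μ[f|𝓕 i j]) x) atTop (𝓝 ((μ[h|rowSup 𝓕 i]) x)) := by
    refine hx.congr' ?_
    filter_upwards [eventually_ge_atTop j] with l hl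
    rw [hx2 l, min_eq_right hl]
  exact tendsto_nhds_unique hconst tendsto_const_nhds

end Aux

/-- For a two-parameter filtration, the (F4) condition
`𝔼_{i,j}𝔼_{k,l} = 𝔼_{min(i,k),min(j,l)} = 𝔼_{k,l}𝔼_{i,j}` holds if and only if for all
`i, j` the σ-algebras `ℱ_{i,∞}` and `ℱ_{∞,j}` are conditionally independent given
`ℱ_{i,j}`, i.e. `𝔼_{i,∞}𝔼_{∞,j} = 𝔼_{i,j} = 𝔼_{∞,j}𝔼_{i,∞}` on `L¹`. -/
theorem f4_iff_conditionally_independent {Ω : Type*} [m0 : MeasurableSpace Ω]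
    (μ : Measure Ω) [IsProbabilityMeasure μ] (𝓕 : ℕ → ℕ → MeasurableSpace Ω)
    (hle : ∀ i j, 𝓕 i j ≤ m0)
    (hmono₁ : ∀ i j, 𝓕 i j ≤ 𝓕 (i + 1) j) (hmono₂ : ∀ i j, 𝓕 i j ≤ 𝓕 i (j + 1)) :
    (∀ i j k l : ℕ, ∀ f : Ω → ℝ, Integrable f μ →
        μ[μ[f|𝓕 k l]|𝓕 i j] =ᵐ[μ] μ[f|𝓕 (min i k) (min j l)] ∧
        μ[μ[f|𝓕 i j]|𝓕 k l] =ᵐ[μ] μ[f|𝓕 (min i k) (min j l)]) ↔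
      (∀ i j : ℕ, ∀ f : Ω → ℝ, Integrable f μ →
        μ[μ[f|colSup 𝓕 j]|rowSup 𝓕 i] =ᵐ[μ] μ[f|𝓕 i j] ∧
        μ[μ[f|rowSup 𝓕 i]|colSup 𝓕 j] =ᵐ[μ] μ[f|𝓕 i j]) := by
  constructor
  · intro hF4 i j f hf
    refine ⟨aux_ci_of_f4 𝓕 hle hmono₁ hmono₂
      (fun a b c d g hg => (hF4 a b c d g hg).1) i j f hf, ?_⟩
    exact aux_ci_of_f4 (fun a b => 𝓕 b a) (fun a b => hle b a) (fun a b => hmono₂ b a)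
      (fun a b => hmono₁ b a)
      (fun a b c d g hg => (hF4 b a d c g hg).1) j i f hf
  · intro hCI i j k l f hf
    refine ⟨aux_f4_of_ci 𝓕 hle hmono₁ hmono₂ hCI i j k l f hf, ?_⟩
    have := aux_f4_of_ci 𝓕 hle hmono₁ hmono₂ hCI k l i j f hf
    rwa [min_comm k i, min_comm l j] at this
end
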